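/- arXiv:2202.05238 — 7 statements merged into one kernel-verified Lean document; each statement's English description precedes it below -/
import Mathlib

section
/- A nondecreasing sequence (s_1, s_2, ..., s_n) of n ≥ 1 nonnegative integers is the score sequence of some n-vertex tournament if and only if ∑_{i=1}^r s_i ≥ C(r,2) for all 1 ≤ r < n, and ∑_{i=1}^n s_i = C(n,2). (Landau's criterion.) -/
/-- A tournament on `n` vertices: for each pair of distinct vertices exactly one
of the two possible directed edges is present.  `dom v w` means `v` dominates `w`. -/
structure Tournament (n : ℕ) where
  dom : Fin n → Fin n → Bool
  irrefl : ∀ v, dom v v = false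
  asymm : ∀ v w : Fin n, v ≠ w → dom v w = !(dom w v)

/-- The score of a vertex: the number of vertices it dominates. -/
def Tournament.score {n : ℕ} (T : Tournament n) (v : Fin n) : ℕ :=
  (Finset.univ.filter (fun w => T.dom v w = true)).card

/-- The score sequence of a tournament: its multiset of scores, sorted nondecreasingly. -/
def Tournament.scoreList {n : ℕ} (T : Tournament n) : List ℕ :=
  Multiset.sort (Multiset.map T.score Finset.univ.val) (· ≤ ·)


lemma perm_map_lift {α β : Type} [DecidableEq α] [DecidableEq β] (f : α → β) :
    ∀ (t : List β) (L : List α), t.Perm (L.map f) → ∃ L' : List α, L'.Perm L ∧ t = L'.map f := by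
  intro t
  induction t with
  | nil =>
    intro L h
    refine ⟨L, List.Perm.refl L, ?_⟩
    have h0 : L.map f = [] := h.symm.eq_nil
    exact h0.symm
  | cons a tl ih =>
    intro L h
    have ha : a ∈ L.map f := h.subset List.mem_cons_self
    obtain ⟨x, hxL, hfx⟩ := List.mem_map.mp ha
    have htl : tl.Perm ((L.map f).erase a) := (List.cons_perm_iff_perm_erase.mp h).2
    have h2 : ((L.map f).erase a).Perm ((L.erase x).map f) := by
      rw [← Multiset.coe_eq_coe]
      rw [← Multiset.coe_erase, ← Multiset.map_coe, ← Multiset.map_coe, ← Multiset.coe_erase]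
      subst hfx
      have hx : (x : α) ∈ (↑L : Multiset α) := hxL
      conv_lhs => rw [← Multiset.cons_erase hx]
      rw [Multiset.map_cons, Multiset.erase_cons_head]
    obtain ⟨L'', hL'', htl'⟩ := ih (L.erase x) (htl.trans h2)
    exact ⟨x :: L'', (hL''.cons x).trans (List.perm_cons_erase hxL).symm,
      by simp [htl', hfx]⟩



lemma take_sum_eq (t : List ℕ) : ∀ r, r ≤ t.length →
    (t.take r).sum = ∑ m ∈ Finset.range r, t.getD m 0 := by
  intro r
  induction r with
  | zero => simp
  | succ r ih =>
    intro hr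
    have hr' : r < t.length := hr
    rw [List.sum_take_succ t r hr', Finset.sum_range_succ, ih (le_of_lt hr'),
      List.getD_eq_getElem t 0 hr']

lemma coe_set : ∀ (l : List ℕ) (i : ℕ) (h : i < l.length) (x : ℕ),
    (↑(l.set i x) : Multiset ℕ) = x ::ₘ ((↑l : Multiset ℕ).erase l[i]) := by
  intro l
  induction l with
  | nil => intro i h; simp at h
  | cons a tl ih =>
    intro i h x
    cases i with
    | zero => simp [List.set]
    | succ i =>
      have hi : i < tl.length := by simpa using h
      show (↑(a :: tl.set i x) : Multiset ℕ) = x ::ₘ ((a ::ₘ ↑tl).erase tl[i])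
      by_cases hae : a = tl[i]
      · rw [← hae, Multiset.erase_cons_head]
        have : (↑(tl.set i x) : Multiset ℕ) = x ::ₘ ((↑tl : Multiset ℕ).erase tl[i]) := ih i hi x
        rw [show (↑(a :: tl.set i x) : Multiset ℕ) = a ::ₘ ↑(tl.set i x) from rfl, this]
        rw [Multiset.cons_swap]
        congr 1
        rw [hae, Multiset.cons_erase (by exact List.getElem_mem hi)]
      · rw [Multiset.erase_cons_tail_of_mem (by exact List.getElem_mem hi)]
        rw [show (↑(a :: tl.set i x) : Multiset ℕ) = a ::ₘ ↑(tl.set i x) from rfl, ih i hi x,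
          Multiset.cons_swap]



lemma range_sum_choose (r : ℕ) : (List.range r).sum = r.choose 2 := by
  have h1 := take_sum_eq (List.range r) r (by simp)
  rw [List.take_of_length_le (by simp)] at h1
  rw [h1]
  have h2 : ∀ m ∈ Finset.range r, (List.range r).getD m 0 = m := by
    intro m hm
    simp only [Finset.mem_range] at hm
    rw [List.getD_eq_getElem _ 0 (by simpa using hm), List.getElem_range]
  rw [Finset.sum_congr rfl h2]
  have h3 := Finset.sum_range_id_mul_two r
  have h4 := Nat.choose_two_right r
  omega



lemma pair_count {n : ℕ} (T : Tournament n) (A : Finset (Fin n)) :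
    2 * ∑ v ∈ A, (A.filter (fun w => T.dom v w = true)).card = A.card * (A.card - 1) := by
  have h1 : ∀ v, (A.filter (fun w => T.dom v w = true)).card
      = ∑ w ∈ A, (if T.dom v w = true then 1 else 0) := by
    intro v; rw [Finset.card_filter]
  have key : ∀ v w : Fin n, (if T.dom v w = true then 1 else 0) + (if T.dom w v = true then 1 else 0)
      = if v = w then 0 else 1 := by
    intro v w
    by_cases hvw : v = w
    · subst hvw; simp [T.irrefl v]
    · rw [T.asymm v w hvw]
      cases T.dom w v <;> simp [hvw]
  calc 2 * ∑ v ∈ A, (A.filter (fun w => T.dom v w = true)).card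
      = ∑ v ∈ A, ∑ w ∈ A, (if T.dom v w = true then 1 else 0)
        + ∑ v ∈ A, ∑ w ∈ A, (if T.dom w v = true then 1 else 0) := by
        rw [two_mul]; congr 1 <;> simp only [h1]
        rw [Finset.sum_comm]
    _ = ∑ v ∈ A, ∑ w ∈ A, ((if T.dom v w = true then 1 else 0) + (if T.dom w v = true then 1 else 0)) := by
        rw [← Finset.sum_add_distrib]
        congr 1; funext v; rw [← Finset.sum_add_distrib]
    _ = ∑ v ∈ A, ∑ w ∈ A, (if v = w then 0 else 1) := by
        simp only [key]
    _ = ∑ v ∈ A, (A.card - 1) := by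
        apply Finset.sum_congr rfl
        intro v hv
        rw [Finset.sum_ite, Finset.sum_const, Finset.sum_const]
        simp only [smul_eq_mul, mul_zero, mul_one, zero_add]
        rw [Finset.filter_ne, Finset.card_erase_of_mem hv]
    _ = A.card * (A.card - 1) := by
        rw [Finset.sum_const, smul_eq_mul]



lemma coe_scoreList {n : ℕ} (T : Tournament n) :
    (↑T.scoreList : Multiset ℕ) = Multiset.map T.score Finset.univ.val :=
  Multiset.sort_eq _ _

lemma scoreList_length {n : ℕ} (T : Tournament n) : T.scoreList.length = n := by
  have := congrArg Multiset.card (coe_scoreList T)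
  simpa using this

lemma scoreList_sorted {n : ℕ} (T : Tournament n) : T.scoreList.Pairwise (· ≤ ·) :=
  Multiset.pairwise_sort _ _


lemma scoreList_sum {n : ℕ} (T : Tournament n) : T.scoreList.sum = n.choose 2 := by
  have h1 : T.scoreList.sum = ∑ v : Fin n, T.score v := by
    rw [← Multiset.sum_coe, coe_scoreList]
    rfl
  have h2 := pair_count T (Finset.univ : Finset (Fin n))
  have h3 : ∀ v : Fin n, T.score v
      = ((Finset.univ : Finset (Fin n)).filter (fun w => T.dom v w = true)).card := fun v => rfl
  have h4 : (Finset.univ : Finset (Fin n)).card = n := Finset.card_univ.trans (Fintype.card_fin n)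
  have h5 := Nat.choose_two_right n
  rw [h4] at h2
  simp only [← h3] at h2
  rw [h1]
  omega


lemma scoreList_take {n : ℕ} (T : Tournament n) (r : ℕ) (hr : r ≤ n) :
    r.choose 2 ≤ (T.scoreList.take r).sum := by
  have hperm : T.scoreList.Perm ((List.finRange n).map T.score) := by
    rw [← Multiset.coe_eq_coe, coe_scoreList, ← Multiset.map_coe]
    congr 1
  obtain ⟨L, hL, ht⟩ := perm_map_lift T.score T.scoreList (List.finRange n) hperm
  have hnodup : L.Nodup := (hL.nodup_iff).mpr (List.nodup_finRange n)
  have hlen : L.length = n := hL.length_eq.trans List.length_finRange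
  set A := (L.take r).toFinset with hA
  have hnd : (L.take r).Nodup := List.Nodup.sublist (List.take_sublist r L) hnodup
  have hcard : A.card = r := by
    rw [hA, List.toFinset_card_of_nodup hnd, List.length_take, hlen]
    omega
  have hsum : (T.scoreList.take r).sum = ∑ v ∈ A, T.score v := by
    rw [ht, ← List.map_take, hA, List.sum_toFinset _ hnd]
  have hge : ∀ v ∈ A, (A.filter (fun w => T.dom v w = true)).card ≤ T.score v := by
    intro v _
    exact Finset.card_le_card (Finset.filter_subset_filter _ (Finset.subset_univ A))
  have h2 := pair_count T A
  have h3 : ∑ v ∈ A, (A.filter (fun w => T.dom v w = true)).card ≤ ∑ v ∈ A, T.score v :=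
    Finset.sum_le_sum hge
  have h5 := Nat.choose_two_right r
  rw [hcard] at h2
  omega



def Tournament.flip {n : ℕ} (T : Tournament n) (a b : Fin n) (hab : a ≠ b) : Tournament n where
  dom x y := if (x = a ∧ y = b) ∨ (x = b ∧ y = a) then !(T.dom x y) else T.dom x y
  irrefl v := by
    have : ¬((v = a ∧ v = b) ∨ (v = b ∧ v = a)) := by
      rintro (⟨h1, h2⟩ | ⟨h1, h2⟩) <;> exact hab (h1 ▸ h2 ▸ rfl)
    simp only [this, if_false, T.irrefl v]
  asymm v w h := by
    by_cases hc : (v = a ∧ w = b) ∨ (v = b ∧ w = a)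
    · have hc' : (w = a ∧ v = b) ∨ (w = b ∧ v = a) := by tauto
      simp only [hc, hc', if_true, T.asymm v w h, Bool.not_not]
    · have hc' : ¬((w = a ∧ v = b) ∨ (w = b ∧ v = a)) := by tauto
      simp only [hc, hc', if_false, T.asymm v w h]

namespace Tournament
variable {n : ℕ} (T : Tournament n) (a b : Fin n) (hab : a ≠ b)

lemma flip_dom_other (x y : Fin n) (h : ¬((x = a ∧ y = b) ∨ (x = b ∧ y = a))) :
    (T.flip a b hab).dom x y = T.dom x y := by
  simp only [flip, h, if_false]

lemma flip_dom_ab : (T.flip a b hab).dom a b = !(T.dom a b) := by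
  show (if (a = a ∧ b = b) ∨ (a = b ∧ b = a) then !(T.dom a b) else T.dom a b) = !(T.dom a b)
  rw [if_pos (Or.inl ⟨rfl, rfl⟩)]

lemma flip_dom_ba : (T.flip a b hab).dom b a = !(T.dom b a) := by
  show (if (b = a ∧ a = b) ∨ (b = b ∧ a = a) then !(T.dom b a) else T.dom b a) = !(T.dom b a)
  rw [if_pos (Or.inr ⟨rfl, rfl⟩)]

/-- general helper: score as a sum over erase plus the value at one point -/
lemma score_split (v w : Fin n) :
    T.score v = ((Finset.univ.erase w).filter (fun y => T.dom v y = true)).card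
      + (if T.dom v w = true then 1 else 0) := by
  unfold score
  rw [Finset.filter_erase]
  by_cases h : T.dom v w = true
  · rw [if_pos h]
    exact (Finset.card_erase_add_one (by simp [h])).symm
  · rw [if_neg h, Nat.add_zero, Finset.erase_eq_of_notMem (by simp [h])]

lemma score_flip_other (x : Fin n) (hxa : x ≠ a) (hxb : x ≠ b) :
    (T.flip a b hab).score x = T.score x := by
  unfold score
  congr 1
  apply Finset.filter_congr
  intro y _
  rw [flip_dom_other T a b hab x y (by tauto)]

lemma score_flip_a_true (h : T.dom a b = true) :
    (T.flip a b hab).score a + 1 = T.score a := by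
  rw [score_split (T.flip a b hab) a b, score_split T a b, flip_dom_ab, h]
  have : ((Finset.univ.erase b).filter (fun y => (T.flip a b hab).dom a y = true)).card
      = ((Finset.univ.erase b).filter (fun y => T.dom a y = true)).card := by
    congr 1
    apply Finset.filter_congr
    intro y hy
    rw [flip_dom_other T a b hab a y]
    rintro (⟨_, h2⟩ | ⟨h1, _⟩)
    · exact (Finset.mem_erase.mp hy).1 h2
    · exact hab h1
  simp [this]

lemma score_flip_a_false (h : T.dom a b = false) :
    (T.flip a b hab).score a = T.score a + 1 := by
  rw [score_split (T.flip a b hab) a b, score_split T a b, flip_dom_ab, h]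
  have : ((Finset.univ.erase b).filter (fun y => (T.flip a b hab).dom a y = true)).card
      = ((Finset.univ.erase b).filter (fun y => T.dom a y = true)).card := by
    congr 1
    apply Finset.filter_congr
    intro y hy
    rw [flip_dom_other T a b hab a y]
    rintro (⟨_, h2⟩ | ⟨h1, _⟩)
    · exact (Finset.mem_erase.mp hy).1 h2
    · exact hab h1
  simp [this]

lemma score_flip_b_true (h : T.dom b a = true) :
    (T.flip a b hab).score b + 1 = T.score b := by
  rw [score_split (T.flip a b hab) b a, score_split T b a, flip_dom_ba, h]
  have : ((Finset.univ.erase a).filter (fun y => (T.flip a b hab).dom b y = true)).card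
      = ((Finset.univ.erase a).filter (fun y => T.dom b y = true)).card := by
    congr 1
    apply Finset.filter_congr
    intro y hy
    rw [flip_dom_other T a b hab b y]
    rintro (⟨h1, _⟩ | ⟨_, h2⟩)
    · exact hab h1.symm
    · exact (Finset.mem_erase.mp hy).1 h2
  simp [this]

lemma score_flip_b_false (h : T.dom b a = false) :
    (T.flip a b hab).score b = T.score b + 1 := by
  rw [score_split (T.flip a b hab) b a, score_split T b a, flip_dom_ba, h]
  have : ((Finset.univ.erase a).filter (fun y => (T.flip a b hab).dom b y = true)).card
      = ((Finset.univ.erase a).filter (fun y => T.dom b y = true)).card := by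
    congr 1
    apply Finset.filter_congr
    intro y hy
    rw [flip_dom_other T a b hab b y]
    rintro (⟨h1, _⟩ | ⟨_, h2⟩)
    · exact hab h1.symm
    · exact (Finset.mem_erase.mp hy).1 h2
  simp [this]

end Tournament



namespace Tournament

variable {n : ℕ}

lemma transfer (T : Tournament n) (u v : Fin n) (huv : T.score u < T.score v) :
    ∃ T' : Tournament n, T'.score u = T.score u + 1 ∧ T'.score v + 1 = T.score v ∧
      ∀ w, w ≠ u → w ≠ v → T'.score w = T.score w := by
  have hne : u ≠ v := by rintro rfl; exact lt_irrefl _ huv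
  by_cases hvu : T.dom v u = true
  · -- reverse the edge v → u
    have hdom : T.dom u v = false := by rw [T.asymm u v hne, hvu]; rfl
    refine ⟨T.flip u v hne, score_flip_a_false T u v hne hdom, ?_, ?_⟩
    · exact score_flip_b_true T u v hne (by rw [T.asymm v u hne.symm, hdom]; rfl)
    · intro w hwu hwv; exact score_flip_other T u v hne w hwu hwv
  · -- T.dom u v = true; find w with v → w → u
    have hvu' : T.dom v u = false := by revert hvu; cases T.dom v u <;> simp
    have hdomuv : T.dom u v = true := by rw [T.asymm u v hne, hvu']; rfl
    have hw : ∃ w, T.dom v w = true ∧ T.dom w u = true := by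
      by_contra hcon
      push_neg at hcon
      -- N(v) ∪ {v} ⊆ N(u)
      have hsub : insert v (Finset.univ.filter (fun w => T.dom v w = true))
          ⊆ Finset.univ.filter (fun w => T.dom u w = true) := by
        intro x hx
        rcases Finset.mem_insert.mp hx with rfl | hx
        · simp [hdomuv]
        · have hvx : T.dom v x = true := (Finset.mem_filter.mp hx).2
          have hxu : x ≠ u := by rintro rfl; rw [hvu'] at hvx; exact Bool.false_ne_true hvx
          have hxu' : T.dom x u ≠ true := fun h => (by simpa [h] using hcon x hvx : False)
          have : T.dom x u = false := by revert hxu'; cases T.dom x u <;> simp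
          have : T.dom u x = true := by rw [T.asymm u x (fun h => hxu h.symm), this]; rfl
          simp [this]
      have hnotmem : v ∉ Finset.univ.filter (fun w => T.dom v w = true) := by
        simp [T.irrefl v]
      have := Finset.card_le_card hsub
      rw [Finset.card_insert_of_notMem hnotmem] at this
      unfold score at huv
      omega
    obtain ⟨w, hvw, hwu⟩ := hw
    have hwu' : w ≠ u := by rintro rfl; rw [T.irrefl] at hwu; exact Bool.false_ne_true hwu
    have hwv : w ≠ v := by rintro rfl; rw [T.irrefl] at hvw; exact Bool.false_ne_true hvw
    -- F1 = flip (v,w), F2 = flip F1 (w,u)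
    set F1 := T.flip v w (Ne.symm hwv) with hF1
    have hF1vw : F1.score v + 1 = T.score v := score_flip_a_true T v w (Ne.symm hwv) hvw
    have hdomwv : T.dom w v = false := by rw [T.asymm w v hwv, hvw]; rfl
    have hF1w : F1.score w = T.score w + 1 := score_flip_b_false T v w (Ne.symm hwv) hdomwv
    have hF1u : F1.score u = T.score u := score_flip_other T v w (Ne.symm hwv) u hne (Ne.symm hwu')
    have hF1domwu : F1.dom w u = T.dom w u := by
      apply flip_dom_other
      rintro (⟨h1, _⟩ | ⟨_, h2⟩)
      · exact hwv h1
      · exact hne h2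
    have hF1domuw : F1.dom u w = T.dom u w := by
      apply flip_dom_other
      rintro (⟨h1, _⟩ | ⟨h1, _⟩)
      · exact hne h1
      · exact hwu' h1.symm
    have hdomuw : T.dom u w = false := by rw [T.asymm u w (Ne.symm hwu'), hwu]; rfl
    refine ⟨F1.flip w u hwu', ?_, ?_, ?_⟩
    · rw [score_flip_b_false F1 w u hwu' (by rw [hF1domuw]; exact hdomuw), hF1u]
    · rw [score_flip_other F1 w u hwu' v (Ne.symm hwv) hne.symm, hF1vw]
    · intro x hxu hxv
      by_cases hxw : x = w
      · subst hxw
        have h := score_flip_a_true F1 x u hwu' (by rw [hF1domwu]; exact hwu)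
        omega
      · rw [score_flip_other F1 w u hwu' x hxw hxu,
          score_flip_other T v w (Ne.symm hwv) x hxv hxw]
end Tournament


lemma step {n : ℕ} (l : List ℕ) (hlen : l.length = n) (hsl : l.Pairwise (· ≤ ·))
    (T : Tournament n)
    (hinv : ∀ r, ((T.scoreList.take r)).sum ≤ (l.take r).sum)
    (hsum : T.scoreList.sum = l.sum)
    (hne : T.scoreList ≠ l) :
    ∃ T2 : Tournament n,
      (∀ r, ((T2.scoreList.take r)).sum ≤ (l.take r).sum) ∧
      T2.scoreList.sum = l.sum ∧
      (∑ r ∈ Finset.range (n+1), ((l.take r).sum - (T2.scoreList.take r).sum))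
        < (∑ r ∈ Finset.range (n+1), ((l.take r).sum - (T.scoreList.take r).sum)) := by
  set t := T.scoreList with htdef
  have htlen : t.length = n := scoreList_length T
  have hts : t.Pairwise (· ≤ ·) := scoreList_sorted T
  set tD : ℕ → ℕ := fun m => t.getD m 0 with htD
  set lD : ℕ → ℕ := fun m => l.getD m 0 with hlD
  have htDval : ∀ k (hk : k < n), tD k = t[k]'(by omega) := by
    intro k hk; exact List.getD_eq_getElem t 0 (by omega)
  have hlDval : ∀ k (hk : k < n), lD k = l[k]'(by omega) := by
    intro k hk; exact List.getD_eq_getElem l 0 (by omega)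
  have htmono : ∀ m k, m ≤ k → k < n → tD m ≤ tD k := by
    intro m k hmk hk
    rcases eq_or_lt_of_le hmk with rfl | hlt
    · exact le_rfl
    · rw [htDval m (by omega), htDval k hk]
      exact List.pairwise_iff_getElem.mp hts m k (by omega) (by omega) hlt
  have hlmono : ∀ m k, m ≤ k → k < n → lD m ≤ lD k := by
    intro m k hmk hk
    rcases eq_or_lt_of_le hmk with rfl | hlt
    · exact le_rfl
    · rw [hlDval m (by omega), hlDval k hk]
      exact List.pairwise_iff_getElem.mp hsl m k (by omega) (by omega) hlt
  -- prefix sums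
  have hPdef : ∀ r, r ≤ n → (t.take r).sum = ∑ m ∈ Finset.range r, tD m := by
    intro r hr; exact take_sum_eq t r (by omega)
  have hQdef : ∀ r, r ≤ n → (l.take r).sum = ∑ m ∈ Finset.range r, lD m := by
    intro r hr; exact take_sum_eq l r (by omega)
  -- first difference i0
  have hne_ex : ∃ k, k < n ∧ tD k ≠ lD k := by
    by_contra hc
    push_neg at hc
    apply hne
    apply List.ext_getElem (by omega)
    intro k h1 h2
    have := hc k (by omega)
    rwa [htDval k (by omega), hlDval k (by omega)] at this
  set i0 := Nat.find hne_ex with hi0def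
  obtain ⟨hi0n, hi0ne⟩ := Nat.find_spec hne_ex
  rw [← hi0def] at hi0n hi0ne
  have hi0min : ∀ m, m < i0 → tD m = lD m := by
    intro m hm
    have := Nat.find_min hne_ex hm
    push_neg at this
    exact this (by omega)
  have hPeqQ : ∀ r, r ≤ i0 → ∑ m ∈ Finset.range r, tD m = ∑ m ∈ Finset.range r, lD m := by
    intro r hr
    apply Finset.sum_congr rfl
    intro m hm
    exact hi0min m (by simp at hm; omega)
  have hti0lt : tD i0 < lD i0 := by
    have h1 := hinv (i0 + 1)
    rw [hPdef _ (by omega), hQdef _ (by omega), Finset.sum_range_succ, Finset.sum_range_succ,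
      hPeqQ i0 le_rfl] at h1
    omega
  -- surplus j0
  have hex_j : ∃ k, k < n ∧ lD k < tD k := by
    by_contra hc
    push_neg at hc
    have hlt : ∑ m ∈ Finset.range n, tD m < ∑ m ∈ Finset.range n, lD m := by
      apply Finset.sum_lt_sum
      · intro m hm; exact hc m (by simp at hm; omega)
      · exact ⟨i0, Finset.mem_range.mpr hi0n, hti0lt⟩
    rw [← hPdef n le_rfl, ← hQdef n le_rfl, List.take_of_length_le (by omega),
      List.take_of_length_le (by omega)] at hlt
    omega
  set j0 := Nat.find hex_j with hj0def
  obtain ⟨hj0n, hj0gt⟩ := Nat.find_spec hex_j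
  rw [← hj0def] at hj0n hj0gt
  have hj0min : ∀ m, m < j0 → m < n → tD m ≤ lD m := by
    intro m hm hmn
    have := Nat.find_min hex_j hm
    push_neg at this
    exact this hmn
  have hi0j0 : i0 < j0 := by
    rcases lt_trichotomy i0 j0 with h | h | h
    · exact h
    · rw [h] at hti0lt; omega
    · have := hi0min j0 h; omega
  set a := tD i0 with hadef
  set b := tD j0 with hbdef
  have hab2 : a + 2 ≤ b := by
    have h1 : lD i0 ≤ lD j0 := hlmono i0 j0 (by omega) hj0n
    omega
  -- strict prefix inequality on (i0, j0]
  have hstrict : ∀ r, i0 < r → r ≤ j0 → (t.take r).sum < (l.take r).sum := by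
    intro r h1 h2
    rw [hPdef r (by omega), hQdef r (by omega)]
    apply Finset.sum_lt_sum
    · intro m hm
      simp only [Finset.mem_range] at hm
      rcases lt_trichotomy m i0 with h | h | h
      · exact le_of_eq (hi0min m h)
      · subst h; omega
      · exact hj0min m (by omega) (by omega)
    · exact ⟨i0, Finset.mem_range.mpr (by omega), hti0lt⟩
  -- index i : last position with value a
  have hex_f : ∃ k, k < n ∧ a < tD k := ⟨j0, hj0n, by omega⟩
  set f := Nat.find hex_f with hfdef
  obtain ⟨hfn, hfgt⟩ := Nat.find_spec hex_f
  rw [← hfdef] at hfn hfgt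
  have hfmin : ∀ m, m < f → m < n → tD m ≤ a := by
    intro m hm hmn
    have := Nat.find_min hex_f hm
    push_neg at this
    exact this hmn
  have hfi0 : i0 < f := by
    by_contra hc
    push_neg at hc
    have := hfgt
    have h2 : tD f ≤ tD i0 := htmono f i0 hc hi0n
    omega
  have hfj0 : f ≤ j0 := Nat.find_min' hex_f ⟨hj0n, by omega⟩
  set i := f - 1 with hidef
  have hii0 : i0 ≤ i := by omega
  have hin : i < n := by omega
  have hti : tD i = a := by
    have h1 : tD i ≤ a := hfmin i (by omega) hin
    have h2 : a ≤ tD i := by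
      rw [hadef]; exact htmono i0 i hii0 hin
    omega
  have hilast : ∀ k, i < k → k < n → a < tD k := by
    intro k hk hkn
    have h1 : f ≤ k := by omega
    have := htmono f k h1 hkn
    omega
  -- index j : first position with value b
  have hex_g : ∃ k, k < n ∧ b ≤ tD k := ⟨j0, hj0n, le_rfl⟩
  set j := Nat.find hex_g with hjdef
  obtain ⟨hjn, hjge⟩ := Nat.find_spec hex_g
  rw [← hjdef] at hjn hjge
  have hjmin : ∀ m, m < j → m < n → tD m < b := by
    intro m hm hmn
    have := Nat.find_min hex_g hm
    push_neg at this
    exact this hmn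
  have hjj0 : j ≤ j0 := Nat.find_min' hex_g ⟨hj0n, le_rfl⟩
  have htj : tD j = b := by
    have h2 : tD j ≤ b := by rw [hbdef]; exact htmono j j0 hjj0 hj0n
    omega
  have hij : i < j := by
    by_contra hc
    push_neg at hc
    have := htmono j i hc hin
    omega
  have hij0 : i < j0 := by omega
  have hi0j : i0 < j := by omega
  -- the new list t'
  set t' := (t.set i (a+1)).set j (b-1) with ht'def
  have ht'len : t'.length = n := by simp [ht'def, htlen]
  have ht'get : ∀ k (hk : k < n), t'[k]'(by omega) =
      if k = j then b - 1 else if k = i then a + 1 else tD k := by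
    intro k hk
    rcases eq_or_ne k j with rfl | h1
    · rw [List.getElem_set, if_pos rfl, if_pos rfl]
    · rcases eq_or_ne k i with rfl | h2
      · rw [List.getElem_set, if_neg (by omega), List.getElem_set, if_pos rfl,
          if_neg h1, if_pos rfl]
      · rw [List.getElem_set, if_neg (by omega), List.getElem_set, if_neg (by omega),
          if_neg h1, if_neg h2, htDval k hk]
  have ht'D : ∀ k, k < n → t'.getD k 0 =
      if k = j then b - 1 else if k = i then a + 1 else tD k := by
    intro k hk
    rw [List.getD_eq_getElem t' 0 (by omega), ht'get k hk]
  -- sortedness of t'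
  have ht'sorted : t'.Pairwise (· ≤ ·) := by
    apply List.pairwise_iff_getElem.mpr
    intro p q hp hq hpq
    rw [ht'len] at hp hq
    rw [ht'get p (by omega), ht'get q (by omega)]
    rcases eq_or_ne q j with rfl | hqj
    · rw [if_pos rfl]
      rcases eq_or_ne p i with rfl | hpi
      · rw [if_neg (by omega), if_pos rfl]; omega
      · rw [if_neg (by omega), if_neg hpi]
        have := hjmin p (by omega) (by omega)
        omega
    · rw [if_neg hqj]
      rcases eq_or_ne q i with rfl | hqi
      · rw [if_pos rfl, if_neg (by omega), if_neg (by omega)]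
        have h2 : tD p ≤ tD i := htmono p i (by omega) (by omega)
        omega
      · rw [if_neg hqi]
        rcases eq_or_ne p j with rfl | hpj
        · rw [if_pos rfl]
          have := htmono j q (by omega) (by omega)
          omega
        · rcases eq_or_ne p i with rfl | hpi
          · rw [if_neg hpj, if_pos rfl]
            have := hilast q (by omega) (by omega)
            omega
          · rw [if_neg hpj, if_neg hpi]
            exact htmono p q (by omega) (by omega)
  -- prefix sum relation
  have hrel : ∀ r, r ≤ n → (∑ m ∈ Finset.range r, t'.getD m 0) + (if j < r then 1 else 0)
      = (∑ m ∈ Finset.range r, tD m) + (if i < r then 1 else 0) := by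
    intro r
    induction r with
    | zero => simp
    | succ r ih =>
      intro hr
      have hrn : r < n := by omega
      have ihr := ih (by omega)
      rw [Finset.sum_range_succ, Finset.sum_range_succ, ht'D r hrn]
      rcases eq_or_ne r j with rfl | h1
      · rw [if_pos rfl]
        have e1 : (if j < j + 1 then 1 else 0) = 1 := if_pos (by omega)
        have e2 : (if j < j then 1 else 0) = 0 := if_neg (by omega)
        have e3 : (if i < j + 1 then 1 else 0) = 1 := if_pos (by omega)
        have e4 : (if i < j then 1 else 0) = 1 := if_pos (by omega)
        rw [e1, e3]
        rw [e2, e4] at ihr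
        omega
      · rcases eq_or_ne r i with rfl | h2
        · rw [if_neg h1, if_pos rfl]
          have e1 : (if j < i + 1 then 1 else 0) = 0 := if_neg (by omega)
          have e2 : (if j < i then 1 else 0) = 0 := if_neg (by omega)
          have e3 : (if i < i + 1 then 1 else 0) = 1 := if_pos (by omega)
          have e4 : (if i < i then 1 else 0) = 0 := if_neg (by omega)
          rw [e1, e3]
          rw [e2, e4] at ihr
          omega
        · rw [if_neg h1, if_neg h2]
          have e1 : (if j < r + 1 then 1 else 0) = (if j < r then 1 else 0) := by
            rcases lt_trichotomy j r with h | h | h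
            · rw [if_pos (by omega), if_pos h]
            · exact absurd h.symm h1
            · rw [if_neg (by omega), if_neg (by omega)]
          have e2 : (if i < r + 1 then 1 else 0) = (if i < r then 1 else 0) := by
            rcases lt_trichotomy i r with h | h | h
            · rw [if_pos (by omega), if_pos h]
            · exact absurd h.symm h2
            · rw [if_neg (by omega), if_neg (by omega)]
          rw [e1, e2]
          omega
  have ht'sum_take : ∀ r, r ≤ n → (t'.take r).sum = ∑ m ∈ Finset.range r, t'.getD m 0 := by
    intro r hr; exact take_sum_eq t' r (by omega)
  -- t' prefix sums vs t prefix sums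
  have hPP' : ∀ r, r ≤ n → r ≤ i → (t'.take r).sum = (t.take r).sum := by
    intro r hr hri
    have := hrel r hr
    rw [if_neg (by omega), if_neg (by omega)] at this
    rw [ht'sum_take r hr, hPdef r hr]
    omega
  have hPP'mid : ∀ r, r ≤ n → i < r → r ≤ j → (t'.take r).sum = (t.take r).sum + 1 := by
    intro r hr h1 h2
    have := hrel r hr
    rw [if_neg (by omega), if_pos h1] at this
    rw [ht'sum_take r hr, hPdef r hr]
    omega
  have hPP'hi : ∀ r, r ≤ n → j < r → (t'.take r).sum = (t.take r).sum := by
    intro r hr h1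
    have := hrel r hr
    rw [if_pos h1, if_pos (by omega)] at this
    rw [ht'sum_take r hr, hPdef r hr]
    omega
  have ht'sum : t'.sum = t.sum := by
    have h1 := hPP'hi n le_rfl (by omega)
    rwa [List.take_of_length_le (by omega), List.take_of_length_le (by omega)] at h1
  -- invariant for t'
  have hinv' : ∀ r, (t'.take r).sum ≤ (l.take r).sum := by
    intro r
    rcases le_or_gt r n with hr | hr
    · rcases le_or_gt r i with h1 | h1
      · rw [hPP' r hr h1]; exact hinv r
      · rcases le_or_gt r j with h2 | h2
        · rw [hPP'mid r hr h1 h2]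
          have := hstrict r (by omega) (by omega)
          omega
        · rw [hPP'hi r hr h2]; exact hinv r
    · rw [List.take_of_length_le (by omega), List.take_of_length_le (by omega),
        ht'sum, hsum]
  -- measure decrease for t'
  have hmeas : (∑ r ∈ Finset.range (n+1), ((l.take r).sum - (t'.take r).sum))
      < (∑ r ∈ Finset.range (n+1), ((l.take r).sum - (t.take r).sum)) := by
    apply Finset.sum_lt_sum
    · intro r hr
      simp only [Finset.mem_range] at hr
      rcases le_or_gt r i with h1 | h1
      · rw [hPP' r (by omega) h1]
      · rcases le_or_gt r j with h2 | h2
        · rw [hPP'mid r (by omega) h1 h2]; omega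
        · rw [hPP'hi r (by omega) h2]
    · refine ⟨j, Finset.mem_range.mpr (by omega), ?_⟩
      rw [hPP'mid j (by omega) hij le_rfl]
      have := hstrict j (by omega) (by omega)
      omega
  -- find vertices u, v with scores a, b
  have hamem : a ∈ Multiset.map T.score Finset.univ.val := by
    rw [← coe_scoreList, ← htdef]
    have : a = t[i0]'(by omega) := by rw [← htDval i0 hi0n]
    rw [this]
    exact List.getElem_mem _
  have hbmem : b ∈ Multiset.map T.score Finset.univ.val := by
    rw [← coe_scoreList, ← htdef]
    have : b = t[j0]'(by omega) := by rw [← htDval j0 hj0n]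
    rw [this]
    exact List.getElem_mem _
  obtain ⟨u, _, hu⟩ := Multiset.mem_map.mp hamem
  obtain ⟨v, _, hv⟩ := Multiset.mem_map.mp hbmem
  have huv : T.score u < T.score v := by rw [hu, hv]; omega
  obtain ⟨T2, hT2u, hT2v, hT2o⟩ := T.transfer u v huv
  have hvu : v ≠ u := by
    rintro rfl; rw [hu] at hv; omega
  -- multiset identity
  have hnodup : (Finset.univ.val : Multiset (Fin n)).Nodup := Finset.univ.nodup
  have humem : u ∈ (Finset.univ.val : Multiset (Fin n)) := Finset.mem_univ_val u
  have hvmem : v ∈ (Finset.univ.val : Multiset (Fin n)).erase u :=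
    (Multiset.mem_erase_of_ne hvu).mpr (Finset.mem_univ_val v)
  set R := ((Finset.univ.val : Multiset (Fin n)).erase u).erase v with hRdef
  have hsplit : (Finset.univ.val : Multiset (Fin n)) = u ::ₘ v ::ₘ R := by
    rw [hRdef, Multiset.cons_erase hvmem, Multiset.cons_erase humem]
  have hRu : ∀ x ∈ R, x ≠ u := by
    intro x hx
    rintro rfl
    exact (Multiset.Nodup.notMem_erase hnodup) (Multiset.mem_of_mem_erase hx)
  have hRv : ∀ x ∈ R, x ≠ v := by
    intro x hx
    rintro rfl
    exact (Multiset.Nodup.notMem_erase (Multiset.Nodup.erase u hnodup)) hx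
  have hmapR : Multiset.map T2.score R = Multiset.map T.score R := by
    apply Multiset.map_congr rfl
    intro x hx
    exact hT2o x (hRu x hx) (hRv x hx)
  have hmap2 : Multiset.map T2.score Finset.univ.val = (a+1) ::ₘ (b-1) ::ₘ Multiset.map T.score R := by
    rw [hsplit, Multiset.map_cons, Multiset.map_cons, hmapR, hT2u, hu]
    congr 1
    congr 1
    omega
  have hmapT : (↑t : Multiset ℕ) = a ::ₘ b ::ₘ Multiset.map T.score R := by
    rw [htdef, coe_scoreList, hsplit, Multiset.map_cons, Multiset.map_cons, hu, hv]
  -- coe of t'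
  have hcoet' : (↑t' : Multiset ℕ) = (b-1) ::ₘ (a+1) ::ₘ ((↑t : Multiset ℕ).erase a).erase b := by
    rw [ht'def]
    have hjlen : j < (t.set i (a+1)).length := by simp; omega
    rw [coe_set (t.set i (a+1)) j (by simp; omega) (b-1)]
    have hgj : (t.set i (a+1))[j]'(by simp; omega) = b := by
      rw [List.getElem_set, if_neg (by omega), ← htDval j (by omega)]
      exact htj
    rw [hgj, coe_set t i (by omega) (a+1), ← htDval i (by omega), hti]
    rw [Multiset.erase_cons_tail _ (by omega : (a+1) ≠ b)]
  have hcoe_eq : (↑t' : Multiset ℕ) = Multiset.map T2.score Finset.univ.val := by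
    rw [hcoet', hmap2, hmapT, Multiset.erase_cons_head, Multiset.erase_cons_head,
      Multiset.cons_swap]
  -- conclude : T2.scoreList = t'
  have hT2list : T2.scoreList = t' := by
    apply List.Perm.eq_of_pairwise' (scoreList_sorted T2) ht'sorted
    rw [← Multiset.coe_eq_coe, coe_scoreList, hcoe_eq]
  refine ⟨T2, ?_, ?_, ?_⟩
  · intro r; rw [hT2list]; exact hinv' r
  · rw [hT2list, ht'sum]; exact hsum
  · rw [hT2list]; exact hmeas




lemma reach {n : ℕ} (l : List ℕ) (hlen : l.length = n) (hsl : l.Pairwise (· ≤ ·)) :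
    ∀ M : ℕ, ∀ T : Tournament n,
      (∀ r, ((T.scoreList.take r)).sum ≤ (l.take r).sum) →
      T.scoreList.sum = l.sum →
      (∑ r ∈ Finset.range (n+1), ((l.take r).sum - (T.scoreList.take r).sum)) ≤ M →
      ∃ T' : Tournament n, T'.scoreList = l := by
  intro M
  induction M with
  | zero =>
    intro T hinv hsum hM
    by_cases h : T.scoreList = l
    · exact ⟨T, h⟩
    · obtain ⟨T2, _, _, hlt⟩ := step l hlen hsl T hinv hsum h
      omega
  | succ M ih =>
    intro T hinv hsum hM
    by_cases h : T.scoreList = l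
    · exact ⟨T, h⟩
    · obtain ⟨T2, h1, h2, hlt⟩ := step l hlen hsl T hinv hsum h
      exact ih T2 h1 h2 (by omega)

def transitiveT (n : ℕ) : Tournament n where
  dom v w := decide (w < v)
  irrefl v := by simp
  asymm v w h := by
    rcases lt_or_gt_of_ne h with h1 | h1
    · simp [h1, not_lt_of_gt h1]
    · simp [h1, not_lt_of_gt h1]

lemma transitiveT_score (n : ℕ) (v : Fin n) : (transitiveT n).score v = v.val := by
  unfold Tournament.score
  have h1 : Finset.univ.filter (fun w => (transitiveT n).dom v w = true)
      = Finset.univ.filter (fun w => w < v) := by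
    apply Finset.filter_congr
    intro w _
    simp [transitiveT]
  rw [h1]
  have h2 : Finset.univ.filter (fun w => w < v) = Finset.Iio v := by
    ext w; simp
  rw [h2, Fin.card_Iio]

lemma transitiveT_scoreList (n : ℕ) : (transitiveT n).scoreList = List.range n := by
  apply List.Perm.eq_of_pairwise' (scoreList_sorted _) List.pairwise_le_range
  rw [← Multiset.coe_eq_coe, coe_scoreList]
  have h1 : Multiset.map (transitiveT n).score Finset.univ.val
      = Multiset.map Fin.val (Finset.univ.val : Multiset (Fin n)) := by
    apply Multiset.map_congr rfl
    intro x _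
    exact transitiveT_score n x
  rw [h1]
  have h2 : Multiset.map Fin.val (Finset.univ.val : Multiset (Fin n))
      = ((((List.finRange n).map Fin.val : List ℕ)) : Multiset ℕ) := by
    rw [Fin.univ_val_map, List.ofFn_eq_map]
  rw [h2]; congr 1; apply List.ext_getElem <;> simp




/-- **Landau's criterion.** A nondecreasing sequence of `n ≥ 1` nonnegative integers is the
score sequence of some `n`-vertex tournament iff its partial sums satisfy
`∑_{i=1}^r s_i ≥ C(r,2)` for all `1 ≤ r < n` and its total sum is `C(n,2)`. -/
theorem landau_criterion (n : ℕ) (hn : 1 ≤ n) (l : List ℕ) (hlen : l.length = n)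
    (hsorted : l.Pairwise (· ≤ ·)) :
    (∃ T : Tournament n, T.scoreList = l) ↔
      ((∀ r, 1 ≤ r → r < n → r.choose 2 ≤ (l.take r).sum) ∧ l.sum = n.choose 2) := by
  constructor
  · rintro ⟨T, hT⟩
    constructor
    · intro r h1 h2
      rw [← hT]
      exact scoreList_take T r (by omega)
    · rw [← hT]; exact scoreList_sum T
  · rintro ⟨hpre, hsum⟩
    have hTs := transitiveT_scoreList n
    have hinv : ∀ r, (((transitiveT n).scoreList.take r)).sum ≤ (l.take r).sum := by
      intro r
      rw [hTs]
      rcases le_or_gt r n with hr | hr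
      · rw [List.take_range, min_eq_left hr, range_sum_choose]
        rcases Nat.eq_zero_or_pos r with rfl | hr1
        · simp
        · rcases eq_or_lt_of_le hr with rfl | hr2
          · rw [List.take_of_length_le (by omega), hsum]
          · exact hpre r hr1 hr2
      · rw [List.take_of_length_le (by simpa using le_of_lt hr),
          List.take_of_length_le (by omega), range_sum_choose, hsum]
    have hsum' : (transitiveT n).scoreList.sum = l.sum := by
      rw [hTs, range_sum_choose, hsum]
    exact reach l hlen hsorted _ (transitiveT n) hinv hsum' le_rfl
end

section
/- For every n ≥ 1, the number S(n) of distinct score sequences of n-vertex tournaments satisfies S(n) = ∑_{E=⌈(n-1)/2⌉}^{n-1} F_n[C(n,2), E]. (Bent's theorem.) -/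
/-- `F n T E` is the number of nondecreasing sequences `(s_1 ≤ ⋯ ≤ s_n)` of nonnegative
integers with `∑_{i=1}^r s_i ≥ C(r,2)` for all `1 ≤ r < n`, total sum `T`, and last term `E`. -/
noncomputable def F (n T E : ℕ) : ℕ :=
  {l : List ℕ | l.length = n ∧ l.Pairwise (· ≤ ·) ∧
    (∀ r, 1 ≤ r → r < n → r.choose 2 ≤ (l.take r).sum) ∧
    l.sum = T ∧ l.getLast? = some E}.ncard

/-- `S n` is the number of distinct score sequences of `n`-vertex tournaments. -/
noncomputable def S (n : ℕ) : ℕ :=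
  {l : List ℕ | ∃ T : Tournament n, T.scoreList = l}.ncard

namespace BentAux
open Finset

variable {n : ℕ}

/-! ### Basic arithmetic helpers -/

lemma choose2_succ (m : ℕ) : (m+1).choose 2 = m.choose 2 + m := by
  rw [Nat.choose_succ_succ m 1, Nat.choose_one_right]
  exact Nat.add_comm _ _

lemma two_mul_choose2 (m : ℕ) : 2 * m.choose 2 = m * (m - 1) := by
  induction m with
  | zero => simp
  | succ m ih =>
    rw [choose2_succ, Nat.mul_add, ih, Nat.succ_sub_one]
    cases m with
    | zero => simp
    | succ k =>
      simp only [Nat.succ_sub_one]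
      ring

/-! ### The edge flip -/

def flip (T : Tournament n) (a b : Fin n) (hab : a ≠ b) : Tournament n where
  dom x y := if x = a ∧ y = b then false else if x = b ∧ y = a then true else T.dom x y
  irrefl := by
    intro v
    split_ifs with h1 h2
    · rfl
    · exact absurd (h2.1.symm.trans h2.2) hab.symm
    · exact T.irrefl v
  asymm := by
    intro v w hvw
    have ha := T.asymm v w hvw
    split_ifs with h1 h2 h3 h4 h5 h6 h7 h8 <;>
      simp_all

lemma flip_dom (T : Tournament n) (a b : Fin n) (hab : a ≠ b) (x y : Fin n) :
    (flip T a b hab).dom x y =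
      if x = a ∧ y = b then false else if x = b ∧ y = a then true else T.dom x y := rfl

lemma score_flip_other (T : Tournament n) (a b : Fin n) (hab : a ≠ b) (x : Fin n)
    (hxa : x ≠ a) (hxb : x ≠ b) : (flip T a b hab).score x = T.score x := by
  unfold Tournament.score
  congr 1
  apply Finset.filter_congr
  intro y _
  simp [flip_dom, hxa, hxb]

lemma score_flip_fst (T : Tournament n) (a b : Fin n) (hab : a ≠ b)
    (h : T.dom a b = true) : (flip T a b hab).score a = T.score a - 1 := by
  unfold Tournament.score
  have hset : (Finset.univ.filter (fun y => (flip T a b hab).dom a y = true))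
      = (Finset.univ.filter (fun y => T.dom a y = true)).erase b := by
    ext y
    simp only [mem_filter, mem_erase, mem_univ, true_and, flip_dom]
    by_cases hyb : y = b
    · subst hyb; simp
    · simp [hyb, Ne.symm hab, fun (h : a = b) => hab h]
  rw [hset, Finset.card_erase_of_mem]
  simp [h]

lemma score_flip_snd (T : Tournament n) (a b : Fin n) (hab : a ≠ b)
    (h : T.dom a b = true) : (flip T a b hab).score b = T.score b + 1 := by
  have hba : T.dom b a = false := by
    have := T.asymm a b hab
    rw [h] at this
    cases hd : T.dom b a
    · rfl
    · rw [hd] at this; simp at this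
  unfold Tournament.score
  have hset : (Finset.univ.filter (fun y => (flip T a b hab).dom b y = true))
      = insert a (Finset.univ.filter (fun y => T.dom b y = true)) := by
    ext y
    simp only [mem_filter, mem_insert, mem_univ, true_and, flip_dom]
    by_cases hya : y = a
    · subst hya; simp [Ne.symm hab]
    · simp [hya, fun (h : b = a) => hab h.symm]
      intro _
      exact Or.inl (fun h' => hab h'.symm)
  rw [hset, Finset.card_insert_of_notMem]
  simp [hba]

/-! ### Multiset of scores under modification -/

lemma univ_cons_pair (u v : Fin n) (huv : u ≠ v) :
    (Finset.univ : Finset (Fin n)).val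
      = u ::ₘ v ::ₘ ((Finset.univ.erase u).erase v).val := by
  have h1 : (Finset.univ : Finset (Fin n)).val
      = u ::ₘ (Finset.univ.erase u).val := by
    rw [Finset.erase_val]
    exact (Multiset.cons_erase (Finset.mem_univ u : u ∈ Finset.univ)).symm
  have h2 : (Finset.univ.erase u : Finset (Fin n)).val
      = v ::ₘ ((Finset.univ.erase u).erase v).val := by
    rw [Finset.erase_val ((Finset.univ.erase u)) v]
    exact (Multiset.cons_erase (by simp [Finset.mem_erase, Ne.symm, huv.symm] :
      v ∈ Finset.univ.erase u)).symm
  rw [h1, h2]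

lemma map_univ_pair (f g : Fin n → ℕ) (u v : Fin n) (huv : u ≠ v)
    (hoff : ∀ x, x ≠ u → x ≠ v → f x = g x) :
    f u ::ₘ f v ::ₘ Multiset.map g Finset.univ.val
      = g u ::ₘ g v ::ₘ Multiset.map f Finset.univ.val := by
  have key := univ_cons_pair u v huv
  have hcong : Multiset.map g ((Finset.univ.erase u).erase v).val
      = Multiset.map f ((Finset.univ.erase u).erase v).val := by
    apply Multiset.map_congr rfl
    intro x hx
    have hx' : x ∈ (Finset.univ.erase u).erase v := hx
    simp only [Finset.mem_erase] at hx'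
    exact (hoff x hx'.2.1 hx'.1).symm
  rw [key, Multiset.map_cons, Multiset.map_cons, Multiset.map_cons, Multiset.map_cons,
    hcong]
  simp only [← Multiset.singleton_add]
  abel

lemma dom_false_iff (T : Tournament n) (u v : Fin n) (huv : u ≠ v) :
    T.dom u v = false ↔ T.dom v u = true := by
  have := T.asymm u v huv
  cases h : T.dom v u <;> rw [h] at this <;> simp_all

lemma transfer (T : Tournament n) (u v : Fin n) (huv : u ≠ v)
    (h : T.score v < T.score u) :
    ∃ T' : Tournament n,
      T.score u ::ₘ T.score v ::ₘ Multiset.map T'.score Finset.univ.val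
        = (T.score u - 1) ::ₘ (T.score v + 1) ::ₘ Multiset.map T.score Finset.univ.val := by
  by_cases hd : T.dom u v = true
  · refine ⟨flip T u v huv, ?_⟩
    have := map_univ_pair T.score (flip T u v huv).score u v huv
      (fun x hxu hxv => (score_flip_other T u v huv x hxu hxv).symm)
    rw [score_flip_fst T u v huv hd, score_flip_snd T u v huv hd] at this
    exact this
  · have hvu : T.dom v u = true := by
      rw [← dom_false_iff T u v huv]
      exact Bool.eq_false_iff.mpr hd
    obtain ⟨w, hw⟩ : ∃ w, T.dom u w = true ∧ T.dom w v = true := by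
      by_contra hno
      push_neg at hno
      have hsub : (Finset.univ.filter (fun y => T.dom u y = true))
          ⊆ (Finset.univ.filter (fun y => T.dom v y = true)).erase u := by
        intro w hw
        simp only [Finset.mem_filter, Finset.mem_univ, true_and] at hw
        have hwu : w ≠ u := fun h' => by rw [h'] at hw; simp [T.irrefl] at hw
        have hwv : w ≠ v := fun h' => by rw [h'] at hw; exact hd hw
        have h0 : T.dom w v = false := by
          cases hwv' : T.dom w v
          · rfl
          · exact absurd hwv' (by simpa using hno w hw)
        have h1 : T.dom v w = true := (dom_false_iff T w v hwv).mp h0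
        simp [Finset.mem_erase, hwu, Finset.mem_filter, h1]
      have hcard : T.score u ≤ T.score v - 1 := by
        have h1 := Finset.card_le_card hsub
        have h2 : u ∈ (Finset.univ.filter (fun y => T.dom v y = true)) := by
          simp [hvu]
        rw [Finset.card_erase_of_mem h2] at h1
        exact h1
      omega
    obtain ⟨hw1, hw2⟩ := hw
    have hwu : w ≠ u := fun h' => by rw [h'] at hw1; simp [T.irrefl] at hw1
    have hwv : w ≠ v := fun h' => by rw [h'] at hw2; simp [T.irrefl] at hw2
    have huw : u ≠ w := hwu.symm
    set T1 := flip T u w huw with hT1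
    have hT1dom : T1.dom w v = true := by
      rw [hT1, flip_dom]
      simp [hwu, fun h' : w = u => hwu h', hw2, huv.symm, fun h' : v = u => huv h'.symm]
    set T2 := flip T1 w v hwv with hT2
    refine ⟨T2, ?_⟩
    have hsu : T2.score u = T.score u - 1 := by
      rw [hT2, score_flip_other T1 w v hwv u hwu.symm huv,
        hT1, score_flip_fst T u w huw hw1]
    have hsv : T2.score v = T.score v + 1 := by
      rw [hT2, score_flip_snd T1 w v hwv hT1dom, hT1,
        score_flip_other T u w huw v huv.symm hwv.symm]
    have hsw : T2.score w = T.score w := by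
      rw [hT2, score_flip_fst T1 w v hwv hT1dom, hT1, score_flip_snd T u w huw hw1]
      omega
    have := map_univ_pair T.score T2.score u v huv
      (fun x hxu hxv => by
        by_cases hxw : x = w
        · rw [hxw, hsw]
        · rw [hT2, score_flip_other T1 w v hwv x (fun h' => hxw h') hxv,
            hT1, score_flip_other T u w huw x hxu (fun h' => hxw h')])
    rw [hsu, hsv] at this
    exact this

/-! ### List helpers -/

lemma sum_take_eq (l : List ℕ) (r : ℕ) :
    (l.take r).sum = ∑ i ∈ Finset.range r, l.getD i 0 := by
  induction r with
  | zero => simp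
  | succ r ih =>
    rw [Finset.sum_range_succ, ← ih]
    by_cases hr : r < l.length
    · rw [List.sum_take_succ l r hr, List.getD_eq_getElem l 0 hr]
    · push_neg at hr
      rw [List.take_of_length_le (by omega), List.take_of_length_le hr,
        List.getD_eq_default]
      · omega
      · exact hr

lemma sum_take_succ' (l : List ℕ) (r : ℕ) :
    (l.take (r+1)).sum = (l.take r).sum + l.getD r 0 := by
  rw [sum_take_eq, sum_take_eq, Finset.sum_range_succ]

lemma getD_set_self (l : List ℕ) (a x : ℕ) (ha : a < l.length) :
    (l.set a x).getD a 0 = x := by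
  rw [List.getD_eq_getElem _ 0 (by simpa using ha)]
  simp [List.getElem_set, ha]

lemma getD_set_ne (l : List ℕ) (a x i : ℕ) (hia : i ≠ a) :
    (l.set a x).getD i 0 = l.getD i 0 := by
  by_cases hi : i < l.length
  · rw [List.getD_eq_getElem _ 0 (by simpa using hi), List.getD_eq_getElem _ 0 hi]
    simp [List.getElem_set, Ne.symm hia]
  · push_neg at hi
    rw [List.getD_eq_default _ 0 (by simpa using hi), List.getD_eq_default _ 0 hi]

lemma sorted_of_adj (l : List ℕ) (h : ∀ i, i + 1 < l.length → l.getD i 0 ≤ l.getD (i+1) 0) :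
    l.Pairwise (· ≤ ·) := by
  rw [← List.isChain_iff_pairwise, List.isChain_iff_getElem]
  intro i hi
  have := h i (by omega)
  rwa [List.getD_eq_getElem _ 0 (by omega), List.getD_eq_getElem _ 0 (by omega)] at this

lemma sorted_mono (l : List ℕ) (hs : l.Pairwise (· ≤ ·)) (i j : ℕ) (hij : i ≤ j)
    (hj : j < l.length) : l.getD i 0 ≤ l.getD j 0 := by
  rcases eq_or_lt_of_le hij with rfl | hlt
  · exact le_refl _
  · have := List.Pairwise.rel_get_of_lt hs (a := ⟨i, by omega⟩) (b := ⟨j, hj⟩) (by simpa using hlt)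
    rw [List.getD_eq_getElem _ 0 (by omega), List.getD_eq_getElem _ 0 hj]
    simpa using this

lemma set_cons (l : List ℕ) (a x : ℕ) (ha : a < l.length) :
    ∃ m : Multiset ℕ, (l : Multiset ℕ) = l.getD a 0 ::ₘ m ∧
      ((l.set a x : List ℕ) : Multiset ℕ) = x ::ₘ m := by
  induction a generalizing l with
  | zero =>
    cases l with
    | nil => simp at ha
    | cons y t => exact ⟨(t : Multiset ℕ), by simp, by simp⟩
  | succ a ih =>
    cases l with
    | nil => simp at ha
    | cons y t =>
      obtain ⟨m, hm1, hm2⟩ := ih t (by simpa using ha)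
      refine ⟨y ::ₘ m, ?_, ?_⟩
      · show ((y :: t : List ℕ) : Multiset ℕ) = _
        rw [← Multiset.cons_coe, hm1, Multiset.cons_swap]
        rfl
      · show (((y :: t).set (a+1) x : List ℕ) : Multiset ℕ) = _
        rw [List.set_cons_succ, ← Multiset.cons_coe, hm2, Multiset.cons_swap]

/-! ### The transitive tournament -/

def transT (n : ℕ) : Tournament n where
  dom v w := decide (w < v)
  irrefl v := by simp
  asymm v w hvw := by
    rcases lt_or_gt_of_ne hvw with h | h
    · simp [h, not_lt_of_gt h, le_of_lt h]
    · simp [h, not_lt_of_gt h, le_of_lt h]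

lemma map_val_univ (n : ℕ) : (Finset.univ : Finset (Fin n)).val.map Fin.val
    = ((List.range n : List ℕ) : Multiset ℕ) := by
  have h2 := congrArg Finset.val (Fin.map_valEmbedding_univ (n := n))
  rw [Finset.map_val] at h2
  rw [show ((List.range n : List ℕ) : Multiset ℕ) = Multiset.range n from rfl,
    ← Finset.range_val, ← Nat.Iio_eq_range, ← h2]
  rfl

lemma transT_score (n : ℕ) (v : Fin n) : (transT n).score v = v.val := by
  unfold Tournament.score transT
  have : (Finset.univ.filter (fun w => decide (w < v) = true)) = Finset.Iio v := by
    ext w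
    simp [Finset.mem_Iio]
  rw [this]
  simp

lemma transT_multiset (n : ℕ) :
    Multiset.map (transT n).score Finset.univ.val = ((List.range n : List ℕ) : Multiset ℕ) := by
  rw [← map_val_univ n]
  apply Multiset.map_congr rfl
  intro x _
  exact transT_score n x

/-! ### The measure -/

def Dm (l : List ℕ) : ℕ := ∑ i ∈ Finset.range l.length, i * l.getD i 0

lemma Dm_le (l : List ℕ) : Dm l ≤ (l.length - 1) * l.sum := by
  unfold Dm
  calc ∑ i ∈ Finset.range l.length, i * l.getD i 0
      ≤ ∑ i ∈ Finset.range l.length, (l.length - 1) * l.getD i 0 := by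
        apply Finset.sum_le_sum
        intro i hi
        have : i ≤ l.length - 1 := by
          have := Finset.mem_range.mp hi; omega
        exact Nat.mul_le_mul_right _ this
    _ = (l.length - 1) * ∑ i ∈ Finset.range l.length, l.getD i 0 := by
        rw [Finset.mul_sum]
    _ = (l.length - 1) * l.sum := by
        rw [← sum_take_eq, List.take_of_length_le (le_refl _)]

/-! ### Landau's theorem, hard direction -/

lemma realize : ∀ (M n : ℕ) (l : List ℕ), l.length = n →
    l.Pairwise (· ≤ ·) → (∀ r, r ≤ n → r.choose 2 ≤ (l.take r).sum) →
    l.sum = n.choose 2 →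
    (n - 1) * n.choose 2 + 1 - Dm l ≤ M →
    ∃ T : Tournament n, Multiset.map T.score Finset.univ.val = (l : Multiset ℕ) := by
  intro M
  induction M with
  | zero =>
    intro n l hlen hs hge hsum hM
    exfalso
    have := Dm_le l
    rw [hlen, hsum] at this
    omega
  | succ M ih =>
    intro n l hlen hs hge hsum hM
    by_cases hl : l = List.range n
    · subst hl
      exact ⟨transT n, transT_multiset n⟩
    -- the window
    have hne : ∃ r, r.choose 2 < (l.take r).sum := by
      by_contra hno
      push_neg at hno
      apply hl
      apply List.ext_getElem (by simp [hlen])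
      intro i h1 h2
      have heq : ∀ r, r ≤ n → (l.take r).sum = r.choose 2 :=
        fun r hr => le_antisymm (hno r) (hge r hr)
      have hi : i < n := by rwa [hlen] at h1
      have e1 := heq i (by omega)
      have e2 := heq (i+1) (by omega)
      have e3 := sum_take_succ' l i
      have e4 := choose2_succ i
      have : l.getD i 0 = i := by omega
      rw [List.getElem_range, ← List.getD_eq_getElem l 0 h1, this]
    set p := Nat.find hne with hpdef
    have hp : p.choose 2 < (l.take p).sum := Nat.find_spec hne
    have hpmin : ∀ r, r < p → (l.take r).sum ≤ r.choose 2 := by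
      intro r hr
      have := Nat.find_min hne hr
      omega
    have hp1 : 1 ≤ p := by
      rcases Nat.eq_zero_or_pos p with h0 | h0
      · rw [h0] at hp; simp at hp
      · exact h0
    have hpn : p < n := by
      by_contra hge'
      push_neg at hge'
      have e1 : (l.take p).sum = n.choose 2 := by
        rw [List.take_of_length_le (by omega), hsum]
      have e2 : n.choose 2 ≤ p.choose 2 := Nat.choose_le_choose 2 hge'
      omega
    have hqex : ∃ r, p < r ∧ (l.take r).sum = r.choose 2 :=
      ⟨n, hpn, by rw [List.take_of_length_le (le_of_eq hlen), hsum]⟩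
    set q := Nat.find hqex with hqdef
    have hq : p < q ∧ (l.take q).sum = q.choose 2 := Nat.find_spec hqex
    have hpq : p < q := hq.1
    have hqn : q ≤ n := Nat.find_le ⟨hpn, by rw [List.take_of_length_le (le_of_eq hlen), hsum]⟩
    have hstrict : ∀ r, p ≤ r → r < q → r.choose 2 < (l.take r).sum := by
      intro r h1 h2
      rcases eq_or_lt_of_le h1 with rfl | hlt
      · exact hp
      · have h3 := Nat.find_min hqex h2
        have h4 : (l.take r).sum ≠ r.choose 2 := fun he => h3 ⟨hlt, he⟩
        have h5 := hge r (by omega)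
        omega
    -- facts about entries
    have hPp1 : (l.take (p-1)).sum = (p-1).choose 2 :=
      le_antisymm (hpmin (p-1) (by omega)) (hge (p-1) (by omega))
    have hla : p ≤ l.getD (p-1) 0 := by
      have h1 := sum_take_succ' l (p-1)
      rw [show p - 1 + 1 = p from by omega] at h1
      have h2 := choose2_succ (p-1)
      rw [show p - 1 + 1 = p from by omega] at h2
      omega
    have hlaprev : 2 ≤ p → l.getD (p-2) 0 = p - 2 := by
      intro h2p
      have e1 : (l.take (p-2)).sum = (p-2).choose 2 :=
        le_antisymm (hpmin (p-2) (by omega)) (hge (p-2) (by omega))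
      have h1 := sum_take_succ' l (p-2)
      rw [show p - 2 + 1 = p - 1 from by omega] at h1
      have h2 := choose2_succ (p-2)
      rw [show p - 2 + 1 = p - 1 from by omega] at h2
      omega
    have hPq : (l.take q).sum = q.choose 2 := hq.2
    have hPq1 : (q-1).choose 2 < (l.take (q-1)).sum := hstrict (q-1) (by omega) (by omega)
    have hlb : l.getD (q-1) 0 + 2 ≤ q := by
      have h1 := sum_take_succ' l (q-1)
      rw [show q - 1 + 1 = q from by omega] at h1
      have h2 := choose2_succ (q-1)
      rw [show q - 1 + 1 = q from by omega] at h2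
      omega
    have hlbnext : q < n → q ≤ l.getD q 0 := by
      intro hqn'
      have h1 := hge (q+1) (by omega)
      have h2 := sum_take_succ' l q
      have h3 := choose2_succ q
      omega
    have hlalb : l.getD (p-1) 0 ≤ l.getD (q-1) 0 :=
      sorted_mono l hs (p-1) (q-1) (by omega) (by omega)
    -- the modified list
    set l'' : List ℕ := (l.set (p-1) (l.getD (p-1) 0 - 1)).set (q-1) (l.getD (q-1) 0 + 1)
      with hl''
    have hlen'' : l''.length = n := by
      rw [hl'', List.length_set, List.length_set, hlen]
    have hgd : ∀ i, l''.getD i 0 = if i = q-1 then l.getD (q-1) 0 + 1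
        else if i = p-1 then l.getD (p-1) 0 - 1 else l.getD i 0 := by
      intro i
      by_cases h1 : i = q-1
      · subst h1
        rw [hl'', getD_set_self _ _ _ (by rw [List.length_set]; omega)]
        simp
      · rw [hl'', getD_set_ne _ _ _ _ h1, if_neg h1]
        by_cases h2 : i = p-1
        · subst h2
          rw [getD_set_self _ _ _ (by omega), if_pos rfl]
        · rw [getD_set_ne _ _ _ _ h2, if_neg h2]
    have hs'' : l''.Pairwise (· ≤ ·) := by
      apply sorted_of_adj
      intro i hi
      rw [hlen''] at hi
      rw [hgd i, hgd (i+1)]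
      have hadj : l.getD i 0 ≤ l.getD (i+1) 0 :=
        sorted_mono l hs i (i+1) (by omega) (by omega)
      by_cases h1 : i = q-1
      · rw [if_pos h1, if_neg (by omega), if_neg (by omega)]
        have hiq : i + 1 = q := by omega
        rw [hiq]
        have := hlbnext (by omega)
        omega
      · rw [if_neg h1]
        by_cases h2 : i = p-1
        · rw [if_pos h2]
          by_cases h3 : i + 1 = q-1
          · rw [if_pos h3]
            omega
          · rw [if_neg h3, if_neg (by omega)]
            have : l.getD (p-1) 0 ≤ l.getD (i+1) 0 := by rw [← h2]; exact hadj
            omega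
        · rw [if_neg h2]
          by_cases h3 : i + 1 = q-1
          · rw [if_pos h3]
            have : l.getD i 0 ≤ l.getD (q-1) 0 := by rw [← h3]; exact hadj
            omega
          · rw [if_neg h3]
            by_cases h4 : i + 1 = p-1
            · rw [if_pos h4]
              have h5 : i = p - 2 := by omega
              have h6 := hlaprev (by omega)
              rw [h5, h6]
              omega
            · rw [if_neg h4]
              exact hadj
    have hps : ∀ r, (l''.take r).sum + (if p - 1 < r then 1 else 0)
        = (l.take r).sum + (if q - 1 < r then 1 else 0) := by
      intro r
      induction r with
      | zero => simp
      | succ r ihr =>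
        rw [sum_take_succ', sum_take_succ' l r, hgd r]
        by_cases h1 : r = q - 1
        · subst h1
          rw [if_pos rfl, if_pos (by omega), if_pos (by omega)]
          rw [if_pos (by omega), if_neg (by omega)] at ihr
          omega
        · rw [if_neg h1]
          by_cases h2 : r = p - 1
          · subst h2
            rw [if_pos rfl, if_pos (by omega), if_neg (by omega)]
            rw [if_neg (by omega), if_neg (by omega)] at ihr
            omega
          · rw [if_neg h2]
            split_ifs at ihr ⊢ <;> omega
    have hge'' : ∀ r, r ≤ n → r.choose 2 ≤ (l''.take r).sum := by
      intro r hr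
      have hh := hps r
      by_cases h1 : p - 1 < r ∧ r ≤ q - 1
      · have hstr := hstrict r (by omega) (by omega)
        rw [if_pos h1.1, if_neg (by omega)] at hh
        omega
      · push_neg at h1
        have h5 := hge r hr
        by_cases h2 : p - 1 < r
        · rw [if_pos h2, if_pos (by omega)] at hh
          omega
        · rw [if_neg h2, if_neg (by omega)] at hh
          omega
    have hsum'' : l''.sum = n.choose 2 := by
      have hh := hps n
      rw [if_pos (by omega), if_pos (by omega)] at hh
      rw [List.take_of_length_le (le_of_eq hlen''), List.take_of_length_le (le_of_eq hlen)] at hh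
      omega
    have hD : Dm l + 1 ≤ Dm l'' := by
      unfold Dm
      rw [hlen, hlen'']
      have hmem1 : p - 1 ∈ Finset.range n := by simp; omega
      have hmem2 : q - 1 ∈ (Finset.range n).erase (p-1) := by
        simp [Finset.mem_erase]; omega
      have ea : ∀ (g : ℕ → ℕ), ∑ i ∈ Finset.range n, g i
          = g (p-1) + (g (q-1) + ∑ i ∈ ((Finset.range n).erase (p-1)).erase (q-1), g i) := by
        intro g
        rw [Finset.add_sum_erase _ g hmem2, Finset.add_sum_erase _ g hmem1]
      rw [ea (fun i => i * l.getD i 0), ea (fun i => i * l''.getD i 0)]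
      have hcong : ∑ i ∈ ((Finset.range n).erase (p-1)).erase (q-1), i * l''.getD i 0
          = ∑ i ∈ ((Finset.range n).erase (p-1)).erase (q-1), i * l.getD i 0 := by
        apply Finset.sum_congr rfl
        intro i hi
        simp only [Finset.mem_erase] at hi
        rw [hgd i, if_neg hi.1, if_neg hi.2.1]
      rw [hcong, hgd (p-1), hgd (q-1), if_neg (by omega), if_pos rfl, if_pos rfl]
      obtain ⟨la', hla'⟩ : ∃ x, l.getD (p-1) 0 = x + 1 := ⟨l.getD (p-1) 0 - 1, by omega⟩
      rw [hla']
      have e1 : (p-1) * (la' + 1 - 1) = (p-1) * la' := by norm_num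
      have e2 : (p-1) * (la' + 1) = (p-1) * la' + (p-1) := by ring
      have e3 : (q-1) * (l.getD (q-1) 0 + 1) = (q-1) * l.getD (q-1) 0 + (q-1) := by ring
      rw [e1, e2, e3]
      omega
    -- apply induction
    obtain ⟨T'', hT''⟩ := ih n l'' hlen'' hs'' hge'' hsum'' (by omega)
    have hmembB : (l.getD (q-1) 0 + 1) ∈ Multiset.map T''.score Finset.univ.val := by
      rw [hT'']
      have : l''.getD (q-1) 0 ∈ l'' := by
        rw [List.getD_eq_getElem _ 0 (by omega)]
        exact List.getElem_mem _
      rw [hgd (q-1), if_pos rfl] at this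
      exact this
    have hmembA : (l.getD (p-1) 0 - 1) ∈ Multiset.map T''.score Finset.univ.val := by
      rw [hT'']
      have : l''.getD (p-1) 0 ∈ l'' := by
        rw [List.getD_eq_getElem _ 0 (by omega)]
        exact List.getElem_mem _
      rw [hgd (p-1), if_neg (by omega), if_pos rfl] at this
      exact this
    obtain ⟨u, _, hu2⟩ := Multiset.mem_map.mp hmembB
    obtain ⟨v, _, hv2⟩ := Multiset.mem_map.mp hmembA
    have huv : u ≠ v := by
      intro h
      rw [h, hv2] at hu2
      omega
    have hlt : T''.score v < T''.score u := by rw [hu2, hv2]; omega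
    obtain ⟨T, hT⟩ := transfer T'' u v huv hlt
    refine ⟨T, ?_⟩
    rw [hu2, hv2, hT''] at hT
    rw [show l.getD (q-1) 0 + 1 - 1 = l.getD (q-1) 0 from by omega,
      show l.getD (p-1) 0 - 1 + 1 = l.getD (p-1) 0 from by omega] at hT
    obtain ⟨m2, hm2a, hm2b⟩ := set_cons l (p-1) (l.getD (p-1) 0 - 1) (by omega)
    obtain ⟨m1, hm1a, hm1b⟩ := set_cons (l.set (p-1) (l.getD (p-1) 0 - 1)) (q-1)
      (l.getD (q-1) 0 + 1) (by rw [List.length_set]; omega)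
    rw [getD_set_ne l _ _ _ (by omega)] at hm1a
    rw [← hl''] at hm1b
    rw [hm1b] at hT
    have hm : (l.getD (q-1) 0 ::ₘ m1 : Multiset ℕ) = (l.getD (p-1) 0 - 1) ::ₘ m2 := by
      rw [← hm1a, hm2b]
    have step1 : (l.getD (q-1) 0 + 1) ::ₘ ((l.getD (p-1) 0 - 1) ::ₘ
        Multiset.map T.score Finset.univ.val)
        = (l.getD (q-1) 0 + 1) ::ₘ ((l.getD (p-1) 0 - 1) ::ₘ (l.getD (p-1) 0 ::ₘ m2)) := by
      rw [hT]
      have hm' : ({l.getD (q-1) 0} : Multiset ℕ) + m1 = {l.getD (p-1) 0 - 1} + m2 := by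
        simpa only [← Multiset.singleton_add] using hm
      simp only [← Multiset.singleton_add]
      rw [show ({l.getD (q-1) 0} : Multiset ℕ) + ({l.getD (p-1) 0}
          + ({l.getD (q-1) 0 + 1} + m1))
          = {l.getD (p-1) 0} + ({l.getD (q-1) 0 + 1} + ({l.getD (q-1) 0} + m1)) from by abel,
        hm']
      abel
    have step2 := (Multiset.cons_inj_right _).mp step1
    have step3 := (Multiset.cons_inj_right _).mp step2
    rw [hm2a]
    exact step3

/-! ### Easy direction : properties of score sequences -/

lemma sum_pairs (T : Tournament n) (A : Finset (Fin n)) :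
    ∑ v ∈ A, ∑ w ∈ A, (if T.dom v w = true then (1:ℕ) else 0) = A.card.choose 2 := by
  have hpair : ∀ v w : Fin n, (if T.dom v w = true then (1:ℕ) else 0)
      + (if T.dom w v = true then 1 else 0) = if v = w then 0 else 1 := by
    intro v w
    by_cases hvw : v = w
    · subst hvw; simp [T.irrefl]
    · rw [if_neg hvw]
      have := T.asymm v w hvw
      cases h : T.dom w v <;> rw [h] at this <;> simp [this, h]
  have h2 : 2 * (∑ v ∈ A, ∑ w ∈ A, (if T.dom v w = true then (1:ℕ) else 0))
      = ∑ v ∈ A, ∑ w ∈ A, (if v = w then 0 else 1) := by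
    rw [two_mul]
    nth_rewrite 2 [Finset.sum_comm]
    rw [← Finset.sum_add_distrib]
    refine Finset.sum_congr rfl (fun v _ => ?_)
    rw [← Finset.sum_add_distrib]
    exact Finset.sum_congr rfl (fun w _ => hpair v w)
  have h3 : ∑ v ∈ A, ∑ w ∈ A, (if v = w then (0:ℕ) else 1) = A.card * (A.card - 1) := by
    have hrow : ∀ v ∈ A, ∑ w ∈ A, (if v = w then (0:ℕ) else 1) = A.card - 1 := by
      intro v hv
      have e0 : ∀ w : Fin n, (if v = w then (0:ℕ) else 1) + (if v = w then 1 else 0) = 1 := by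
        intro w; by_cases h : v = w <;> simp [h]
      have e1 : ∑ w ∈ A, ((if v = w then (0:ℕ) else 1) + (if v = w then 1 else 0)) = A.card := by
        rw [Finset.sum_congr rfl (fun w _ => e0 w)]
        simp
      have e2 : ∑ w ∈ A, (if v = w then (1:ℕ) else 0) = 1 := by
        rw [Finset.sum_ite_eq]; simp [hv]
      rw [Finset.sum_add_distrib, e2] at e1
      omega
    rw [Finset.sum_congr rfl hrow, Finset.sum_const, smul_eq_mul]
  have h4 := two_mul_choose2 A.card
  omega

lemma score_sum_lower (T : Tournament n) (A : Finset (Fin n)) :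
    A.card.choose 2 ≤ ∑ v ∈ A, T.score v := by
  have h1 := sum_pairs T A
  have h2 : ∀ v ∈ A, ∑ w ∈ A, (if T.dom v w = true then (1:ℕ) else 0) ≤ T.score v := by
    intro v _
    rw [← Finset.card_filter]
    apply Finset.card_le_card
    intro w hw
    simp only [Finset.mem_filter] at hw ⊢
    exact ⟨Finset.mem_univ w, hw.2⟩
  rw [← h1]
  exact Finset.sum_le_sum h2

lemma score_total (T : Tournament n) : ∑ v : Fin n, T.score v = n.choose 2 := by
  have h1 := sum_pairs T Finset.univ
  have h2 : ∀ v : Fin n, T.score v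
      = ∑ w ∈ Finset.univ, (if T.dom v w = true then (1:ℕ) else 0) := by
    intro v
    exact Finset.card_filter _ _
  rw [Finset.sum_congr rfl (fun v _ => h2 v), h1, Finset.card_univ, Fintype.card_fin]

lemma score_le (T : Tournament n) (v : Fin n) : T.score v ≤ n - 1 := by
  unfold Tournament.score
  have hsub : Finset.univ.filter (fun w => T.dom v w = true) ⊆ Finset.univ.erase v := by
    intro w hw
    simp only [Finset.mem_filter] at hw
    have : w ≠ v := by
      intro h; rw [h] at hw; rw [T.irrefl v] at hw; simp at hw
    simp [Finset.mem_erase, this]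
  have := Finset.card_le_card hsub
  rwa [Finset.card_erase_of_mem (Finset.mem_univ v), Finset.card_univ, Fintype.card_fin] at this

lemma scoreList_coe (T : Tournament n) :
    ((T.scoreList : List ℕ) : Multiset ℕ) = Multiset.map T.score Finset.univ.val := by
  unfold Tournament.scoreList; exact Multiset.sort_eq _ _

lemma scoreList_sorted (T : Tournament n) : T.scoreList.Pairwise (· ≤ ·) := by
  unfold Tournament.scoreList; exact Multiset.pairwise_sort _ _

lemma scoreList_length (T : Tournament n) : T.scoreList.length = n := by
  unfold Tournament.scoreList
  rw [Multiset.length_sort, Multiset.card_map]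
  simp

lemma scoreList_sum (T : Tournament n) : T.scoreList.sum = n.choose 2 := by
  have h := congrArg Multiset.sum (scoreList_coe T)
  rw [Multiset.sum_coe] at h
  rw [h]
  exact score_total T

lemma scoreList_take (T : Tournament n) (r : ℕ) (hr : r ≤ n) :
    r.choose 2 ≤ (T.scoreList.take r).sum := by
  classical
  set le : Fin n → Fin n → Bool := fun a b => decide (T.score a ≤ T.score b) with hle
  set V : List (Fin n) := Finset.univ.toList.mergeSort le with hV
  have hVperm : V.Perm Finset.univ.toList := List.mergeSort_perm _ _
  have hVsorted : List.Pairwise (fun a b => le a b = true) V :=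
    List.pairwise_mergeSort (by intro a b c; simp [hle]; omega)
      (by intro a b; simp [hle]; omega) _
  have hmapsorted : (V.map T.score).Pairwise (· ≤ ·) := by
    rw [List.pairwise_map]
    exact hVsorted.imp (by intro a b h; simpa [hle] using h)
  have hcoe : ((T.scoreList : List ℕ) : Multiset ℕ)
      = ((V.map T.score : List ℕ) : Multiset ℕ) := by
    rw [scoreList_coe, ← Finset.coe_toList, ← Multiset.map_coe]
    exact congrArg _ (Multiset.coe_eq_coe.mpr hVperm.symm)
  have hlist : T.scoreList = V.map T.score :=
    List.Perm.eq_of_pairwise' (scoreList_sorted T) hmapsorted (Multiset.coe_eq_coe.mp hcoe)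
  have hVnodup : V.Nodup := hVperm.nodup_iff.mpr (Finset.nodup_toList _)
  have htake_nodup : (V.take r).Nodup := (List.take_sublist r V).nodup hVnodup
  have hVlen : V.length = n := by
    rw [hVperm.length_eq, Finset.length_toList, Finset.card_univ, Fintype.card_fin]
  have htlen : (V.take r).length = r := by rw [List.length_take]; omega
  have hAcard : (V.take r).toFinset.card = r := by
    rw [List.toFinset_card_of_nodup htake_nodup, htlen]
  have hsum : ∑ v ∈ (V.take r).toFinset, T.score v = ((V.take r).map T.score).sum :=
    List.sum_toFinset _ htake_nodup
  have hlow := score_sum_lower T (V.take r).toFinset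
  rw [hAcard, hsum] at hlow
  rw [hlist, ← List.map_take]
  exact hlow

/-! ### Counting -/

def FSet (n Tv E : ℕ) : Set (List ℕ) :=
  {l : List ℕ | l.length = n ∧ l.Pairwise (· ≤ ·) ∧
    (∀ r, 1 ≤ r → r < n → r.choose 2 ≤ (l.take r).sum) ∧
    l.sum = Tv ∧ l.getLast? = some E}

lemma F_eq (n Tv E : ℕ) : F n Tv E = (FSet n Tv E).ncard := rfl

lemma SSet_eq (n : ℕ) (hn : 1 ≤ n) :
    {l : List ℕ | ∃ T : Tournament n, T.scoreList = l}
      = ⋃ E ∈ (Finset.Icc (n/2) (n-1) : Finset ℕ), FSet n (n.choose 2) E := by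
  ext l
  simp only [Set.mem_setOf_eq, Set.mem_iUnion, Finset.mem_Icc, exists_prop, FSet]
  constructor
  · rintro ⟨T, rfl⟩
    have hlen := scoreList_length T
    have hsorted := scoreList_sorted T
    have hsum := scoreList_sum T
    have hne : T.scoreList ≠ [] := by
      intro h; rw [h] at hlen; simp at hlen; omega
    set E := T.scoreList.getLast hne with hE
    have hlast : T.scoreList.getLast? = some E := List.getLast?_eq_getLast hne
    refine ⟨E, ⟨?_, ?_⟩, hlen, hsorted,
      fun r h1 h2 => scoreList_take T r (by omega), hsum, hlast⟩
    · have hub : ∀ x ∈ T.scoreList, x ≤ E := by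
        intro x hx
        obtain ⟨i, hi, rfl⟩ := List.getElem_of_mem hx
        have hmono := sorted_mono _ hsorted i (T.scoreList.length - 1) (by omega) (by omega)
        rw [List.getD_eq_getElem _ 0 hi, List.getD_eq_getElem _ 0 (by omega)] at hmono
        rw [hE, List.getLast_eq_getElem]
        exact hmono
      have hsum_le : T.scoreList.sum ≤ n * E := by
        have := List.sum_le_card_nsmul _ E hub
        rwa [hlen, smul_eq_mul] at this
      have h2 := two_mul_choose2 n
      have hmul : n * (n-1) ≤ n * (2 * E) := by
        calc n * (n-1) = 2 * n.choose 2 := h2.symm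
          _ ≤ 2 * (n * E) := by omega
          _ = n * (2 * E) := by ring
      have h3 : n - 1 ≤ 2 * E := Nat.le_of_mul_le_mul_left hmul (by omega)
      omega
    · have hmem : E ∈ T.scoreList := List.getLast_mem hne
      have hmem2 : E ∈ Multiset.map T.score Finset.univ.val := by
        rw [← scoreList_coe T]; exact hmem
      obtain ⟨v, _, hv⟩ := Multiset.mem_map.mp hmem2
      rw [← hv]
      exact score_le T v
  · rintro ⟨E, _, hlen, hsorted, hpart, hsum, hlast⟩
    have hge : ∀ r, r ≤ n → r.choose 2 ≤ (l.take r).sum := by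
      intro r hr
      rcases Nat.eq_zero_or_pos r with rfl | h1
      · simp
      · rcases eq_or_lt_of_le hr with rfl | h2
        · rw [List.take_of_length_le (le_of_eq hlen), hsum]
        · exact hpart r h1 h2
    obtain ⟨T, hT⟩ := realize ((n-1) * n.choose 2 + 1 - Dm l) n l hlen hsorted hge hsum
      (le_refl _)
    refine ⟨T, ?_⟩
    unfold Tournament.scoreList
    rw [hT]
    exact List.Perm.eq_of_pairwise' (Multiset.pairwise_sort _ _) hsorted
      (Multiset.coe_eq_coe.mp (Multiset.sort_eq _ _))

lemma FSet_finite (n C E : ℕ) : (FSet n C E).Finite := by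
  have h := (List.finite_length_eq (Fin (C+1)) n).image (List.map (Fin.val))
  apply Set.Finite.subset h
  rintro l ⟨hlen, -, -, hsum, -⟩
  have hbd : ∀ x ∈ l, x < C + 1 := by
    intro x hx
    have := List.single_le_sum (fun y (_ : y ∈ l) => Nat.zero_le y) x hx
    omega
  refine ⟨l.pmap (fun x h => (⟨x, h⟩ : Fin (C+1))) hbd, ?_, ?_⟩
  · simp only [Set.mem_setOf_eq, List.length_pmap]
    exact hlen
  · rw [List.map_pmap]
    rw [List.pmap_eq_map]
    exact List.map_id l

lemma ncard_biUnion (s : Finset ℕ) : ∀ (A : ℕ → Set (List ℕ)),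
    (∀ E ∈ s, (A E).Finite) →
    (∀ E ∈ s, ∀ E' ∈ s, E ≠ E' → Disjoint (A E) (A E')) →
    (⋃ E ∈ s, A E).ncard = ∑ E ∈ s, (A E).ncard := by
  classical
  induction s using Finset.induction_on with
  | empty => intro A _ _; simp
  | @insert a s ha ih =>
    intro A hfin hdisj
    rw [Finset.set_biUnion_insert, Finset.sum_insert ha]
    have hfin2 : (⋃ E ∈ s, A E).Finite :=
      Set.Finite.biUnion s.finite_toSet
        (fun E hE => hfin E (Finset.mem_insert_of_mem (Finset.mem_coe.mp hE)))
    have hdis : Disjoint (A a) (⋃ E ∈ s, A E) := by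
      rw [Set.disjoint_left]
      intro x hxa hxU
      simp only [Set.mem_iUnion, exists_prop] at hxU
      obtain ⟨E, hE, hxE⟩ := hxU
      have hE' : E ∈ s := Finset.mem_coe.mp hE
      have hne : a ≠ E := fun h => ha (h ▸ hE')
      exact (Set.disjoint_left.mp (hdisj a (by simp) E
        (Finset.mem_insert_of_mem hE') hne)) hxa hxE
    rw [Set.ncard_union_eq hdis (hfin a (by simp)) hfin2,
      ih A (fun E hE => hfin E (by simp [hE]))
        (fun E hE E' hE' h => hdisj E (by simp [hE]) E' (by simp [hE']) h)]

end BentAux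

/-- **Bent's theorem.** `S(n) = ∑_{E=⌈(n-1)/2⌉}^{n-1} F_n[C(n,2), E]` for `n ≥ 1`. -/
theorem bent_count (n : ℕ) (hn : 1 ≤ n) :
    S n = ∑ E ∈ Finset.Icc ((n - 1 + 1) / 2) (n - 1), F n (n.choose 2) E := by
  have hicc : n - 1 + 1 = n := by omega
  rw [hicc]
  show ({l : List ℕ | ∃ T : Tournament n, T.scoreList = l}).ncard = _
  rw [BentAux.SSet_eq n hn]
  rw [BentAux.ncard_biUnion _ _ (fun E _ => BentAux.FSet_finite n _ E) ?_]
  · exact Finset.sum_congr rfl (fun E _ => rfl)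
  · intro E _ E' _ hne
    rw [Set.disjoint_left]
    rintro l ⟨_,_,_,_,h1⟩ ⟨_,_,_,_,h2⟩
    rw [h1] at h2
    exact hne (Option.some_inj.mp h2)
end

section
/- For every m ≥ 1, the number SCS(2m) of distinct self-complementary score sequences of length 2m satisfies SCS(2m) = ∑_{T=C(m,2)}^{m(m-1)} ∑_{E=⌈T/m⌉}^{m-1} F_m[T, E]. -/
/-- A score sequence of length `n`: nondecreasing, partial sums `≥ C(r,2)` for `1 ≤ r < n`,
and total sum `C(n,2)`. -/
def IsScoreSeq (l : List ℕ) : Prop :=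
  l.Pairwise (· ≤ ·) ∧
  (∀ r, 1 ≤ r → r < l.length → r.choose 2 ≤ (l.take r).sum) ∧
  l.sum = l.length.choose 2

/-- A sequence of length `n` is self-complementary if `s_{n+1-i} = n-1-s_i`
for all `1 ≤ i ≤ ⌊n/2⌋` (here `l.getD (i-1) 0` is the `i`-th term `s_i`). -/
def IsSelfCompl (l : List ℕ) : Prop :=
  ∀ i, 1 ≤ i → i ≤ l.length / 2 →
    ((l.getD (l.length - i) 0 : ℤ)) = (l.length : ℤ) - 1 - (l.getD (i - 1) 0 : ℤ)

/-- `SCS n` is the number of distinct self-complementary score sequences of length `n`. -/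
noncomputable def SCS (n : ℕ) : ℕ :=
  {l : List ℕ | l.length = n ∧ IsScoreSeq l ∧ IsSelfCompl l}.ncard

namespace SCSaux

lemma sum_le_mul (u : List ℕ) (k : ℕ) (h : ∀ x ∈ u, x ≤ k) : u.sum ≤ u.length * k := by
  simpa [smul_eq_mul] using List.sum_le_card_nsmul u k h

lemma sum_map_sub (k : ℕ) : ∀ (u : List ℕ), (∀ x ∈ u, x ≤ k) →
    (u.map (fun x => k - x)).sum = u.length * k - u.sum
  | [], _ => by simp
  | a :: u, h => by
    have ha : a ≤ k := h a (by simp)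
    have hu := sum_map_sub k u (fun x hx => h x (by simp [hx]))
    have hsum : u.sum ≤ u.length * k := sum_le_mul u k (fun x hx => h x (by simp [hx]))
    simp only [List.map_cons, List.sum_cons, List.length_cons, hu, add_mul, one_mul]
    omega

lemma mem_le_getLast {l : List ℕ} (hs : l.Pairwise (· ≤ ·)) {E : ℕ}
    (hE : l.getLast? = some E) : ∀ x ∈ l, x ≤ E := by
  obtain ⟨ys, rfl⟩ := List.getLast?_eq_some_iff.mp hE
  intro x hx
  rcases List.mem_append.mp hx with h | h
  · exact (List.pairwise_append.mp hs).2.2 x h E (by simp)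
  · simp_all

lemma choose_two_succ (n : ℕ) : (n + 1).choose 2 = n.choose 2 + n := by
  rw [Nat.choose_succ_succ, Nat.choose_one_right, Nat.add_comm]

lemma choose2_add_sub (m : ℕ) : ∀ j, j ≤ m → (m + j).choose 2 = (m - j).choose 2 + j * (2 * m - 1)
  | 0, _ => by simp
  | j + 1, h => by
    have ih := choose2_add_sub m j (by omega)
    have h1 : m + (j + 1) = (m + j) + 1 := by ring
    have h2 : m - j = (m - (j + 1)) + 1 := by omega
    rw [h1, choose_two_succ, ih, h2, choose_two_succ]
    have : (j + 1) * (2 * m - 1) = j * (2 * m - 1) + (2 * m - 1) := by ring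
    omega

lemma choose_two_two_mul (m : ℕ) : (2 * m).choose 2 = m * (2 * m - 1) := by
  rw [Nat.choose_two_right]
  have : 2 * m * (2 * m - 1) = 2 * (m * (2 * m - 1)) := by ring
  rw [this, Nat.mul_div_cancel_left _ (by norm_num)]

def cmpl (m : ℕ) (l : List ℕ) : List ℕ := (l.map fun x => 2 * m - 1 - x).reverse

def glue (m : ℕ) (l : List ℕ) : List ℕ := l ++ cmpl m l

lemma glue_length {m : ℕ} {l : List ℕ} (hlen : l.length = m) :
    (glue m l).length = 2 * m := by
  simp [glue, cmpl, hlen]; omega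

lemma glue_getD_left {m : ℕ} {l : List ℕ} (hlen : l.length = m) {k : ℕ} (hk : k < m) :
    (glue m l).getD k 0 = l.getD k 0 := by
  rw [glue, List.getD_eq_getElem?_getD, List.getD_eq_getElem?_getD, List.getElem?_append,
    if_pos (by omega)]

lemma glue_getD_right {m : ℕ} {l : List ℕ} (hlen : l.length = m) {k : ℕ}
    (hk1 : m ≤ k) (hk2 : k < 2 * m) :
    (glue m l).getD k 0 = 2 * m - 1 - l.getD (2 * m - 1 - k) 0 := by
  rw [glue, List.getD_eq_getElem?_getD, List.getElem?_append, if_neg (by omega), cmpl,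
    List.getElem?_reverse (by simp; omega), hlen]
  have h1 : (List.map (fun x => 2 * m - 1 - x) l).length - 1 - (k - m) = 2 * m - 1 - k := by
    simp [hlen]; omega
  rw [h1, List.getElem?_map, List.getD_eq_getElem?_getD]
  have h2 : 2 * m - 1 - k < l.length := by omega
  rw [List.getElem?_eq_getElem h2]
  simp

lemma glue_mem (m : ℕ) (hm : 1 ≤ m) (l : List ℕ) (hlen : l.length = m)
    (hsort : l.Pairwise (· ≤ ·))
    (hpart : ∀ r, 1 ≤ r → r < m → r.choose 2 ≤ (l.take r).sum)
    (hbound : ∀ x ∈ l, x ≤ m - 1)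
    (hsum : m.choose 2 ≤ l.sum) :
    (glue m l).length = 2 * m ∧ IsScoreSeq (glue m l) ∧ IsSelfCompl (glue m l) := by
  have hL := glue_length hlen
  have hcb : ∀ x ∈ cmpl m l, m ≤ x ∧ x ≤ 2 * m - 1 := by
    intro x hx
    simp only [cmpl, List.mem_reverse, List.mem_map] at hx
    obtain ⟨y, hy, rfl⟩ := hx
    have := hbound y hy
    omega
  have hTle : l.sum ≤ m * (m - 1) := by
    have := sum_le_mul l (m - 1) hbound
    rwa [hlen] at this
  have hcsum : (cmpl m l).sum = m * (2 * m - 1) - l.sum := by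
    rw [cmpl, List.sum_reverse, sum_map_sub _ l (fun x hx => by have := hbound x hx; omega), hlen]
  have hTle' : l.sum ≤ m * (2 * m - 1) :=
    le_trans hTle (Nat.mul_le_mul_left m (by omega))
  refine ⟨hL, ⟨?_, ?_, ?_⟩, ?_⟩
  · -- sorted
    rw [glue, List.pairwise_append]
    refine ⟨hsort, ?_, ?_⟩
    · rw [cmpl, List.pairwise_reverse]
      exact List.Pairwise.map _ (fun a b hab => Nat.sub_le_sub_left hab _) hsort
    · intro a ha b hb
      have := hbound a ha
      have := hcb b hb
      omega
  · -- partial sums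
    intro r hr1 hr2
    rw [hL] at hr2
    rcases le_or_gt r m with hrm | hrm
    · have htake : (glue m l).take r = l.take r := by
        rw [glue, List.take_append, hlen]
        have : r - m = 0 := by omega
        simp [this]
      rw [htake]
      rcases eq_or_lt_of_le hrm with rfl | hlt
      · rw [List.take_of_length_le (by omega)]; exact hsum
      · exact hpart r hr1 hlt
    · set j := r - m with hj
      have htake : (glue m l).take r = l ++ (cmpl m l).take j := by
        rw [glue, List.take_append, List.take_of_length_le (by omega), hlen, ← hj]
      have hctake : (cmpl m l).take j = ((l.drop (m - j)).map (fun x => 2 * m - 1 - x)).reverse := by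
        rw [cmpl, List.take_reverse, List.length_map, hlen, List.map_drop]
      have hdlen : (l.drop (m - j)).length = j := by simp [hlen]; omega
      have hdb : ∀ x ∈ l.drop (m - j), x ≤ 2 * m - 1 := fun x hx => by
        have := hbound x (List.mem_of_mem_drop hx); omega
      have hsum_take : ((cmpl m l).take j).sum = j * (2 * m - 1) - (l.drop (m - j)).sum := by
        rw [hctake, List.sum_reverse, sum_map_sub _ _ hdb, hdlen]
      have hPD := List.sum_take_add_sum_drop l (m - j)
      have hP : (m - j).choose 2 ≤ (l.take (m - j)).sum := hpart (m - j) (by omega) (by omega)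
      have hD : (l.drop (m - j)).sum ≤ j * (2 * m - 1) := by
        have := sum_le_mul (l.drop (m - j)) (2 * m - 1) hdb
        rwa [hdlen] at this
      have hch : r.choose 2 = (m - j).choose 2 + j * (2 * m - 1) := by
        have hr : r = m + j := by omega
        rw [hr, choose2_add_sub m j (by omega)]
      rw [htake, List.sum_append, hsum_take, hch]
      omega
  · -- total sum
    rw [hL, glue, List.sum_append, hcsum, choose_two_two_mul]
    omega
  · -- self complementary
    intro i hi1 hi2
    rw [hL] at hi2 ⊢
    have hi2' : i ≤ m := by omega
    have h1 : (glue m l).getD (i - 1) 0 = l.getD (i - 1) 0 := glue_getD_left hlen (by omega)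
    have h2 : (glue m l).getD (2 * m - i) 0 = 2 * m - 1 - l.getD (2 * m - 1 - (2 * m - i)) 0 :=
      glue_getD_right hlen (by omega) (by omega)
    have h3 : 2 * m - 1 - (2 * m - i) = i - 1 := by omega
    rw [h1, h2, h3]
    have hb : l.getD (i - 1) 0 ≤ m - 1 := by
      rcases lt_or_ge (i - 1) l.length with h | h
      · rw [List.getD_eq_getElem _ _ h]
        exact hbound _ (List.getElem_mem h)
      · rw [List.getD_eq_default _ _ h]; omega
    push_cast [Nat.cast_sub (by omega : l.getD (i-1) 0 ≤ 2 * m - 1)]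
    omega

lemma ncard_biUnion {ι α : Type*} (s : Finset ι) (f : ι → Set α)
    (hfin : ∀ i ∈ s, (f i).Finite)
    (hdis : ∀ i ∈ s, ∀ j ∈ s, i ≠ j → Disjoint (f i) (f j)) :
    (⋃ i ∈ s, f i).ncard = ∑ i ∈ s, (f i).ncard := by
  classical
  induction s using Finset.induction_on with
  | empty => simp
  | insert a t ha ih =>
    have hU : (⋃ i ∈ (insert a t : Finset ι), f i) = f a ∪ ⋃ i ∈ t, f i := by
      simp [Set.biUnion_insert]
    have hfint : (⋃ i ∈ t, f i).Finite :=
      Set.Finite.biUnion t.finite_toSet (fun i hi => hfin i (Finset.mem_insert_of_mem hi))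
    have hdisj : Disjoint (f a) (⋃ i ∈ t, f i) := by
      rw [Set.disjoint_iUnion₂_right]
      intro i hi
      exact hdis a (Finset.mem_insert_self a t) i (Finset.mem_insert_of_mem hi)
        (fun h => ha (h ▸ hi))
    rw [hU, Finset.sum_insert ha,
      Set.ncard_union_eq hdisj (hfin a (Finset.mem_insert_self a t)) hfint,
      ih (fun i hi => hfin i (Finset.mem_insert_of_mem hi))
        (fun i hi j hj hij => hdis i (Finset.mem_insert_of_mem hi) j
          (Finset.mem_insert_of_mem hj) hij)]

lemma finite_F_set (m T E : ℕ) :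
    {l : List ℕ | l.length = m ∧ l.Pairwise (· ≤ ·) ∧
      (∀ r, 1 ≤ r → r < m → r.choose 2 ≤ (l.take r).sum) ∧
      l.sum = T ∧ l.getLast? = some E}.Finite := by
  apply Set.Finite.subset ((List.finite_length_eq (Fin (T + 1)) m).image (List.map Fin.val))
  rintro l ⟨hlen, -, -, hsum, -⟩
  refine ⟨l.attach.map (fun x => ⟨x.1, ?_⟩), by simp [hlen], ?_⟩
  · have : x.1 ≤ l.sum := List.single_le_sum (fun _ _ => Nat.zero_le _) x.1 x.2
    omega
  · simp [List.map_map, Function.comp]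


lemma glue_take {m : ℕ} {l : List ℕ} (hlen : l.length = m) :
    (glue m l).take m = l := by
  rw [glue, List.take_append, List.take_of_length_le (le_of_eq hlen), hlen,
    Nat.sub_self, List.take_zero, List.append_nil]

end SCSaux

namespace SCSaux2
open SCSaux

lemma back (m : ℕ) (hm : 1 ≤ m) (L : List ℕ) (hlen : L.length = 2 * m)
    (hscore : IsScoreSeq L) (hsc : IsSelfCompl L) :
    (L.take m).length = m ∧ (L.take m).Pairwise (· ≤ ·) ∧
    (∀ r, 1 ≤ r → r < m → r.choose 2 ≤ ((L.take m).take r).sum) ∧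
    (∀ x ∈ L.take m, x ≤ m - 1) ∧
    m.choose 2 ≤ (L.take m).sum ∧
    glue m (L.take m) = L := by
  obtain ⟨hsort, hpart, _⟩ := hscore
  simp only [IsSelfCompl, hlen] at hsc
  rw [hlen] at hpart
  have hlenT : (L.take m).length = m := by simp [hlen]; omega
  have hsortT : (L.take m).Pairwise (· ≤ ·) :=
    List.Pairwise.sublist (List.take_sublist m L) hsort
  have hmono : ∀ i j (hij : i ≤ j) (hj : j < L.length), L[i]'(by omega) ≤ L[j] := by
    intro i j hij hj
    rcases eq_or_lt_of_le hij with rfl | h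
    · exact le_refl _
    · exact List.pairwise_iff_getElem.mp hsort _ _ (by omega) hj h
  have hE : L.getD (m - 1) 0 ≤ m - 1 := by
    have h1 := hsc m (by omega) (by omega)
    have h2 : 2 * m - m = m := by omega
    rw [h2] at h1
    have h3 : L.getD (m - 1) 0 ≤ L.getD m 0 := by
      rw [List.getD_eq_getElem _ _ (by omega), List.getD_eq_getElem _ _ (by omega)]
      exact hmono (m - 1) m (by omega) (by omega)
    omega
  have hboundT : ∀ x ∈ L.take m, x ≤ m - 1 := by
    intro x hx
    obtain ⟨i, hi, rfl⟩ := List.mem_iff_getElem.mp hx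
    rw [List.getElem_take]
    rw [hlenT] at hi
    calc L[i]'(by omega) ≤ L[m-1]'(by omega) := hmono i (m - 1) (by omega) (by omega)
    _ ≤ m - 1 := by rw [← List.getD_eq_getElem _ 0 (by omega)]; exact hE
  refine ⟨hlenT, hsortT, ?_, hboundT, ?_, ?_⟩
  · intro r hr1 hr2
    rw [List.take_take, min_eq_left hr2.le]
    exact hpart r hr1 (by omega)
  · exact hpart m (by omega) (by omega)
  · -- glue equality
    have hgd : ∀ k, k < 2 * m → (glue m (L.take m)).getD k 0 = L.getD k 0 := by
      intro k hk
      rcases lt_or_ge k m with hkm | hkm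
      · have e2 : (L.take m).getD k 0 = L.getD k 0 := by
          rw [List.getD_eq_getElem _ _ (show k < (L.take m).length by omega), List.getElem_take,
            ← List.getD_eq_getElem _ _ (show k < L.length by omega)]
        rw [glue_getD_left hlenT hkm, e2]
      · rw [glue_getD_right hlenT hkm hk]
        have h1 := hsc (2 * m - k) (by omega) (by omega)
        have h2 : 2 * m - (2 * m - k) = k := by omega
        have h3 : 2 * m - k - 1 = 2 * m - 1 - k := by omega
        rw [h2, h3] at h1
        have h4 : (L.take m).getD (2 * m - 1 - k) 0 = L.getD (2 * m - 1 - k) 0 := by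
          rw [List.getD_eq_getElem _ _ (show 2 * m - 1 - k < (L.take m).length by omega),
            List.getElem_take, ← List.getD_eq_getElem _ _ (show 2 * m - 1 - k < L.length by omega)]
        rw [h4]
        omega
    have hgl : (glue m (L.take m)).length = 2 * m := glue_length hlenT
    apply List.ext_getElem (by omega)
    intro k h1 h2
    have hk : k < 2 * m := by omega
    rw [← List.getD_eq_getElem _ 0 h1, ← List.getD_eq_getElem _ 0 h2]
    exact hgd k hk

end SCSaux2

/-- `SCS(2m) = ∑_{T=C(m,2)}^{m(m-1)} ∑_{E=⌈T/m⌉}^{m-1} F_m[T,E]` for `m ≥ 1`. -/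
theorem SCS_even (m : ℕ) (hm : 1 ≤ m) :
    SCS (2 * m) =
      ∑ T ∈ Finset.Icc (m.choose 2) (m * (m - 1)),
        ∑ E ∈ Finset.Icc ((T + m - 1) / m) (m - 1), F m T E := by
  classical
  set A : ℕ → ℕ → Set (List ℕ) := fun T E => {l : List ℕ | l.length = m ∧ l.Pairwise (· ≤ ·) ∧
    (∀ r, 1 ≤ r → r < m → r.choose 2 ≤ (l.take r).sum) ∧
    l.sum = T ∧ l.getLast? = some E} with hA
  set s : Finset ((_ : ℕ) × ℕ) :=
    (Finset.Icc (m.choose 2) (m * (m - 1))).sigma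
      (fun T => Finset.Icc ((T + m - 1) / m) (m - 1)) with hs
  set B : (Σ _ : ℕ, ℕ) → Set (List ℕ) := fun p => SCSaux.glue m '' A p.1 p.2 with hB
  have hAmem : ∀ p : (Σ _ : ℕ, ℕ), ∀ l ∈ A p.1 p.2, l.length = m ∧ l.sum = p.1 ∧
      l.getLast? = some p.2 := fun p l hl => ⟨hl.1, hl.2.2.2.1, hl.2.2.2.2⟩
  have hSet : {l : List ℕ | l.length = 2 * m ∧ IsScoreSeq l ∧ IsSelfCompl l} =
      ⋃ p ∈ s, B p := by
    ext L
    simp only [Set.mem_setOf_eq, Set.mem_iUnion, exists_prop]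
    constructor
    · rintro ⟨h1, h2, h3⟩
      obtain ⟨hlenT, hsortT, hpartT, hboundT, hsumT, hglue⟩ :=
        SCSaux2.back m hm L h1 h2 h3
      set l := L.take m
      have hml : m - 1 < l.length := by omega
      have hlast : l.getLast? = some (l.getD (m - 1) 0) := by
        rw [List.getLast?_eq_getElem?, hlenT, List.getElem?_eq_getElem hml,
          List.getD_eq_getElem _ _ hml]
      set E := l.getD (m - 1) 0 with hE
      set T := l.sum with hT
      have hEle : E ≤ m - 1 := by
        rw [hE, List.getD_eq_getElem _ _ hml]
        exact hboundT _ (List.getElem_mem hml)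
      have hTmE : T ≤ m * E := by
        have := SCSaux.sum_le_mul l E (SCSaux.mem_le_getLast hsortT hlast)
        rwa [hlenT] at this
      have hps : (⟨T, E⟩ : Σ _ : ℕ, ℕ) ∈ s := by
        rw [hs, Finset.mem_sigma, Finset.mem_Icc, Finset.mem_Icc]
        dsimp only
        refine ⟨⟨hsumT, le_trans hTmE (Nat.mul_le_mul_left m hEle)⟩, ?_, hEle⟩
        rw [Nat.div_le_iff_le_mul_add_pred (by omega)]
        omega
      exact ⟨⟨T, E⟩, hps, l, ⟨hlenT, hsortT, hpartT, rfl, hlast⟩, hglue⟩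
    · rintro ⟨p, hp, l, hl, rfl⟩
      obtain ⟨hlen, hsort, hpart, hsum, hlast⟩ := hl
      rw [hs, Finset.mem_sigma, Finset.mem_Icc, Finset.mem_Icc] at hp
      have hbound : ∀ x ∈ l, x ≤ m - 1 := fun x hx =>
        le_trans (SCSaux.mem_le_getLast hsort hlast x hx) hp.2.2
      exact SCSaux.glue_mem m hm l hlen hsort hpart hbound (hsum ▸ hp.1.1)
  have hinj : ∀ (l1 l2 : List ℕ), l1.length = m → l2.length = m →
      SCSaux.glue m l1 = SCSaux.glue m l2 → l1 = l2 := by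
    intro l1 l2 h1 h2 h
    rw [← SCSaux.glue_take h1, ← SCSaux.glue_take h2, h]
  have hfinB : ∀ p ∈ s, (B p).Finite := fun p _ =>
    (SCSaux.finite_F_set m p.1 p.2).image _
  have hdisB : ∀ p ∈ s, ∀ q ∈ s, p ≠ q → Disjoint (B p) (B q) := by
    intro p _ q _ hpq
    rw [Set.disjoint_left]
    rintro x ⟨l1, hl1, rfl⟩ ⟨l2, hl2, hx⟩
    obtain ⟨h1, hs1, hg1⟩ := hAmem p l1 hl1
    obtain ⟨h2, hs2, hg2⟩ := hAmem q l2 hl2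
    have hl12 : l2 = l1 := hinj l2 l1 h2 h1 hx
    subst hl12
    apply hpq
    have hfst : p.1 = q.1 := by rw [← hs1, ← hs2]
    have hsnd : p.2 = q.2 := by
      have h := hg1.symm.trans hg2
      exact Option.some_injective _ h
    exact Sigma.ext hfst (by rw [hsnd])
  have hcardB : ∀ p : (Σ _ : ℕ, ℕ), (B p).ncard = (A p.1 p.2).ncard := by
    intro p
    apply Set.ncard_image_of_injOn
    intro l1 hl1 l2 hl2 h
    exact hinj l1 l2 (hAmem p l1 hl1).1 (hAmem p l2 hl2).1 h
  calc SCS (2 * m) = (⋃ p ∈ s, B p).ncard := by rw [SCS, hSet]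
    _ = ∑ p ∈ s, (B p).ncard := SCSaux.ncard_biUnion s B hfinB hdisB
    _ = ∑ p ∈ s, (A p.1 p.2).ncard := Finset.sum_congr rfl (fun p _ => hcardB p)
    _ = ∑ T ∈ Finset.Icc (m.choose 2) (m * (m - 1)),
        ∑ E ∈ Finset.Icc ((T + m - 1) / m) (m - 1), F m T E := by
      rw [hs, Finset.sum_sigma]
      rfl
end

section
/- For every m ≥ 1, the number SCS(2m+1) of distinct self-complementary score sequences of length 2m+1 satisfies SCS(2m+1) = ∑_{T=C(m,2)}^{m^2} ∑_{E=⌈T/m⌉}^{m} F_m[T, E]. -/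
lemma ncard_biUnion' {ι α : Type*} (s : Finset ι) (f : ι → Set α)
    (hfin : ∀ i ∈ s, (f i).Finite)
    (hdisj : ∀ i ∈ s, ∀ j ∈ s, i ≠ j → Disjoint (f i) (f j)) :
    (⋃ i ∈ s, f i).ncard = ∑ i ∈ s, (f i).ncard := by
  induction s using Finset.cons_induction with
  | empty => simp
  | cons a s ha ih =>
    rw [Finset.sum_cons]
    have h1 : (⋃ i ∈ Finset.cons a s ha, f i) = f a ∪ ⋃ i ∈ s, f i := by
      simp [Set.iUnion_or, Set.iUnion_union_distrib]
    have hd : Disjoint (f a) (⋃ i ∈ s, f i) :=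
      Set.disjoint_iUnion_right.2 fun i => Set.disjoint_iUnion_right.2 fun hi =>
        hdisj a (Finset.mem_cons_self a s) i (Finset.mem_cons_of_mem hi)
          (fun h => ha (h ▸ hi))
    have hfa : (f a).Finite := hfin a (Finset.mem_cons_self a s)
    have hfu : (⋃ i ∈ s, f i).Finite :=
      Set.Finite.biUnion s.finite_toSet fun i hi => hfin i (Finset.mem_cons_of_mem hi)
    rw [h1, Set.ncard_union_eq hd hfa hfu,
      ih (fun i hi => hfin i (Finset.mem_cons_of_mem hi))
        (fun i hi j hj hij => hdisj i (Finset.mem_cons_of_mem hi) j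
          (Finset.mem_cons_of_mem hj) hij)]

lemma two_mul_choose_two (n : ℕ) : 2 * n.choose 2 = n * (n - 1) := by
  rw [Nat.choose_two_right, Nat.mul_div_cancel']
  exact even_iff_two_dvd.mp (Nat.even_mul_pred_self n)

lemma chooseId (k j : ℕ) : (k + j + 1 + k).choose 2 = (k + j) + 2 * (k + j) * k + j.choose 2 := by
  apply Nat.eq_of_mul_eq_mul_left (show 0 < 2 by norm_num)
  rw [two_mul_choose_two, Nat.mul_add, Nat.mul_add, two_mul_choose_two]
  cases j with
  | zero => simp; ring
  | succ j' =>
    have h1 : k + (j' + 1) + 1 + k - 1 = k + j' + 1 + k := by omega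
    have h2 : j' + 1 - 1 = j' := by omega
    rw [h1, h2]; ring

lemma sum_map_compl (c : ℕ) : ∀ (l : List ℕ), (∀ x ∈ l, x ≤ c) →
    (l.map (fun x => c - x)).sum + l.sum = c * l.length := by
  intro l
  induction l with
  | nil => simp
  | cons a t ih =>
    intro hb
    simp only [List.map_cons, List.sum_cons, List.length_cons]
    have ha := hb a (by simp)
    have := ih (fun x hx => hb x (by simp [hx]))
    rw [Nat.mul_add, Nat.mul_one]
    omega


lemma mid_choose (m : ℕ) : (2 * m + 1).choose 2 = 2 * m * m + m := by
  apply Nat.eq_of_mul_eq_mul_left (show 0 < 2 by norm_num)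
  rw [two_mul_choose_two]
  simp; ring


lemma sum_le_mul (c : ℕ) : ∀ (l : List ℕ), (∀ x ∈ l, x ≤ c) → l.sum ≤ c * l.length := by
  intro l
  induction l with
  | nil => simp
  | cons a t ih =>
    intro hb
    simp only [List.sum_cons, List.length_cons, Nat.mul_add, Nat.mul_one]
    have := ih (fun x hx => hb x (by simp [hx]))
    have := hb a (by simp)
    omega


lemma finite_bdd_lists (n c : ℕ) :
    {l : List ℕ | l.length = n ∧ ∀ x ∈ l, x ≤ c}.Finite := by
  have h : {l : List ℕ | l.length = n ∧ ∀ x ∈ l, x ≤ c} ⊆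
      (fun l : List (Fin (c + 1)) => l.map Fin.val) '' {l | l.length = n} := by
    rintro l ⟨hlen, hbd⟩
    refine ⟨l.pmap (fun x hx => (⟨x, hx⟩ : Fin (c + 1))) (fun x hx => Nat.lt_succ_of_le (hbd x hx)), ?_, ?_⟩
    · simp [hlen]
    · simp [List.map_pmap]
  exact Set.Finite.subset (Set.Finite.image _ (List.finite_length_eq _ n)) h

lemma finite_F_set (n T E : ℕ) :
    {l : List ℕ | l.length = n ∧ l.Pairwise (· ≤ ·) ∧
      (∀ r, 1 ≤ r → r < n → r.choose 2 ≤ (l.take r).sum) ∧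
      l.sum = T ∧ l.getLast? = some E}.Finite := by
  refine Set.Finite.subset (finite_bdd_lists n T) ?_
  rintro l ⟨h1, _, _, h4, _⟩
  exact ⟨h1, fun x hx => h4 ▸ List.single_le_sum (fun y _ => Nat.zero_le y) x hx⟩

def gmap (m : ℕ) (h : List ℕ) : List ℕ := h ++ m :: (h.map (fun x => 2 * m - x)).reverse


lemma gmap_length (m : ℕ) (h : List ℕ) (hlen : h.length = m) :
    (gmap m h).length = 2 * m + 1 := by
  simp [gmap, hlen]; omega

lemma gmap_take (m : ℕ) (h : List ℕ) (hlen : h.length = m) :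
    (gmap m h).take m = h := by
  rw [gmap, ← hlen, List.take_left]

lemma gmap_mem (m : ℕ) (hm : 1 ≤ m) (h : List ℕ) (hlen : h.length = m)
    (hsort : h.Pairwise (· ≤ ·))
    (hpre : ∀ r, 1 ≤ r → r < m → r.choose 2 ≤ (h.take r).sum)
    (hlb : m.choose 2 ≤ h.sum)
    (hub : ∀ x ∈ h, x ≤ m) :
    (gmap m h).length = 2 * m + 1 ∧ IsScoreSeq (gmap m h) ∧ IsSelfCompl (gmap m h) := by
  have hub2 : ∀ x ∈ h, x ≤ 2 * m := fun x hx => le_trans (hub x hx) (by omega)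
  set rev : List ℕ := (h.map (fun x => 2 * m - x)).reverse with hrev
  have hrevlen : rev.length = m := by simp [hrev, hlen]
  have hrevmem : ∀ y ∈ rev, m ≤ y := by
    intro y hy
    rw [hrev, List.mem_reverse, List.mem_map] at hy
    obtain ⟨x, hx, rfl⟩ := hy
    have := hub x hx
    omega
  have hL : (gmap m h).length = 2 * m + 1 := gmap_length m h hlen
  refine ⟨hL, ⟨?_, ?_, ?_⟩, ?_⟩
  · -- sorted
    rw [gmap, List.pairwise_append]
    refine ⟨hsort, ?_, ?_⟩
    · rw [List.pairwise_cons]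
      refine ⟨hrevmem, ?_⟩
      rw [List.pairwise_reverse, List.pairwise_map]
      exact hsort.imp_of_mem (fun {a b} _ _ hab => Nat.sub_le_sub_left hab (2 * m))
    · intro x hx y hy
      have hxm : x ≤ m := hub x hx
      rcases List.mem_cons.1 hy with rfl | hy'
      · exact hxm
      · exact le_trans hxm (hrevmem y hy')
  · -- prefix sums
    intro r hr1 hr2
    rw [hL] at hr2
    rcases le_or_gt r m with hrm | hrm
    · have ht : (gmap m h).take r = h.take r := by
        rw [gmap, List.take_append]
        have : r - h.length = 0 := by omega
        rw [this, List.take_zero, List.append_nil]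
      rw [ht]
      rcases eq_or_lt_of_le hrm with heq | hlt
      · have h2 : h.take m = h := by rw [← hlen, List.take_length]
        rw [heq, h2]; exact hlb
      · exact hpre r hr1 hlt
    · obtain ⟨k, rfl⟩ : ∃ k, r = m + 1 + k := ⟨r - m - 1, by omega⟩
      have hk : k < m := by omega
      have htake : (gmap m h).take (m + 1 + k) = h ++ m :: rev.take k := by
        rw [gmap, List.take_append]
        have h1 : m + 1 + k - h.length = k + 1 := by omega
        rw [h1, List.take_of_length_le (by omega), List.take_succ_cons]
      rw [htake, List.sum_append, List.sum_cons]
      have hrtk : (rev.take k).sum = ((h.drop (m - k)).map (fun x => 2 * m - x)).sum := by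
        rw [hrev, List.take_reverse, List.sum_reverse, List.length_map, hlen, List.map_drop]
      have hdlen : (h.drop (m - k)).length = k := by
        rw [List.length_drop, hlen]; omega
      have hmc : ((h.drop (m - k)).map (fun x => 2 * m - x)).sum + (h.drop (m - k)).sum
          = 2 * m * k := by
        have := sum_map_compl (2 * m) (h.drop (m - k))
          (fun x hx => hub2 x (List.drop_subset _ _ hx))
        rw [hdlen] at this; exact this
      have hsplit : (h.take (m - k)).sum + (h.drop (m - k)).sum = h.sum :=
        List.sum_take_add_sum_drop h (m - k)
      have hS : (m - k).choose 2 ≤ (h.take (m - k)).sum := by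
        rcases Nat.eq_zero_or_pos k with rfl | hk0
        · have h2 : h.take (m - 0) = h := by rw [← hlen]; simp
          rw [h2]; simpa using hlb
        · exact hpre (m - k) (by omega) (by omega)
      have hid : (m + 1 + k).choose 2 = m + 2 * m * k + (m - k).choose 2 := by
        have h1 := chooseId k (m - k)
        have hkj : k + (m - k) = m := by omega
        rw [hkj] at h1
        exact h1
      rw [hid, hrtk]
      linarith
  · -- total sum
    rw [hL, mid_choose, gmap, List.sum_append, List.sum_cons, List.sum_reverse]
    have hmc2 := sum_map_compl (2 * m) h hub2
    rw [hlen] at hmc2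
    linarith
  · -- self complementary
    intro i hi1 hi2
    rw [hL] at hi2 ⊢
    have him : i ≤ m := by omega
    have hgd1 : (gmap m h).getD (i - 1) 0 = h.getD (i - 1) 0 := by
      rw [gmap, List.getD_append _ _ _ _ (by omega)]
    have hi1' : i - 1 < h.length := by omega
    have hgd1' : h.getD (i - 1) 0 = h[i - 1] := List.getD_eq_getElem _ _ hi1'
    have hgd2 : (gmap m h).getD (2 * m + 1 - i) 0 = rev.getD (m - i) 0 := by
      rw [gmap, List.getD_append_right _ _ _ _ (by omega)]
      have : 2 * m + 1 - i - h.length = (m - i) + 1 := by omega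
      rw [this, List.getD_cons_succ]
    have hmi : m - i < rev.length := by omega
    have hgd2' : rev.getD (m - i) 0 = 2 * m - h[i - 1] := by
      rw [List.getD_eq_getElem _ _ hmi]
      simp only [hrev, List.getElem_reverse, List.getElem_map, List.length_map, hlen]
      have hidx : m - 1 - (m - i) = i - 1 := by omega
      simp [hidx]
    rw [hgd1, hgd1', hgd2, hgd2']
    have hb : h[i - 1] ≤ 2 * m := hub2 _ (List.getElem_mem _)
    push_cast [Nat.cast_sub hb]
    ring

lemma take_mem (m : ℕ) (hm : 1 ≤ m) (l : List ℕ) (hlen : l.length = 2 * m + 1)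
    (hs : IsScoreSeq l) (hc : IsSelfCompl l) :
    (l.take m).length = m ∧ (l.take m).Pairwise (· ≤ ·) ∧
    (∀ r, 1 ≤ r → r < m → r.choose 2 ≤ ((l.take m).take r).sum) ∧
    m.choose 2 ≤ (l.take m).sum ∧
    (∃ E, (l.take m).getLast? = some E ∧ E ≤ m ∧ (l.take m).sum ≤ m * E) ∧
    gmap m (l.take m) = l := by
  have hmlt : m < l.length := by omega
  have hlenh : (l.take m).length = m := by rw [List.length_take]; omega
  have hm1 : m - 1 < l.length := by omega
  have hcompl : ∀ j, (hj : j < m) → (l[2 * m - j]'(by omega) : ℤ) = 2 * m - (l[j]'(by omega) : ℤ) := by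
    intro j hj
    have h1 := hc (j + 1) (by omega) (by rw [hlen]; omega)
    rw [hlen] at h1
    have e1 : 2 * m + 1 - (j + 1) = 2 * m - j := by omega
    have e2 : j + 1 - 1 = j := by omega
    rw [e1, e2, List.getD_eq_getElem (n := 2 * m - j) _ _ (by omega),
      List.getD_eq_getElem (n := j) _ _ (by omega)] at h1
    rw [h1]; push_cast; ring
  have hub2 : ∀ j, (hj : j < m) → l[j]'(by omega) ≤ 2 * m := by
    intro j hj
    have := hcompl j hj
    omega
  have htkmem : ∀ x ∈ l.take m, ∃ j, ∃ hj : j < m, x = l[j]'(by omega) := by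
    intro x hx
    rw [List.mem_iff_getElem] at hx
    obtain ⟨n, hn, rfl⟩ := hx
    rw [hlenh] at hn
    exact ⟨n, hn, List.getElem_take⟩
  have htkub : ∀ x ∈ l.take m, x ≤ 2 * m := by
    intro x hx
    obtain ⟨j, hj, rfl⟩ := htkmem x hx
    exact hub2 j hj
  have hdrop : l.drop (m + 1) = ((l.take m).map (fun x => 2 * m - x)).reverse := by
    apply List.ext_getElem
    · simp only [List.length_drop, List.length_reverse, List.length_map, hlenh, hlen]
      omega
    · intro i hi1 hi2
      have him : i < m := by simp [hlen] at hi1; omega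
      rw [List.getElem_drop, List.getElem_reverse, List.getElem_map]
      simp only [List.length_map, hlenh]
      have hidx : m - 1 - i < m := by omega
      have e3 : (l.take m)[m - 1 - i]'(by rw [hlenh]; omega) = l[m - 1 - i]'(by omega) :=
        List.getElem_take
      rw [e3]
      have h4 := hcompl (m - 1 - i) (by omega)
      have e4 : 2 * m - (m - 1 - i) = m + 1 + i := by omega
      simp only [e4] at h4
      have h5 := hub2 (m - 1 - i) (by omega)
      omega
  have hmapsum := sum_map_compl (2 * m) (l.take m) htkub
  rw [hlenh] at hmapsum
  have hsum : l.sum = (l.take m).sum + (l[m] + (l.drop (m + 1)).sum) := by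
    rw [← List.sum_take_add_sum_drop l m, List.drop_eq_getElem_cons hmlt, List.sum_cons]
  have hlsum : l.sum = 2 * m * m + m := by
    rw [hs.2.2, hlen, mid_choose]
  have hdsum : (l.drop (m + 1)).sum = ((l.take m).map (fun x => 2 * m - x)).sum := by
    rw [hdrop, List.sum_reverse]
  have hmid : l[m] = m := by
    rw [hdsum] at hsum
    rw [hlsum] at hsum
    linarith [hsum, hmapsum]
  have hgmap : gmap m (l.take m) = l := by
    have hd2 := List.drop_eq_getElem_cons hmlt
    rw [hmid] at hd2
    rw [gmap, ← hdrop, ← hd2, List.take_append_drop]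
  have hsorted : (l.take m).Pairwise (· ≤ ·) := List.Pairwise.sublist (List.take_sublist m l) hs.1
  have hEdef : (l.take m).getLast? = some (l[m - 1]'hm1) := by
    have h1 : (l.take m).getLast? = (l.take m)[m - 1]? := by
      rw [List.getLast?_eq_getElem?]
      simp only [hlenh]
    rw [h1, List.getElem?_eq_getElem (by rw [hlenh]; omega)]
    exact congrArg some (List.getElem_take)
  have hsortle : ∀ a b, (ha : a < l.length) → (hb : b < l.length) → a ≤ b →
      l[a] ≤ l[b] := by
    intro a b ha hb hab
    have := List.Pairwise.rel_get_of_le hs.1 (a := ⟨a, ha⟩) (b := ⟨b, hb⟩) (by exact hab)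
    simpa using this
  have hEm : l[m - 1]'hm1 ≤ m := by
    have := hsortle (m - 1) m (by omega) (by omega) (by omega)
    omega
  have hsumE : (l.take m).sum ≤ m * (l[m - 1]'hm1) := by
    have hb : ∀ x ∈ l.take m, x ≤ l[m - 1]'hm1 := by
      intro x hx
      obtain ⟨j, hj, rfl⟩ := htkmem x hx
      exact hsortle j (m - 1) (by omega) (by omega) (by omega)
    have h2 := sum_le_mul _ _ hb
    rw [hlenh, Nat.mul_comm] at h2
    exact h2
  refine ⟨hlenh, hsorted, ?_, ?_, ⟨_, hEdef, hEm, hsumE⟩, hgmap⟩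
  · intro r hr1 hr2
    rw [List.take_take, min_eq_left (by omega)]
    exact hs.2.1 r hr1 (by omega)
  · have := hs.2.1 m hm (by omega)
    exact this

def SetA (n T E : ℕ) : Set (List ℕ) :=
  {l : List ℕ | l.length = n ∧ l.Pairwise (· ≤ ·) ∧
    (∀ r, 1 ≤ r → r < n → r.choose 2 ≤ (l.take r).sum) ∧
    l.sum = T ∧ l.getLast? = some E}

def SetB (m : ℕ) : Set (List ℕ) :=
  ⋃ T ∈ Finset.Icc (m.choose 2) (m ^ 2), ⋃ E ∈ Finset.Icc ((T + m - 1) / m) m, SetA m T E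

lemma memB (m : ℕ) (hm : 1 ≤ m) (l : List ℕ) :
    l ∈ SetB m ↔ (l.length = m ∧ l.Pairwise (· ≤ ·) ∧
      (∀ r, 1 ≤ r → r < m → r.choose 2 ≤ (l.take r).sum) ∧
      m.choose 2 ≤ l.sum ∧
      ∃ E, l.getLast? = some E ∧ E ≤ m ∧ l.sum ≤ m * E) := by
  simp only [SetB, Set.mem_iUnion, SetA, Set.mem_setOf_eq, Finset.mem_Icc]
  constructor
  · rintro ⟨T, ⟨⟨hT1, hT2⟩, E, ⟨hE1, hE2⟩, hlen, hsort, hpre, hsum, hlast⟩⟩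
    subst hsum
    refine ⟨hlen, hsort, hpre, hT1, E, hlast, hE2, ?_⟩
    have hdiv := (Nat.div_le_iff_le_mul_add_pred hm).mp hE1
    obtain ⟨a, ha⟩ : ∃ a, m * E = a := ⟨_, rfl⟩
    rw [ha] at hdiv ⊢
    omega
  · rintro ⟨hlen, hsort, hpre, hT1, E, hlast, hE2, hE3⟩
    refine ⟨l.sum, ⟨⟨hT1, ?_⟩, E, ⟨?_, hE2⟩, hlen, hsort, hpre, rfl, hlast⟩⟩
    · calc l.sum ≤ m * E := hE3
        _ ≤ m * m := Nat.mul_le_mul_left m hE2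
        _ = m ^ 2 := (sq m).symm
    · rw [Nat.div_le_iff_le_mul_add_pred hm]
      obtain ⟨a, ha⟩ : ∃ a, m * E = a := ⟨_, rfl⟩
      rw [ha] at hE3 ⊢
      omega

lemma S_eq (m : ℕ) (hm : 1 ≤ m) :
    {l : List ℕ | l.length = 2 * m + 1 ∧ IsScoreSeq l ∧ IsSelfCompl l}
      = gmap m '' SetB m := by
  ext l
  simp only [Set.mem_setOf_eq, Set.mem_image]
  constructor
  · rintro ⟨hlen, hs, hc⟩
    obtain ⟨h1, h2, h3, h4, h5, h6⟩ := take_mem m hm l hlen hs hc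
    exact ⟨l.take m, (memB m hm _).mpr ⟨h1, h2, h3, h4, h5⟩, h6⟩
  · rintro ⟨h, hB, rfl⟩
    obtain ⟨hlen, hsort, hpre, hlb, E, hlast, hEm, _⟩ := (memB m hm h).mp hB
    have hub : ∀ x ∈ h, x ≤ m := by
      obtain ⟨ys, rfl⟩ := List.getLast?_eq_some_iff.mp hlast
      intro x hx
      rcases List.mem_append.mp hx with hx' | hx'
      · have := (List.pairwise_append.mp hsort).2.2 x hx' E (by simp)
        omega
      · simp at hx'; omega
    exact gmap_mem m hm h hlen hsort hpre hlb hub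

/-- `SCS(2m+1) = ∑_{T=C(m,2)}^{m²} ∑_{E=⌈T/m⌉}^{m} F_m[T,E]` for `m ≥ 1`. -/
theorem SCS_odd (m : ℕ) (hm : 1 ≤ m) :
    SCS (2 * m + 1) =
      ∑ T ∈ Finset.Icc (m.choose 2) (m ^ 2),
        ∑ E ∈ Finset.Icc ((T + m - 1) / m) m, F m T E := by
  have hSCS : SCS (2 * m + 1) = (gmap m '' SetB m).ncard := by
    rw [SCS, S_eq m hm]
  rw [hSCS]
  have hinj : Set.InjOn (gmap m) (SetB m) := by
    intro a ha b hb hab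
    have hla : a.length = m := ((memB m hm a).mp ha).1
    have hlb : b.length = m := ((memB m hm b).mp hb).1
    have := congrArg (List.take m) hab
    rwa [gmap_take m a hla, gmap_take m b hlb] at this
  rw [Set.ncard_image_of_injOn hinj, SetB]
  rw [ncard_biUnion']
  · apply Finset.sum_congr rfl
    intro T _
    rw [ncard_biUnion']
    · exact Finset.sum_congr rfl (fun E _ => rfl)
    · intro E _
      exact finite_F_set m T E
    · intro E₁ _ E₂ _ hne
      rw [Set.disjoint_left]
      rintro l ⟨_, _, _, _, h1⟩ ⟨_, _, _, _, h2⟩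
      exact hne (Option.some_injective _ (h1 ▸ h2 ▸ rfl))
  · intro T _
    exact Set.Finite.biUnion (Finset.finite_toSet _) (fun E _ => finite_F_set m T E)
  · intro T₁ _ T₂ _ hne
    rw [Set.disjoint_left]
    rintro l hl1 hl2
    simp only [Set.mem_iUnion, SetA, Set.mem_setOf_eq] at hl1 hl2
    obtain ⟨_, _, _, _, _, h1, _⟩ := hl1
    obtain ⟨_, _, _, _, _, h2, _⟩ := hl2
    exact hne (h1 ▸ h2)
end

section
/- For all nonnegative integers T and E: G_1[T,E] = 1 if T = E and G_1[T,E] = 0 otherwise; and for every n ≥ 2, G_n[T,E] = ∑_{k=⌈(T-E)/(n-1)⌉}^{E} G_{n-1}[T-E, k] if T - E > C(n-1,2), and G_n[T,E] = 0 otherwise. -/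
/-- `G n T E` is the number of nondecreasing sequences `(s_1 ≤ ⋯ ≤ s_n)` of nonnegative
integers with `∑_{i=1}^r s_i > C(r,2)` for all `1 ≤ r < n`, total sum `T`, and last term `E`. -/
noncomputable def G (n T E : ℕ) : ℕ :=
  {l : List ℕ | l.length = n ∧ l.Pairwise (· ≤ ·) ∧
    (∀ r, 1 ≤ r → r < n → r.choose 2 < (l.take r).sum) ∧
    l.sum = T ∧ l.getLast? = some E}.ncard

private lemma finite_len_sum : ∀ (n T : ℕ), {l : List ℕ | l.length = n ∧ l.sum = T}.Finite := by
  intro n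
  induction n with
  | zero =>
    intro T
    refine (Set.finite_singleton ([] : List ℕ)).subset ?_
    rintro l ⟨h1, -⟩
    simpa using List.length_eq_zero_iff.mp h1
  | succ n ih =>
    intro T
    have hsub : {l : List ℕ | l.length = n + 1 ∧ l.sum = T} ⊆
        ⋃ a ∈ Finset.range (T + 1), (List.cons a) '' {l : List ℕ | l.length = n ∧ l.sum = T - a} := by
      rintro l ⟨h1, h2⟩
      match l with
      | a :: t =>
        simp only [List.length_cons, Nat.add_right_cancel_iff] at h1
        simp only [List.sum_cons] at h2
        simp only [Set.mem_iUnion, Finset.mem_range, Set.mem_image, Set.mem_setOf_eq]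
        exact ⟨a, by omega, t, ⟨h1, by omega⟩, rfl⟩
    exact Set.Finite.subset
      (Set.Finite.biUnion (Finset.range (T + 1)).finite_toSet
        (fun a _ => (ih (T - a)).image _)) hsub

private lemma le_of_mem_sorted_getLast {l : List ℕ} (hs : l.Pairwise (· ≤ ·)) {k : ℕ}
    (hk : l.getLast? = some k) : ∀ x ∈ l, x ≤ k := by
  have hne : l ≠ [] := by rintro rfl; simp at hk
  have hkl : l.getLast hne = k := by
    rw [List.getLast?_eq_getLast hne] at hk; exact Option.some.inj hk
  intro x hx
  rw [← List.dropLast_append_getLast hne] at hs hx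
  rw [List.pairwise_append] at hs
  rcases List.mem_append.mp hx with h | h
  · exact hs.2.2 x h _ (by simp) |>.trans (le_of_eq hkl)
  · simp only [List.mem_singleton] at h
    omega

/-- The recurrence for the arrays `G_n[T,E]`. -/
theorem G_recurrence (T E : ℕ) :
    (G 1 T E = if T = E then 1 else 0) ∧
    (∀ n : ℕ, 2 ≤ n →
      G n T E =
        if ((n - 1).choose 2 : ℤ) < (T : ℤ) - (E : ℤ) then
          ∑ k ∈ Finset.Icc ((T - E + (n - 1) - 1) / (n - 1)) E, G (n - 1) (T - E) k
        else 0) := by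
  constructor
  · by_cases hTE : T = E
    · subst hTE
      have hset : {l : List ℕ | l.length = 1 ∧ l.Pairwise (· ≤ ·) ∧
          (∀ r, 1 ≤ r → r < 1 → r.choose 2 < (l.take r).sum) ∧
          l.sum = T ∧ l.getLast? = some T} = {[T]} := by
        ext l
        simp only [Set.mem_setOf_eq, Set.mem_singleton_iff]
        constructor
        · rintro ⟨h1, -, -, h4, h5⟩
          obtain ⟨a, rfl⟩ := List.length_eq_one_iff.mp h1
          simp only [List.sum_cons, List.sum_nil, add_zero] at h4
          subst h4
          rfl
        · rintro rfl
          exact ⟨rfl, List.pairwise_singleton _ _, fun r h1 h2 => by omega, by simp, by simp⟩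
      rw [if_pos rfl]
      simp only [G, hset, Set.ncard_singleton]
    · have hset : {l : List ℕ | l.length = 1 ∧ l.Pairwise (· ≤ ·) ∧
          (∀ r, 1 ≤ r → r < 1 → r.choose 2 < (l.take r).sum) ∧
          l.sum = T ∧ l.getLast? = some E} = ∅ := by
        rw [Set.eq_empty_iff_forall_notMem]
        rintro l ⟨h1, -, -, h4, h5⟩
        obtain ⟨a, rfl⟩ := List.length_eq_one_iff.mp h1
        simp only [List.sum_cons, List.sum_nil, add_zero] at h4
        simp only [List.getLast?_singleton, Option.some.injEq] at h5
        exact hTE (by omega)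
      simp only [G, hset, Set.ncard_empty, if_neg hTE]
  · intro n hn
    set m := n - 1 with hm
    have hm1 : 1 ≤ m := by omega
    have hnm : n = m + 1 := by omega
    split_ifs with h
    · -- positive case
      have hET : E < T := by
        have h0 : (0 : ℤ) ≤ ((m.choose 2 : ℕ) : ℤ) := Int.natCast_nonneg _
        have : (E : ℤ) < T := by omega
        exact_mod_cast this
      set D := T - E with hD
      have hC : m.choose 2 < D := by
        have : ((m.choose 2 : ℕ) : ℤ) < ((D : ℕ) : ℤ) := by
          push_cast [hD, Nat.cast_sub hET.le]; omega
        exact_mod_cast this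
      set lo := (D + m - 1) / m with hlo
      set A : ℕ → Set (List ℕ) := fun k => {l : List ℕ | l.length = m ∧ l.Pairwise (· ≤ ·) ∧
        (∀ r, 1 ≤ r → r < m → r.choose 2 < (l.take r).sum) ∧
        l.sum = D ∧ l.getLast? = some k} with hA
      have hfinA : ∀ k, (A k).Finite := fun k =>
        (finite_len_sum m D).subset (fun l hl => ⟨hl.1, hl.2.2.2.1⟩)
      have hinj : Function.Injective (fun l : List ℕ => l ++ [E]) :=
        fun a b hab => List.append_cancel_right hab
      set F : Finset (List ℕ) :=
        (Finset.Icc lo E).biUnion (fun k => ((hfinA k).toFinset.image (· ++ [E]))) with hF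
      have hSF : {l : List ℕ | l.length = n ∧ l.Pairwise (· ≤ ·) ∧
          (∀ r, 1 ≤ r → r < n → r.choose 2 < (l.take r).sum) ∧
          l.sum = T ∧ l.getLast? = some E} = ↑F := by
        ext l
        simp only [Set.mem_setOf_eq, hF, Finset.coe_biUnion, Finset.mem_coe, Finset.mem_Icc,
          Set.mem_iUnion, Finset.mem_image, Set.Finite.mem_toFinset, hA, exists_prop]
        constructor
        · rintro ⟨h1, h2, h3, h4, h5⟩
          have hne : l ≠ [] := List.ne_nil_of_length_pos (by omega)
          have hE : l.getLast hne = E := by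
            rw [List.getLast?_eq_getLast hne] at h5; exact Option.some.inj h5
          have hl : l.dropLast ++ [E] = l := by
            rw [← hE]; exact List.dropLast_append_getLast hne
          have hlen' : l.dropLast.length = m := by
            rw [List.length_dropLast, h1]
          have hne' : l.dropLast ≠ [] := List.ne_nil_of_length_pos (by omega)
          set k := l.dropLast.getLast hne' with hk
          have hk5 : l.dropLast.getLast? = some k := List.getLast?_eq_getLast _
          have hs' : l.dropLast.Pairwise (· ≤ ·) := h2.sublist (List.dropLast_sublist l)
          have hsum' : l.dropLast.sum = D := by
            have := congrArg List.sum hl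
            simp only [List.sum_append, List.sum_cons, List.sum_nil, add_zero, h4] at this
            omega
          have hkE : k ≤ E := by
            refine le_of_mem_sorted_getLast h2 h5 k ?_
            exact (List.dropLast_sublist l).mem (List.getLast_mem hne')
          have hlok : lo ≤ k := by
            have hxk : ∀ x ∈ l.dropLast, x ≤ k := le_of_mem_sorted_getLast hs' hk5
            have hmk : l.dropLast.sum ≤ l.dropLast.length • k :=
              List.sum_le_card_nsmul _ _ hxk
            rw [hlen', hsum', smul_eq_mul] at hmk
            rw [hlo, Nat.div_le_iff_le_mul_add_pred (by omega)]
            omega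
          refine ⟨k, ⟨hlok, hkE⟩, l.dropLast, ⟨hlen', hs', ?_, hsum', hk5⟩, hl⟩
          intro r hr1 hr2
          have := h3 r hr1 (by omega)
          rw [← hl, List.take_append_of_le_length (by omega)] at this
          exact this
        · rintro ⟨k, ⟨hlok, hkE⟩, l', ⟨h1, h2, h3, h4, h5⟩, rfl⟩
          have hall : ∀ x ∈ l', x ≤ E :=
            fun x hx => (le_of_mem_sorted_getLast h2 h5 x hx).trans hkE
          refine ⟨by simp [h1, hnm], ?_, ?_, ?_, List.getLast?_concat⟩
          · rw [List.pairwise_append]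
            exact ⟨h2, List.pairwise_singleton _ _,
              fun a ha b hb => by
                simp only [List.mem_singleton] at hb
                subst hb; exact hall a ha⟩
          · intro r hr1 hr2
            rw [List.take_append_of_le_length (by omega : r ≤ l'.length)]
            rcases eq_or_lt_of_le (by omega : r ≤ m) with hrm | hrm
            · subst hrm
              rw [List.take_of_length_le (le_of_eq h1), h4]
              exact hC
            · exact h3 r hr1 hrm
          · simp only [List.sum_append, List.sum_cons, List.sum_nil, add_zero, h4]
            omega
      have hcard : ∀ k, G m D k = ((hfinA k).toFinset.image (· ++ [E])).card := by
        intro k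
        rw [Finset.card_image_of_injective _ hinj,
          ← Set.ncard_eq_toFinset_card _ (hfinA k)]
        rfl
      have hdisj : ∀ x ∈ Finset.Icc lo E, ∀ y ∈ Finset.Icc lo E, x ≠ y →
          Disjoint ((hfinA x).toFinset.image (· ++ [E]))
            ((hfinA y).toFinset.image (· ++ [E])) := by
        intro x _ y _ hxy
        rw [Finset.disjoint_left]
        rintro l hlx hly
        simp only [Finset.mem_image, Set.Finite.mem_toFinset] at hlx hly
        obtain ⟨a, ha, rfl⟩ := hlx
        obtain ⟨b, hb, hba⟩ := hly
        have hab : b = a := hinj hba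
        subst hab
        have h1 : b.getLast? = some x := ha.2.2.2.2
        have h2 : b.getLast? = some y := hb.2.2.2.2
        rw [h1] at h2
        exact hxy (Option.some.inj h2)
      calc G n T E = F.card := by rw [G, hSF, Set.ncard_coe_finset]
        _ = ∑ k ∈ Finset.Icc lo E, ((hfinA k).toFinset.image (· ++ [E])).card :=
            Finset.card_biUnion hdisj
        _ = ∑ k ∈ Finset.Icc lo E, G m D k := by
            exact Finset.sum_congr rfl (fun k _ => (hcard k).symm)
    · -- negative case
      have hset : {l : List ℕ | l.length = n ∧ l.Pairwise (· ≤ ·) ∧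
          (∀ r, 1 ≤ r → r < n → r.choose 2 < (l.take r).sum) ∧
          l.sum = T ∧ l.getLast? = some E} = ∅ := by
        rw [Set.eq_empty_iff_forall_notMem]
        rintro l ⟨h1, h2, h3, h4, h5⟩
        have hne : l ≠ [] := List.ne_nil_of_length_pos (by omega)
        have hE : l.getLast hne = E := by
          rw [List.getLast?_eq_getLast hne] at h5; exact Option.some.inj h5
        have hl : l.dropLast ++ [E] = l := by
          rw [← hE]; exact List.dropLast_append_getLast hne
        have hsum' : l.dropLast.sum + E = T := by
          have := congrArg List.sum hl
          simp only [List.sum_append, List.sum_cons, List.sum_nil, add_zero, h4] at this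
          exact this
        have hcond := h3 m hm1 (by omega)
        rw [← hl, List.take_append_of_le_length
          (by rw [List.length_dropLast, h1])] at hcond
        rw [List.take_of_length_le
          (le_of_eq (by rw [List.length_dropLast, h1]))] at hcond
        apply h
        have : ((m.choose 2 : ℕ) : ℤ) < (l.dropLast.sum : ℤ) := by exact_mod_cast hcond
        omega
      simp only [G, hset, Set.ncard_empty]
end

section
/- For every n ≥ 1, SS(n) = S(n) - ∑_{i=1}^{n-1} SS(i)·S(n-i), where the convention S(0) = 1 is used. -/
/-- A strong score sequence of length `n`: nondecreasing, partial sums `> C(r,2)` for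
`1 ≤ r < n`, and total sum `C(n,2)`. -/
def IsStrongScoreSeq (l : List ℕ) : Prop :=
  l.Pairwise (· ≤ ·) ∧
  (∀ r, 1 ≤ r → r < l.length → r.choose 2 < (l.take r).sum) ∧
  l.sum = l.length.choose 2

/-- `SS n` is the number of distinct strong score sequences of length `n`. -/
noncomputable def SS (n : ℕ) : ℕ :=
  {l : List ℕ | l.length = n ∧ IsStrongScoreSeq l}.ncard


open Finset

lemma card_pairs {α : Type*} [DecidableEq α] (A : Finset α) (R : α → α → Bool)
    (hR : ∀ v ∈ A, ∀ w ∈ A, v ≠ w → R v w = !R w v) (hirr : ∀ v, R v v = false) :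
    ((A ×ˢ A).filter fun p => R p.1 p.2 = true).card = A.card.choose 2 := by
  set D := (A ×ˢ A).filter fun p => R p.1 p.2 = true with hD
  have hunion : A.offDiag = D ∪ D.image Prod.swap := by
    ext ⟨v, w⟩
    simp only [mem_offDiag, mem_union, mem_image, hD, mem_filter, mem_product]
    constructor
    · rintro ⟨h1, h2, h3⟩
      have h4 := hR v h1 w h2 h3
      cases h : R v w with
      | true => exact Or.inl ⟨⟨h1, h2⟩, rfl⟩
      | false =>
        right
        refine ⟨(w, v), ⟨⟨h2, h1⟩, ?_⟩, rfl⟩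
        rw [h] at h4
        simpa using h4.symm
    · rintro (⟨⟨h1, h2⟩, h3⟩ | ⟨⟨a, b⟩, ⟨⟨h1, h2⟩, h3⟩, hq⟩)
      · refine ⟨h1, h2, fun h => ?_⟩
        subst h; rw [hirr] at h3; simp at h3
      · simp only [Prod.swap_prod_mk, Prod.mk.injEq] at hq
        obtain ⟨rfl, rfl⟩ := hq
        refine ⟨h2, h1, fun h => ?_⟩
        subst h; rw [hirr] at h3; simp at h3
  have hdisj : Disjoint D (D.image Prod.swap) := by
    rw [disjoint_left]
    intro p hp hq
    obtain ⟨q, hq1, hq2⟩ := mem_image.1 hq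
    have hpD := mem_filter.1 hp
    have hqD := mem_filter.1 hq1
    have hp1 := (mem_product.1 hpD.1).1
    have hp2 := (mem_product.1 hpD.1).2
    have hpR := hpD.2
    have hne : p.1 ≠ p.2 := by
      intro h
      rw [h, hirr] at hpR; simp at hpR
    have e1 : q.1 = p.2 := by rw [← hq2]; rfl
    have e2 : q.2 = p.1 := by rw [← hq2]; rfl
    have h5 : R p.2 p.1 = true := by rw [← e1, ← e2]; exact hqD.2
    have h4 := hR p.1 hp1 p.2 hp2 hne
    rw [hpR, h5] at h4
    simp at h4
  have hcards : A.offDiag.card = 2 * D.card := by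
    rw [hunion, card_union_of_disjoint hdisj, card_image_of_injective _ Prod.swap_injective]
    ring
  have h2 : A.card * A.card - A.card = 2 * D.card := by rw [← offDiag_card, hcards]
  have h3 : A.card * (A.card - 1) = A.card * A.card - A.card := by
    rw [Nat.mul_sub, mul_one]
  rw [Nat.choose_two_right]
  omega

lemma card_pairs_fst {α : Type*} [DecidableEq α] (A : Finset α) (R : α → α → Bool) :
    ((A ×ˢ A).filter fun p => R p.1 p.2 = true).card
      = ∑ v ∈ A, (A.filter fun w => R v w = true).card := by
  rw [Finset.card_eq_sum_card_fiberwise (f := Prod.fst) (t := A)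
    (fun p hp => (mem_product.1 (mem_filter.1 hp).1).1)]
  refine Finset.sum_congr rfl fun v hv => ?_
  apply Finset.card_nbij' (i := Prod.snd) (j := fun w => (v, w))
  · rintro ⟨a, b⟩ hp
    simp only [mem_coe, mem_filter, mem_product] at hp ⊢
    obtain ⟨⟨⟨_, h2⟩, h3⟩, h4⟩ := hp
    subst h4; exact ⟨h2, h3⟩
  · intro w hw
    simp only [mem_coe, mem_filter, mem_product] at hw ⊢
    exact ⟨⟨⟨hv, hw.1⟩, hw.2⟩, trivial⟩
  · rintro ⟨a, b⟩ hp
    simp only [mem_coe, mem_filter] at hp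
    simp [hp.2]
  · intro w hw; rfl

lemma Multiset.exists_map_eq_of_le_map {α β : Type*} {f : α → β} {s : Multiset α}
    {u : Multiset β} (h : u ≤ s.map f) : ∃ t, t ≤ s ∧ t.map f = u := by
  revert h
  refine Quotient.inductionOn₂ s u fun ls lu h => ?_
  simp only [Multiset.quot_mk_to_coe, Multiset.quot_mk_to_coe', Multiset.quot_mk_to_coe''] at h ⊢
  rw [Multiset.map_coe, Multiset.coe_le] at h
  obtain ⟨l, hperm, hsub⟩ := h
  obtain ⟨l', hsub', rfl⟩ := List.sublist_map_iff.mp hsub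
  exact ⟨↑l', Multiset.coe_le.2 hsub'.subperm,
    by rw [Multiset.map_coe]; exact Quot.sound hperm⟩

lemma list_sum_eq_sum_get (l : List ℕ) : l.sum = ∑ i : Fin l.length, l.get i := by
  conv_lhs => rw [← List.ofFn_get l]
  rw [List.sum_ofFn]

lemma strictMono_fin_le {r n : ℕ} {g : Fin r → Fin n} (hg : StrictMono g) (i : Fin r) :
    (i : ℕ) ≤ g i := by
  obtain ⟨iv, hiv⟩ := i
  induction iv with
  | zero => exact Nat.zero_le _
  | succ k ih =>
    have hk : k < r := Nat.lt_of_succ_lt hiv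
    have h1 : (k : ℕ) ≤ (g ⟨k, hk⟩ : ℕ) := ih hk
    have h2 : g ⟨k, hk⟩ < g ⟨k + 1, hiv⟩ := hg (by simp [Fin.lt_def])
    rw [Fin.lt_def] at h2
    show k + 1 ≤ _
    omega

lemma take_eq_ofFn (l : List ℕ) (r : ℕ) (hr : r ≤ l.length) :
    l.take r = List.ofFn (fun i : Fin r => l.get ⟨i, lt_of_lt_of_le i.isLt hr⟩) := by
  apply List.ext_getElem
  · simp [Nat.min_eq_left hr]
  · intro i h1 h2
    simp [List.getElem_take]

lemma take_sum_eq_s8 (l : List ℕ) (r : ℕ) (hr : r ≤ l.length) :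
    (l.take r).sum = ∑ i : Fin r, l.get ⟨i, lt_of_lt_of_le i.isLt hr⟩ := by
  rw [take_eq_ofFn l r hr, List.sum_ofFn]

lemma take_sum_le_sum_finset {n r : ℕ} {l : List ℕ} (hl : l.length = n)
    (hsort : l.Pairwise (· ≤ ·)) (A : Finset (Fin n)) (hA : A.card = r)
    (f : Fin n → ℕ) (hf : ∀ v, l.get (Fin.cast hl.symm v) ≤ f v) :
    (l.take r).sum ≤ ∑ v ∈ A, f v := by
  have hr : r ≤ n := hA ▸ (le_trans (card_le_card (subset_univ A)) (by simp))
  set e := A.orderEmbOfFin hA with he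
  have himg : Finset.univ.image e = A := by
    apply Finset.coe_injective
    rw [coe_image, coe_univ, Set.image_univ]
    exact A.range_orderEmbOfFin hA
  have hsum : ∑ v ∈ A, f v = ∑ i : Fin r, f (e i) := by
    rw [← himg, Finset.sum_image (fun x _ y _ h => e.injective h)]
  rw [hsum, take_sum_eq_s8 l r (hl ▸ hr)]
  refine Finset.sum_le_sum fun i _ => ?_
  refine le_trans ?_ (hf (e i))
  have hmono : (i : ℕ) ≤ (e i : ℕ) := strictMono_fin_le e.strictMono i
  exact List.Pairwise.rel_get_of_le hsort (by simp [Fin.le_def, hmono])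

def Landau (n : ℕ) (l : List ℕ) : Prop :=
  l.length = n ∧ l.Pairwise (· ≤ ·) ∧ (∀ r, r ≤ n → r.choose 2 ≤ (l.take r).sum) ∧
    l.sum = n.choose 2

namespace Tournament
variable {n : ℕ} (T : Tournament n)

lemma sum_score_finset (A : Finset (Fin n)) :
    A.card.choose 2 ≤ ∑ v ∈ A, T.score v := by
  rw [← card_pairs A T.dom (fun v _ w _ h => T.asymm v w h) T.irrefl, card_pairs_fst]
  refine Finset.sum_le_sum fun v _ => ?_
  exact card_le_card (filter_subset_filter _ (subset_univ A))

lemma sum_score_univ : ∑ v : Fin n, T.score v = n.choose 2 := by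
  have h := card_pairs (univ : Finset (Fin n)) T.dom
    (fun v _ w _ h => T.asymm v w h) T.irrefl
  rw [card_pairs_fst] at h
  simpa [Tournament.score] using h

lemma scoreList_coe : (T.scoreList : Multiset ℕ) = Multiset.map T.score Finset.univ.val :=
  Multiset.sort_eq _ _

lemma scoreList_length : T.scoreList.length = n := by
  have : (T.scoreList : Multiset ℕ).card = n := by
    rw [scoreList_coe]; simp
  simpa using this

lemma scoreList_sorted : T.scoreList.Pairwise (· ≤ ·) :=
  Multiset.pairwise_sort _ _

lemma scoreList_sum : T.scoreList.sum = n.choose 2 := by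
  have : (T.scoreList : Multiset ℕ).sum = n.choose 2 := by
    rw [scoreList_coe]
    rw [← Finset.sum_eq_multiset_sum]
    exact T.sum_score_univ
  simpa using this

lemma scoreList_take (r : ℕ) (hr : r ≤ n) :
    r.choose 2 ≤ (T.scoreList.take r).sum := by
  have hsub : ((T.scoreList.take r : List ℕ) : Multiset ℕ) ≤ (T.scoreList : Multiset ℕ) :=
    Multiset.coe_le.2 (T.scoreList.take_sublist r).subperm
  rw [scoreList_coe] at hsub
  obtain ⟨t, ht, hmap⟩ := Multiset.exists_map_eq_of_le_map hsub
  have hnd : t.Nodup := Multiset.nodup_of_le ht Finset.univ.nodup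
  set A : Finset (Fin n) := ⟨t, hnd⟩ with hA
  have hcard : A.card = r := by
    have h1 : (Multiset.map T.score t).card = r := by
      rw [hmap]
      simp [T.scoreList_length, hr]
    exact (by simpa using h1 : Multiset.card t = r)
  have hsum : (T.scoreList.take r).sum = ∑ v ∈ A, T.score v := by
    rw [Finset.sum_eq_multiset_sum]
    show _ = (Multiset.map T.score t).sum
    rw [hmap]
    simp
  rw [hsum, ← hcard]
  exact T.sum_score_finset A

lemma scoreList_landau : Landau n T.scoreList :=
  ⟨T.scoreList_length, T.scoreList_sorted, fun r hr => T.scoreList_take r hr, T.scoreList_sum⟩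

end Tournament

section Realize

variable (l : List ℕ)

/-- The edge type -/
abbrev EdgeT (n : ℕ) := {p : Fin n × Fin n // p.1 < p.2}

lemma lt_pairs_card {n : ℕ} (A : Finset (Fin n)) :
    ((A ×ˢ A).filter fun p => decide (p.1 < p.2) = true).card = A.card.choose 2 := by
  refine card_pairs A (fun v w => decide (v < w)) ?_ ?_
  · intro v _ w _ hne
    rcases lt_or_gt_of_ne hne with h | h
    · simp [h, asymm h]
    · simp [h, asymm h, not_lt_of_gt h]
  · intro v; simp

theorem landau_realizable (hL : Landau l.length l) :
    ∃ T : Tournament l.length, T.scoreList = l := by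
  classical
  set n := l.length with hn
  set s : Fin n → ℕ := fun v => l.get v with hs
  -- sum bound over any finset
  have hsumA : ∀ A : Finset (Fin n), A.card.choose 2 ≤ ∑ v ∈ A, s v := by
    intro A
    refine le_trans (hL.2.2.1 A.card (A.card_le_univ.trans (by simp))) ?_
    exact take_sum_le_sum_finset rfl hL.2.1 A rfl s (fun v => le_refl _)
  -- slots
  set slots : EdgeT n → Finset (Fin n × ℕ) := fun e =>
    ((Finset.range (s e.1.1)).image fun j => (e.1.1, j)) ∪
    ((Finset.range (s e.1.2)).image fun j => (e.1.2, j)) with hslots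
  have slotv_card : ∀ v : Fin n, ((Finset.range (s v)).image fun j => ((v, j) : Fin n × ℕ)).card
      = s v := by
    intro v
    rw [Finset.card_image_of_injective _ (fun a b h => (Prod.mk.injEq _ _ _ _ ▸ h).2)]
    simp
  -- Hall condition
  have hall : ∀ E : Finset (EdgeT n), E.card ≤ (E.biUnion slots).card := by
    intro E
    set A : Finset (Fin n) := E.image (fun e => e.1.1) ∪ E.image (fun e => e.1.2) with hA
    have hbi : E.biUnion slots = A.biUnion (fun v => (Finset.range (s v)).image fun j => (v, j)) := by
      ext x
      simp only [mem_biUnion, hslots, mem_union, mem_image, hA]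
      constructor
      · rintro ⟨e, he, hx⟩
        rcases hx with ⟨j, hj, rfl⟩ | ⟨j, hj, rfl⟩
        · exact ⟨e.1.1, Or.inl ⟨e, he, rfl⟩, j, hj, rfl⟩
        · exact ⟨e.1.2, Or.inr ⟨e, he, rfl⟩, j, hj, rfl⟩
      · rintro ⟨v, hv, j, hj, rfl⟩
        rcases hv with ⟨e, he, hev⟩ | ⟨e, he, hev⟩
        · exact ⟨e, he, Or.inl ⟨j, by rw [hev]; exact ⟨hj, rfl⟩⟩⟩
        · exact ⟨e, he, Or.inr ⟨j, by rw [hev]; exact ⟨hj, rfl⟩⟩⟩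
    have hdisj : (A : Set (Fin n)).PairwiseDisjoint
        (fun v => (Finset.range (s v)).image fun j => ((v, j) : Fin n × ℕ)) := by
      intro v _ w _ hvw
      simp only [Finset.disjoint_left]
      rintro ⟨a, b⟩ hx hy
      simp only [mem_image, Prod.mk.injEq] at hx hy
      obtain ⟨j, _, rfl, _⟩ := hx
      obtain ⟨k, _, h1, _⟩ := hy
      exact hvw h1.symm
    have hcard : (A.biUnion (fun v => (Finset.range (s v)).image fun j => ((v, j) : Fin n × ℕ))).card
        = ∑ v ∈ A, s v := by
      rw [Finset.card_biUnion (fun v hv w hw hvw => hdisj hv hw hvw)]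
      exact Finset.sum_congr rfl fun v _ => slotv_card v
    -- E.card ≤ choose
    have hEcard : E.card ≤ A.card.choose 2 := by
      rw [← lt_pairs_card A]
      have : E.card = (E.image Subtype.val).card :=
        (Finset.card_image_of_injective _ Subtype.val_injective).symm
      rw [this]
      apply Finset.card_le_card
      intro p hp
      obtain ⟨e, he, rfl⟩ := mem_image.1 hp
      simp only [mem_filter, mem_product, hA, mem_union, mem_image]
      exact ⟨⟨Or.inl ⟨e, he, rfl⟩, Or.inr ⟨e, he, rfl⟩⟩, by simpa using e.2⟩
    calc E.card ≤ A.card.choose 2 := hEcard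
      _ ≤ ∑ v ∈ A, s v := hsumA A
      _ = _ := by rw [← hcard, hbi]
  obtain ⟨f, hfinj, hfmem⟩ := (Finset.all_card_le_biUnion_card_iff_exists_injective slots).1 hall
  -- owner facts
  have howner : ∀ e : EdgeT n, ((f e).1 = e.1.1 ∧ (f e).2 < s e.1.1) ∨
      ((f e).1 = e.1.2 ∧ (f e).2 < s e.1.2) := by
    intro e
    have := hfmem e
    simp only [hslots, mem_union, mem_image, mem_range] at this
    rcases this with ⟨j, hj, hx⟩ | ⟨j, hj, hx⟩
    · left; rw [← hx]; exact ⟨rfl, hj⟩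
    · right; rw [← hx]; exact ⟨rfl, hj⟩

  -- define the tournament
  set domf : Fin n → Fin n → Bool := fun v w =>
    if h : v < w then decide ((f ⟨(v,w),h⟩).1 = v)
    else if h' : w < v then decide ((f ⟨(w,v),h'⟩).1 = v) else false with hdomf
  have hown2 : ∀ e : EdgeT n, (f e).1 = e.1.1 ∨ (f e).1 = e.1.2 :=
    fun e => (howner e).imp And.left And.left
  have hirr : ∀ v, domf v v = false := by
    intro v
    simp only [hdomf, dif_neg (lt_irrefl v)]
  have hasy : ∀ v w : Fin n, v ≠ w → domf v w = !domf w v := by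
    intro v w hne
    rcases lt_or_gt_of_ne hne with h | h
    · simp only [hdomf, dif_pos h, dif_neg (asymm h)]
      rcases hown2 ⟨(v,w), h⟩ with ho | ho <;>
        simp_all [ho, hne, Ne.symm hne]
    · simp only [hdomf, dif_pos h, dif_neg (asymm h)]
      rcases hown2 ⟨(w,v), h⟩ with ho | ho <;>
        simp_all [ho, hne, Ne.symm hne]
  set T : Tournament n := ⟨domf, hirr, hasy⟩ with hT
  have hdomT : T.dom = domf := rfl
  -- owner is v whenever v dominates w
  have hownv : ∀ v w : Fin n, ∀ h : v < w, domf v w = true → (f ⟨(v,w),h⟩).1 = v := by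
    intro v w h hd
    simp only [hdomf, dif_pos h] at hd
    exact of_decide_eq_true hd
  have hownv' : ∀ v w : Fin n, ∀ h : w < v, domf v w = true → (f ⟨(w,v),h⟩).1 = v := by
    intro v w h hd
    simp only [hdomf, dif_neg (asymm h), dif_pos h] at hd
    exact of_decide_eq_true hd
  have hsnd : ∀ (e : EdgeT n) (v : Fin n), (f e).1 = v → (f e).2 < s v := by
    intro e v hv
    rcases howner e with ⟨h1, h2⟩ | ⟨h1, h2⟩ <;> (rw [← hv, h1]; exact h2)
  -- score bound
  have hle : ∀ v : Fin n, T.score v ≤ s v := by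
    intro v
    have : s v = (Finset.range (s v)).card := by simp
    rw [this, Tournament.score]
    apply Finset.card_le_card_of_injOn
      (fun w => if h : v < w then (f ⟨(v,w),h⟩).2 else
        if h' : w < v then (f ⟨(w,v),h'⟩).2 else 0)
    · intro w hw
      rw [mem_coe, mem_filter, hdomT] at hw
      have hd := hw.2
      rcases lt_trichotomy v w with h | h | h
      · simp only [dif_pos h, mem_coe, mem_range]
        exact hsnd _ v (hownv v w h hd)
      · exfalso; rw [← h, hirr] at hd; simp at hd
      · simp only [dif_neg (asymm h), dif_pos h, mem_coe, mem_range]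
        exact hsnd _ v (hownv' v w h hd)
    · intro w hw w' hw' hgw
      rw [Finset.coe_filter, Set.mem_setOf] at hw hw'
      have hd := hw.2; have hd' := hw'.2
      rw [hdomT] at hd hd'
      rcases lt_trichotomy v w with h | h | h
      · rcases lt_trichotomy v w' with h' | h' | h'
        · simp only [dif_pos h, dif_pos h'] at hgw
          have he : f ⟨(v,w),h⟩ = f ⟨(v,w'),h'⟩ :=
            Prod.ext (by rw [hownv v w h hd, hownv v w' h' hd']) hgw
          have := hfinj he
          simpa using congrArg (fun e : EdgeT n => e.1.2) this
        · exfalso; rw [← h', hirr] at hd'; simp at hd'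
        · simp only [dif_pos h, dif_neg (asymm h'), dif_pos h'] at hgw
          have he : f ⟨(v,w),h⟩ = f ⟨(w',v),h'⟩ :=
            Prod.ext (by rw [hownv v w h hd, hownv' v w' h' hd']) hgw
          have := congrArg (fun e : EdgeT n => e.1.1) (hfinj he)
          simp at this
          exact absurd this (ne_of_gt h')
      · exfalso; rw [← h, hirr] at hd; simp at hd
      · rcases lt_trichotomy v w' with h' | h' | h'
        · simp only [dif_neg (asymm h), dif_pos h, dif_pos h'] at hgw
          have he : f ⟨(w,v),h⟩ = f ⟨(v,w'),h'⟩ :=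
            Prod.ext (by rw [hownv' v w h hd, hownv v w' h' hd']) hgw
          have := congrArg (fun e : EdgeT n => e.1.1) (hfinj he)
          simp at this
          exact absurd this.symm (ne_of_gt h)
        · exfalso; rw [← h', hirr] at hd'; simp at hd'
        · simp only [dif_neg (asymm h), dif_pos h, dif_neg (asymm h'), dif_pos h'] at hgw
          have he : f ⟨(w,v),h⟩ = f ⟨(w',v),h'⟩ :=
            Prod.ext (by rw [hownv' v w h hd, hownv' v w' h' hd']) hgw
          have := hfinj he
          simpa using congrArg (fun e : EdgeT n => e.1.1) this
  -- sum of s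
  have hsum_s : ∑ v : Fin n, s v = n.choose 2 := by
    rw [← hL.2.2.2, list_sum_eq_sum_get]
  have hsum_eq : ∑ v : Fin n, T.score v = ∑ v : Fin n, s v := by
    rw [Tournament.sum_score_univ, hsum_s]
  have heq : ∀ v : Fin n, T.score v = s v := by
    intro v
    by_contra hne
    have hlt : T.score v < s v := lt_of_le_of_ne (hle v) hne
    have := Finset.sum_lt_sum (fun i (_ : i ∈ univ) => hle i) ⟨v, mem_univ v, hlt⟩
    exact absurd hsum_eq (ne_of_lt this)
  refine ⟨T, ?_⟩
  have hmap : Multiset.map T.score Finset.univ.val = (l : Multiset ℕ) := by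
    have h1 : Multiset.map T.score Finset.univ.val = Multiset.map s Finset.univ.val :=
      Multiset.map_congr rfl (fun v _ => heq v)
    rw [h1]
    have h2 : (Finset.univ.val : Multiset (Fin n)) = (List.finRange n : Multiset (Fin n)) := rfl
    rw [h2, Multiset.map_coe]
    congr 1
    rw [← List.ofFn_eq_map]
    exact List.ofFn_get l
  show Multiset.sort (Multiset.map T.score Finset.univ.val) (· ≤ ·) = l
  rw [hmap]
  have hperm : List.Perm (Multiset.sort (l : Multiset ℕ) (· ≤ ·)) l :=
    Multiset.coe_eq_coe.1 (Multiset.sort_eq _ _)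
  exact List.Perm.eq_of_pairwise' (Multiset.pairwise_sort _ _) hL.2.1 hperm

end Realize

lemma succ_choose_two (m : ℕ) : (m + 1).choose 2 = m.choose 2 + m := by
  rw [show (2:ℕ) = 1 + 1 from rfl, Nat.choose_succ_succ]
  simp [Nat.choose_one_right]; omega

lemma choose_two_split (i r : ℕ) : (i + r).choose 2 = i.choose 2 + i * r + r.choose 2 := by
  induction r with
  | zero => simp
  | succ k ih =>
    rw [← Nat.add_assoc, succ_choose_two (i + k), succ_choose_two k, ih, Nat.mul_succ]
    omega

lemma map_sub_sum (m : List ℕ) (i : ℕ) (h : ∀ x ∈ m, i ≤ x) :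
    m.sum = (m.map (· - i)).sum + m.length * i := by
  induction m with
  | nil => simp
  | cons x t ih =>
    have hx := h x List.mem_cons_self
    have ht := ih (fun y hy => h y (List.mem_cons_of_mem x hy))
    simp only [List.map_cons, List.sum_cons, List.length_cons, Nat.succ_mul]
    omega

lemma map_add_sum (m : List ℕ) (i : ℕ) :
    (m.map (· + i)).sum = m.sum + m.length * i := by
  induction m with
  | nil => simp
  | cons x t ih =>
    simp only [List.map_cons, List.sum_cons, List.length_cons, ih, Nat.succ_mul]
    omega

lemma sorted_map_sub {m : List ℕ} (i : ℕ) (h : m.Pairwise (· ≤ ·)) :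
    (m.map (· - i)).Pairwise (· ≤ ·) :=
  List.Pairwise.map _ (fun _ _ hab => Nat.sub_le_sub_right hab i) h

lemma sorted_map_add {m : List ℕ} (i : ℕ) (h : m.Pairwise (· ≤ ·)) :
    (m.map (· + i)).Pairwise (· ≤ ·) :=
  List.Pairwise.map _ (fun _ _ hab => Nat.add_le_add_right hab i) h

lemma drop_ge {n i : ℕ} {l : List ℕ} (hL : Landau n l) (hin : i ≤ n)
    (heq : (l.take i).sum = i.choose 2) : ∀ x ∈ l.drop i, i ≤ x := by
  intro x hx
  obtain ⟨k, hk⟩ := List.mem_iff_get.1 hx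
  have hkl : i + (k : ℕ) < l.length := by
    have := k.isLt
    simp only [List.length_drop] at this
    omega
  have hxk : x = l.get ⟨i + k, hkl⟩ := by
    rw [← hk]; simp [List.getElem_drop]
  have hii : i < l.length := by omega
  have h1 : l.get ⟨i, hii⟩ ≤ l.get ⟨i + k, hkl⟩ :=
    List.Pairwise.rel_get_of_le hL.2.1 (by simp)
  have h2 : (l.take (i + 1)).sum = (l.take i).sum + l.get ⟨i, hii⟩ :=
    List.sum_take_succ l i hii
  have h3 : (i + 1).choose 2 ≤ (l.take (i + 1)).sum := hL.2.2.1 (i + 1) (by rw [← hL.1]; omega)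
  rw [succ_choose_two] at h3
  rw [hxk]
  omega

/-- Forward decomposition. -/
lemma decomp_forward {n i : ℕ} {l : List ℕ} (hL : Landau n l) (hi1 : 1 ≤ i) (hin : i ≤ n)
    (heq : (l.take i).sum = i.choose 2) :
    Landau i (l.take i) ∧ Landau (n - i) ((l.drop i).map (· - i)) := by
  have hlen : l.length = n := hL.1
  constructor
  · refine ⟨by simp [hlen, hin], hL.2.1.sublist (l.take_sublist i), ?_, heq⟩
    intro r hr
    rw [List.take_take, Nat.min_eq_left hr]
    exact hL.2.2.1 r (le_trans hr hin)
  · have hge := drop_ge hL hin heq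
    have hdlen : (l.drop i).length = n - i := by rw [List.length_drop, hlen]
    refine ⟨by rw [List.length_map, hdlen], sorted_map_sub i (hL.2.1.sublist (l.drop_sublist i)), ?_, ?_⟩
    · intro r hr
      rw [← List.map_take]
      set P := (l.drop i).take r with hP
      have hPlen : P.length = r := by
        simp [hP, hdlen]; omega
      have hPsum : P.sum = (P.map (· - i)).sum + r * i := by
        rw [← hPlen]
        exact map_sub_sum P i (fun x hxn => hge x (List.Sublist.mem hxn (List.take_sublist r _)))
      have htotal : (l.take (i + r)).sum = i.choose 2 + P.sum := by
        rw [List.take_add, List.sum_append, heq]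
      have hbound : (i + r).choose 2 ≤ (l.take (i + r)).sum := hL.2.2.1 (i + r) (by omega)
      have hsplit := choose_two_split i r
      have hcomm : i * r = r * i := Nat.mul_comm i r
      omega
    · set P := l.drop i with hP
      have hPsum : P.sum = (P.map (· - i)).sum + (n - i) * i := by
        rw [← hdlen]
        exact map_sub_sum P i hge
      have htotal : l.sum = i.choose 2 + P.sum := by
        conv_lhs => rw [← List.take_append_drop i l]
        rw [List.sum_append, heq]
      have hsum := hL.2.2.2
      have hsplit := choose_two_split i (n - i)
      have hni : i + (n - i) = n := by omega
      rw [hni] at hsplit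
      have hcomm : i * (n - i) = (n - i) * i := Nat.mul_comm _ _
      omega

lemma decomp_backward {i m : ℕ} {a b : List ℕ} (ha : Landau i a) (hi1 : 1 ≤ i)
    (hstrict : ∀ r, 1 ≤ r → r < i → r.choose 2 < (a.take r).sum)
    (hb : Landau m b) :
    Landau (i + m) (a ++ b.map (· + i)) ∧
    (a ++ b.map (· + i)).take i = a ∧
    ((a ++ b.map (· + i)).drop i).map (· - i) = b ∧
    (∀ r, 1 ≤ r → r < i → r.choose 2 < ((a ++ b.map (· + i)).take r).sum) := by
  have hlena : a.length = i := ha.1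
  have hlenb : b.length = m := hb.1
  set c := b.map (· + i) with hc
  have hlenc : c.length = m := by rw [hc, List.length_map, hlenb]
  have htake_a : (a ++ c).take i = a := List.take_left' hlena
  have hdrop_c : (a ++ c).drop i = c := List.drop_left' hlena
  have ha_le : ∀ x ∈ a, x ≤ i := by
    intro x hx
    obtain ⟨k, hk⟩ := List.mem_iff_get.1 hx
    have hi1' : i - 1 < a.length := by omega
    have hkle : k ≤ (⟨i - 1, hi1'⟩ : Fin a.length) := by
      have hkl := k.isLt
      show (k : ℕ) ≤ i - 1
      omega
    have h1 : a.get k ≤ a.get ⟨i - 1, hi1'⟩ := List.Pairwise.rel_get_of_le ha.2.1 hkle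
    have h2 : (a.take (i - 1 + 1)).sum = (a.take (i - 1)).sum + a.get ⟨i - 1, hi1'⟩ :=
      List.sum_take_succ a (i - 1) hi1'
    have h3 : i - 1 + 1 = i := by omega
    rw [h3] at h2
    have h4 : a.take i = a := by rw [← hlena]; exact List.take_length
    rw [h4] at h2
    have h5 := ha.2.2.2
    have hident : (i - 1).choose 2 + (i - 1) = i.choose 2 := by
      conv_rhs => rw [← h3]
      rw [succ_choose_two]
    by_cases h6 : 2 ≤ i
    · have h7 := hstrict (i - 1) (by omega) (by omega)
      rw [← hk]; omega
    · have h8 : i = 1 := by omega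
      have h9 : (a.take (i - 1)).sum = 0 := by rw [show i - 1 = 0 by omega]; simp
      rw [← hk]
      have h10 : i.choose 2 = 0 := by rw [h8]; decide
      omega
  have hc_ge : ∀ y ∈ c, i ≤ y := by
    intro y hy
    obtain ⟨z, _, rfl⟩ := List.mem_map.1 hy
    omega
  have hsorted : (a ++ c).Pairwise (· ≤ ·) :=
    List.pairwise_append.2 ⟨ha.2.1, sorted_map_add i hb.2.1,
      fun x hx y hy => le_trans (ha_le x hx) (hc_ge y hy)⟩
  have htake : ∀ r, r ≤ i + m → ((a ++ c).take r).sum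
      = (a.take r).sum + ((b.take (r - i)).sum + (r - i) * i) := by
    intro r hr
    rw [List.take_append, List.sum_append, hlena]
    congr 1
    rw [hc, ← List.map_take, map_add_sum, List.length_take, hlenb,
      Nat.min_eq_left (by omega : r - i ≤ m)]
  have hsum_ac : (a ++ c).sum = (i + m).choose 2 := by
    rw [List.sum_append, ha.2.2.2, hc, map_add_sum, hlenb, hb.2.2.2, choose_two_split]
    ring
  refine ⟨⟨by simp [hlena, hlenc], hsorted, ?_, hsum_ac⟩, htake_a, ?_, ?_⟩
  · intro r hr
    rw [htake r hr]
    by_cases hri : r ≤ i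
    · have h0 : r - i = 0 := by omega
      rw [h0]
      simp only [List.take_zero, List.sum_nil, Nat.zero_mul, Nat.add_zero]
      exact ha.2.2.1 r hri
    · have hta : a.take r = a := List.take_of_length_le (by omega)
      rw [hta, ha.2.2.2]
      have hbb := hb.2.2.1 (r - i) (by omega)
      have hsplit := choose_two_split i (r - i)
      have hir : i + (r - i) = r := by omega
      rw [hir] at hsplit
      have hcomm : i * (r - i) = (r - i) * i := Nat.mul_comm _ _
      omega
  · rw [hdrop_c, hc, List.map_map]
    have : ((fun x => x - i) ∘ fun x => x + i) = id := by
      funext x; simp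
    rw [this, List.map_id]
  · intro r h1r hri
    have h2 : ((a ++ c).take r).sum = (a.take r).sum := by
      rw [htake r (by omega), show r - i = 0 by omega]
      simp
    rw [h2]
    exact hstrict r h1r hri

def LSet (n : ℕ) : Set (List ℕ) := {l | Landau n l}
def SSet' (n : ℕ) : Set (List ℕ) :=
  {l | Landau n l ∧ ∀ r, 1 ≤ r → r < n → r.choose 2 < (l.take r).sum}
def ASet (n i : ℕ) : Set (List ℕ) :=
  {l | Landau n l ∧ (l.take i).sum = i.choose 2 ∧
    ∀ r, 1 ≤ r → r < i → (l.take r).sum ≠ r.choose 2}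

lemma Set.ncard_prod' {α β : Type*} (s : Set α) (t : Set β) :
    (s ×ˢ t).ncard = s.ncard * t.ncard := by
  rw [← Nat.card_coe_set_eq, ← Nat.card_coe_set_eq, ← Nat.card_coe_set_eq,
    Nat.card_congr (Equiv.Set.prod s t), Nat.card_prod]

lemma fin_LSet (n : ℕ) : (LSet n).Finite := by
  have h : LSet n ⊆ Set.range
      (fun f : Fin n → Fin (n.choose 2 + 1) => List.ofFn (fun i => (f i : ℕ))) := by
    intro l hl
    have hlen : l.length = n := hl.1
    have hbd : ∀ x ∈ l, x ≤ n.choose 2 := by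
      intro x hx
      calc x ≤ l.sum := List.single_le_sum (fun _ _ => Nat.zero_le _) x hx
      _ = n.choose 2 := hl.2.2.2
    refine ⟨fun i => ⟨l.get (Fin.cast hlen.symm i), ?_⟩, ?_⟩
    · have h2 := hbd (l.get (Fin.cast hlen.symm i)) (l.get_mem _)
      omega
    · apply List.ext_getElem
      · simp [hlen]
      · intro j h1 h2
        simp [List.getElem_ofFn]
  exact (Set.finite_range _).subset h

lemma LSet_zero : LSet 0 = {([] : List ℕ)} := by
  ext l
  simp only [LSet, Set.mem_setOf_eq, Set.mem_singleton_iff]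
  constructor
  · intro hl
    exact List.length_eq_zero_iff.1 hl.1
  · rintro rfl
    refine ⟨rfl, List.Pairwise.nil, ?_, rfl⟩
    intro r hr
    interval_cases r
    simp

lemma ncard_ASet {n i : ℕ} (h1 : 1 ≤ i) (h2 : i ≤ n) :
    (ASet n i).ncard = (SSet' i).ncard * (LSet (n - i)).ncard := by
  classical
  set Φ : List ℕ → List ℕ × List ℕ := fun l => (l.take i, (l.drop i).map (· - i)) with hΦ
  have himg : Φ '' (ASet n i) = (SSet' i) ×ˢ (LSet (n - i)) := by
    ext p
    simp only [Set.mem_image, Set.mem_prod]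
    constructor
    · rintro ⟨l, hl, rfl⟩
      obtain ⟨hLa, hLb⟩ := decomp_forward hl.1 h1 h2 hl.2.1
      refine ⟨⟨hLa, ?_⟩, hLb⟩
      intro r h1r hri
      have hTT : ((l.take i).take r).sum = (l.take r).sum := by
        rw [List.take_take, Nat.min_eq_left (le_of_lt hri)]
      show r.choose 2 < ((l.take i).take r).sum
      rw [hTT]
      exact lt_of_le_of_ne (hl.1.2.2.1 r (by omega)) (Ne.symm (hl.2.2 r h1r hri))
    · obtain ⟨a, b⟩ := p
      rintro ⟨⟨ha, hstr⟩, hb⟩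
      obtain ⟨hLl, ht, hd, hlt⟩ := decomp_backward ha h1 hstr hb
      refine ⟨a ++ b.map (· + i), ⟨?_, ?_, ?_⟩, ?_⟩
      · rw [show i + (n - i) = n from by omega] at hLl; exact hLl
      · rw [ht, ha.2.2.2]
      · intro r h1r hri
        exact (hlt r h1r hri).ne'
      · show (_, _) = (a, b)
        rw [ht, hd]
  have hinj : Set.InjOn Φ (ASet n i) := by
    have hrec : ∀ lx ∈ ASet n i, lx = (Φ lx).1 ++ ((Φ lx).2).map (· + i) := by
      intro lx hlx
      simp only [hΦ, List.map_map]
      have hge := drop_ge hlx.1 h2 hlx.2.1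
      have hmm : (lx.drop i).map ((fun x => x + i) ∘ fun x => x - i) = lx.drop i := by
        rw [List.map_congr_left (fun x hx => by
          simp only [Function.comp_apply]
          exact Nat.sub_add_cancel (hge x hx))]
        exact List.map_id' _
      rw [hmm, List.take_append_drop]
    intro l hl l' hl' heq
    rw [hrec l hl, hrec l' hl', heq]
  rw [← Set.ncard_image_of_injOn hinj, himg, Set.ncard_prod']


lemma S_eq_s8 (n : ℕ) : S n = (LSet n).ncard := by
  unfold S
  congr 1
  ext l
  simp only [Set.mem_setOf_eq]
  constructor
  · rintro ⟨T, rfl⟩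
    exact T.scoreList_landau
  · intro hL
    have hlen : l.length = n := hL.1
    subst hlen
    exact landau_realizable l hL

lemma SS_eq (n : ℕ) : SS n = (SSet' n).ncard := by
  unfold SS
  congr 1
  ext l
  simp only [Set.mem_setOf_eq, SSet', IsStrongScoreSeq]
  constructor
  · rintro ⟨hlen, hsort, hstrict, hsum⟩
    subst hlen
    refine ⟨⟨rfl, hsort, ?_, hsum⟩, hstrict⟩
    intro r hr
    rcases Nat.eq_zero_or_pos r with rfl | hr1
    · simp
    rcases eq_or_lt_of_le hr with rfl | hlt
    · rw [List.take_of_length_le (le_refl _), hsum]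
    · exact le_of_lt (hstrict r hr1 hlt)
  · rintro ⟨⟨hlen, hsort, _, hsum⟩, hstrict⟩
    subst hlen
    exact ⟨rfl, hsort, hstrict, hsum⟩

lemma S_zero : S 0 = 1 := by rw [S_eq_s8, LSet_zero]; simp

lemma S_rec (n : ℕ) (hn : 1 ≤ n) : S n = ∑ i ∈ Finset.Icc 1 n, SS i * S (n - i) := by
  classical
  have hfinA : ∀ i, (ASet n i).Finite := fun i => (fin_LSet n).subset (fun l hl => hl.1)
  have hpart : (fin_LSet n).toFinset = (Finset.Icc 1 n).biUnion (fun i => (hfinA i).toFinset) := by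
    ext l
    simp only [Set.Finite.mem_toFinset, Finset.mem_biUnion, Finset.mem_Icc]
    constructor
    · intro hl
      set E := (Finset.Icc 1 n).filter (fun r => (l.take r).sum = r.choose 2) with hE
      have hnE : n ∈ E := by
        simp only [hE, Finset.mem_filter, Finset.mem_Icc]
        refine ⟨⟨hn, le_refl n⟩, ?_⟩
        rw [List.take_of_length_le (le_of_eq hl.1)]
        exact hl.2.2.2
      have hne : E.Nonempty := ⟨n, hnE⟩
      set i := E.min' hne with hi
      have hiE : i ∈ E := E.min'_mem hne
      simp only [hE, Finset.mem_filter, Finset.mem_Icc] at hiE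
      refine ⟨i, ⟨hiE.1.1, hiE.1.2⟩, hl, hiE.2, ?_⟩
      intro r h1r hri heqr
      have hrE : r ∈ E := by
        simp only [hE, Finset.mem_filter, Finset.mem_Icc]
        exact ⟨⟨h1r, le_trans (le_of_lt hri) hiE.1.2⟩, heqr⟩
      have := E.min'_le r hrE
      omega
    · rintro ⟨i, _, hl⟩
      exact hl.1
  have hdisj : ∀ i ∈ Finset.Icc 1 n, ∀ j ∈ Finset.Icc 1 n, i ≠ j →
      Disjoint ((hfinA i).toFinset) ((hfinA j).toFinset) := by
    intro i hi j hj hij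
    rw [Finset.mem_Icc] at hi hj
    rw [Finset.disjoint_left]
    intro l hli hlj
    rw [Set.Finite.mem_toFinset] at hli hlj
    rcases lt_or_gt_of_ne hij with h | h
    · exact hlj.2.2 i hi.1 h hli.2.1
    · exact hli.2.2 j hj.1 h hlj.2.1
  have hcard : S n = ∑ i ∈ Finset.Icc 1 n, ((hfinA i).toFinset).card := by
    rw [S_eq_s8, Set.ncard_eq_toFinset_card _ (fin_LSet n), hpart, Finset.card_biUnion hdisj]
  rw [hcard]
  refine Finset.sum_congr rfl fun i hi => ?_
  rw [Finset.mem_Icc] at hi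
  rw [← Set.ncard_eq_toFinset_card _ (hfinA i), ncard_ASet hi.1 hi.2, SS_eq, S_eq_s8]

/-- `SS(n) = S(n) - ∑_{i=1}^{n-1} SS(i)·S(n-i)` for `n ≥ 1`. -/
theorem SS_recurrence (n : ℕ) (hn : 1 ≤ n) :
    (SS n : ℤ) = (S n : ℤ) - ∑ i ∈ Finset.Icc 1 (n - 1), (SS i : ℤ) * (S (n - i) : ℤ) := by
  obtain ⟨m, rfl⟩ : ∃ m, n = m + 1 := ⟨n - 1, by omega⟩
  have h := S_rec (m + 1) hn
  rw [Finset.sum_Icc_succ_top (by omega : 1 ≤ m + 1)] at h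
  simp only [Nat.sub_self, S_zero, Nat.mul_one] at h
  have hm : m + 1 - 1 = m := by omega
  rw [hm]
  have hcast := congrArg (fun k : ℕ => (k : ℤ)) h
  push_cast at hcast ⊢
  linarith
end

section
/- For every m ≥ 1, the number SSCS(2m) of distinct score sequences of length 2m that are both strong and self-complementary satisfies SSCS(2m) = ∑_{T=C(m,2)+1}^{m(m-1)} ∑_{E=⌈T/m⌉}^{m-1} G_m[T, E]. -/
/-- `SSCS n` is the number of distinct score sequences of length `n` that are both strong
and self-complementary. -/
noncomputable def SSCS (n : ℕ) : ℕ :=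
  {l : List ℕ | l.length = n ∧ IsStrongScoreSeq l ∧ IsSelfCompl l}.ncard

/- ### Auxiliary lemmas -/

lemma sumMapSubAdd (c : ℕ) (L : List ℕ) (hL : ∀ x ∈ L, x ≤ c) :
    (L.map (c - ·)).sum + L.sum = L.length * c := by
  induction L with
  | nil => simp
  | cons a L ih =>
    have ha : a ≤ c := hL a (by simp)
    have h2 := ih (fun x hx => hL x (by simp [hx]))
    simp only [List.map_cons, List.sum_cons, List.length_cons]
    have : (L.length + 1) * c = L.length * c + c := by ring
    omega

lemma chooseSuccTwo (n : ℕ) : (n + 1).choose 2 = n + n.choose 2 := by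
  rw [show (2:ℕ) = 1 + 1 from rfl, Nat.choose_succ_succ, Nat.choose_one_right]

lemma chooseShift (a j : ℕ) : (a + 2 * j).choose 2 + j = j * 2 * (a + j) + a.choose 2 := by
  induction j with
  | zero => simp
  | succ j ih =>
    have e1 : a + 2 * (j + 1) = (a + 2 * j + 1) + 1 := by ring
    rw [e1, chooseSuccTwo, chooseSuccTwo]
    have h2 : (j + 1) * 2 * (a + (j + 1)) = j * 2 * (a + j) + 2 * a + 4 * j + 2 := by ring
    omega

lemma sortedLeLast {h : List ℕ} (hs : h.Pairwise (· ≤ ·)) {x : ℕ} (hx : x ∈ h)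
    (h0 : 0 < h.length) : x ≤ h[h.length - 1]'(by omega) := by
  obtain ⟨i, hi, rfl⟩ := List.mem_iff_getElem.mp hx
  rcases eq_or_lt_of_le (Nat.le_pred_of_lt hi) with he | hl
  · subst he; exact le_rfl
  · exact List.pairwise_iff_getElem.mp hs i (h.length - 1) hi (by omega) hl

lemma boundedFinite (m B : ℕ) : {l : List ℕ | l.length = m ∧ ∀ x ∈ l, x ≤ B}.Finite := by
  have h : {l : List ℕ | l.length = m ∧ ∀ x ∈ l, x ≤ B} ⊆
      (fun l : List (Fin (B + 1)) => l.map Fin.val) '' {l | l.length = m} := by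
    rintro l ⟨h1, h2⟩
    refine ⟨l.pmap (fun x hx => ⟨x, hx⟩) (fun x hx => Nat.lt_succ_of_le (h2 x hx)), by simp [h1], ?_⟩
    simp [List.map_pmap]
  exact ((List.finite_length_eq (Fin (B + 1)) m).image _).subset h

lemma ncardBiUnion {ι α : Type*} [DecidableEq ι] (s : Finset ι) (f : ι → Set α)
    (hfin : ∀ i ∈ s, (f i).Finite)
    (hdisj : ∀ i ∈ s, ∀ j ∈ s, i ≠ j → Disjoint (f i) (f j)) :
    (⋃ i ∈ s, f i).ncard = ∑ i ∈ s, (f i).ncard := by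
  induction s using Finset.induction_on with
  | empty => simp
  | insert a s ha ih =>
    rw [Finset.sum_insert ha]
    have he : (⋃ i ∈ insert a s, f i) = f a ∪ ⋃ i ∈ s, f i := by
      simp [Set.biUnion_insert]
    have hdisj2 : Disjoint (f a) (⋃ i ∈ s, f i) := by
      simp only [Set.disjoint_iUnion_right]
      intro i hi
      exact hdisj a (Finset.mem_insert_self a s) i (Finset.mem_insert_of_mem hi)
        (fun h => ha (h ▸ hi))
    rw [he, Set.ncard_union_eq hdisj2 (hfin a (Finset.mem_insert_self a s))
      (Set.Finite.biUnion s.finite_toSet (fun i hi => hfin i (Finset.mem_insert_of_mem hi)))]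
    rw [ih (fun i hi => hfin i (Finset.mem_insert_of_mem hi))
      (fun i hi j hj hij =>
        hdisj i (Finset.mem_insert_of_mem hi) j (Finset.mem_insert_of_mem hj) hij)]

/- ### The half-sequence set -/

def SHalf (m : ℕ) : Set (List ℕ) :=
  {h | h.length = m ∧ h.Pairwise (· ≤ ·) ∧
    (∀ r, 1 ≤ r → r < m → r.choose 2 < (h.take r).sum) ∧
    m.choose 2 < h.sum ∧ ∀ x ∈ h, x ≤ m - 1}

def SG (m T E : ℕ) : Set (List ℕ) :=
  {l : List ℕ | l.length = m ∧ l.Pairwise (· ≤ ·) ∧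
    (∀ r, 1 ≤ r → r < m → r.choose 2 < (l.take r).sum) ∧
    l.sum = T ∧ l.getLast? = some E}

lemma SG_finite (m T E : ℕ) : (SG m T E).Finite := by
  refine (boundedFinite m T).subset ?_
  rintro l ⟨h1, -, -, h4, -⟩
  exact ⟨h1, fun x hx => h4 ▸ List.single_le_sum (fun _ _ => Nat.zero_le _) x hx⟩

lemma SHalf_eq_biUnion (m : ℕ) (hm : 1 ≤ m) :
    SHalf m = ⋃ T ∈ Finset.Icc (m.choose 2 + 1) (m * (m - 1)),
      ⋃ E ∈ Finset.Icc ((T + m - 1) / m) (m - 1), SG m T E := by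
  ext h
  simp only [Set.mem_iUnion, Finset.mem_Icc]
  constructor
  · rintro ⟨hlen, hsort, hstr, hsumgt, hbd⟩
    have hne : h ≠ [] := by
      intro he; rw [he] at hlen; simp at hlen; omega
    have hEe : h.getLast hne = h[h.length - 1]'(by
        have := List.length_pos_iff.mpr hne; omega) := List.getLast_eq_getElem hne
    have hEb : h.getLast hne ≤ m - 1 := hbd _ (List.getLast_mem hne)
    have hle : ∀ x ∈ h, x ≤ h.getLast hne := fun x hx => by
      rw [hEe]; exact sortedLeLast hsort hx (by rw [hlen]; omega)
    have hsumle : h.sum ≤ m * h.getLast hne := by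
      have := List.sum_le_card_nsmul h _ hle
      rwa [hlen, smul_eq_mul] at this
    have hsumle2 : h.sum ≤ m * (m - 1) := by
      have := List.sum_le_card_nsmul h (m - 1) hbd
      rwa [hlen, smul_eq_mul] at this
    refine ⟨h.sum, ⟨by omega, hsumle2⟩, h.getLast hne, ⟨?_, hEb⟩,
      hlen, hsort, hstr, rfl, List.getLast?_eq_getLast hne⟩
    have hdiv : (h.sum + m - 1) / m < h.getLast hne + 1 := by
      rw [Nat.div_lt_iff_lt_mul (by omega)]
      have : (h.getLast hne + 1) * m = m * h.getLast hne + m := by ring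
      omega
    omega
  · rintro ⟨T, ⟨hT1, -⟩, E, ⟨-, hE2⟩, hlen, hsort, hstr, hsum, hlast⟩
    have hne : h ≠ [] := by
      intro he; rw [he] at hlen; simp at hlen; omega
    have hEe : h.getLast hne = E := by
      have h2 := List.getLast?_eq_getLast hne
      rw [hlast] at h2
      exact (Option.some.inj h2).symm
    refine ⟨hlen, hsort, hstr, by omega, fun x hx => ?_⟩
    have h3 := sortedLeLast hsort hx (by rw [hlen]; omega)
    rw [← List.getLast_eq_getElem hne, hEe] at h3
    omega

set_option maxHeartbeats 2000000 in
lemma mem_target (m : ℕ) (hm : 1 ≤ m) {h : List ℕ} (hh : h ∈ SHalf m) :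
    (h ++ (h.reverse.map (2 * m - 1 - ·))).length = 2 * m ∧
    IsStrongScoreSeq (h ++ (h.reverse.map (2 * m - 1 - ·))) ∧
    IsSelfCompl (h ++ (h.reverse.map (2 * m - 1 - ·))) := by
  obtain ⟨hlen, hsort, hstr, hsumgt, hbd⟩ := hh
  obtain ⟨c, hc⟩ : ∃ c, 2 * m - 1 = c := ⟨_, rfl⟩
  simp only [hc]
  obtain ⟨t, ht⟩ : ∃ t, h.reverse.map (c - ·) = t := ⟨_, rfl⟩
  rw [ht]
  have htlen : t.length = m := by rw [← ht]; simp [hlen]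
  have hlenl : (h ++ t).length = 2 * m := by
    simp only [List.length_append, hlen, htlen]; omega
  have hbc : ∀ x ∈ h, x ≤ c := fun x hx => by have := hbd x hx; omega
  have htsum : t.sum + h.sum = m * c := by
    have h2 := sumMapSubAdd c h.reverse (fun x hx => hbc x (List.mem_reverse.mp hx))
    rwa [List.sum_reverse, List.length_reverse, hlen, ht] at h2
  have htmem : ∀ b ∈ t, m ≤ b ∧ b ≤ c := by
    intro b hb
    rw [← ht] at hb
    simp only [List.mem_map, List.mem_reverse] at hb
    obtain ⟨x, hx, rfl⟩ := hb
    have := hbd x hx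
    omega
  have hsortl : (h ++ t).Pairwise (· ≤ ·) := by
    apply List.pairwise_append.mpr
    refine ⟨hsort, ?_, ?_⟩
    · rw [← ht]
      apply List.pairwise_map.mpr
      apply List.pairwise_reverse.mpr
      exact List.Pairwise.imp (fun hab => Nat.sub_le_sub_left hab c) hsort
    · intro a ha b hb
      have h1 := hbd a ha
      have h2 := (htmem b hb).1
      omega
  have hsuml : (h ++ t).sum = m * c := by rw [List.sum_append]; omega
  have hsum2m : (2 * m).choose 2 = m * c := by
    have h1 := chooseShift 0 m
    rw [Nat.zero_add] at h1
    have h2 : m * 2 * (0 + m) = m * (2 * m) := by ring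
    rw [h2] at h1
    have h3 : m * c + m = m * (2 * m) := by
      have h4 : c + 1 = 2 * m := by omega
      calc m * c + m = m * (c + 1) := by ring
      _ = m * (2 * m) := by rw [h4]
    have h5 : Nat.choose 0 2 = 0 := Nat.choose_eq_zero_of_lt (by omega)
    rw [h5] at h1
    omega
  have hstrl : ∀ r, 1 ≤ r → r < 2 * m → r.choose 2 < ((h ++ t).take r).sum := by
    intro r hr1 hr2
    rcases le_or_gt r m with hrm | hrm
    · rw [List.take_append_of_le_length (by omega)]
      rcases eq_or_lt_of_le hrm with rfl | hlt
      · rw [List.take_of_length_le (by omega)]; exact hsumgt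
      · exact hstr r hr1 hlt
    · set j := r - m with hj
      have hj1 : 1 ≤ j := by omega
      have hj2 : j ≤ m - 1 := by omega
      have hre : r = h.length + j := by omega
      rw [hre, List.take_length_add_append, List.sum_append, hlen]
      have hsplit := List.sum_take_add_sum_drop t j
      have hdropj : t.drop j = ((h.take (m - j)).reverse).map (c - ·) := by
        rw [← ht, ← List.map_drop, List.drop_reverse, hlen]
      have hPk := sumMapSubAdd c ((h.take (m - j)).reverse)
        (fun x hx => hbc x (List.mem_of_mem_take (List.mem_reverse.mp hx)))
      rw [← hdropj, List.sum_reverse, List.length_reverse, List.length_take, hlen] at hPk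
      have hmin : (m - j) ⊓ m = m - j := by omega
      rw [hmin] at hPk
      have hPkgt : (m - j).choose 2 < (h.take (m - j)).sum := hstr (m - j) (by omega) (by omega)
      have hch := chooseShift (m - j) j
      have he1 : m - j + 2 * j = m + j := by omega
      have he2 : m - j + j = m := by omega
      rw [he1, he2] at hch
      have hg1 : (m - j) * c + j * c = m * c := by
        rw [← add_mul, show m - j + j = m from by omega]
      have hg2 : j * c + j = j * 2 * m := by
        have h4 : c + 1 = 2 * m := by omega
        calc j * c + j = j * (c + 1) := by ring
        _ = j * (2 * m) := by rw [h4]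
        _ = j * 2 * m := by ring
      omega
  refine ⟨hlenl, ⟨hsortl, ?_, ?_⟩, ?_⟩
  · rw [hlenl]; exact hstrl
  · rw [hlenl, hsuml, hsum2m]
  · intro i hi1 hi2
    rw [hlenl] at hi2 ⊢
    have him : i ≤ m := by omega
    have hgd : h.getD (i - 1) 0 = h[i - 1]'(by omega) := List.getD_eq_getElem h 0 (by omega)
    have hb : h.getD (i - 1) 0 ≤ m - 1 := by
      rw [hgd]; exact hbd _ (List.getElem_mem _)
    have h1 : (h ++ t).getD (2 * m - i) 0 = c - h.getD (i - 1) 0 := by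
      rw [List.getD_append_right h t 0 _ (by omega)]
      rw [show 2 * m - i - h.length = m - i from by omega]
      rw [← ht, show (0:ℕ) = c - c from by omega, List.getD_map]
      congr 1
      rw [List.getD_eq_getElem h.reverse c (by rw [List.length_reverse, hlen]; omega),
        List.getElem_reverse, List.getD_eq_getElem h (c - c) (by omega)]
      simp only [hlen]
      simp only [show m - 1 - (m - i) = i - 1 from by omega]
    have h2 : (h ++ t).getD (i - 1) 0 = h.getD (i - 1) 0 :=
      List.getD_append h t 0 _ (by omega)
    rw [h1, h2]
    omega

set_option maxHeartbeats 2000000 in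
lemma target_subset (m : ℕ) (hm : 1 ≤ m) {l : List ℕ}
    (hl : l.length = 2 * m ∧ IsStrongScoreSeq l ∧ IsSelfCompl l) :
    ∃ h ∈ SHalf m, h ++ (h.reverse.map (2 * m - 1 - ·)) = l := by
  obtain ⟨hlen, ⟨hsort, hstr, hsum⟩, hsc⟩ := hl
  have key : ∀ j, j < m → l.getD (m + j) 0 + l.getD (m - 1 - j) 0 = 2 * m - 1 := by
    intro j hj
    have h1 := hsc (m - j) (by omega) (by rw [hlen]; omega)
    rw [hlen] at h1
    rw [show 2 * m - (m - j) = m + j from by omega,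
      show m - j - 1 = m - 1 - j from by omega] at h1
    omega
  have hmono : ∀ i j, i < l.length → j < l.length → i ≤ j → l.getD i 0 ≤ l.getD j 0 := by
    intro i j hi hj hij
    rw [List.getD_eq_getElem _ 0 hi, List.getD_eq_getElem _ 0 hj]
    rcases eq_or_lt_of_le hij with rfl | hlt
    · exact le_rfl
    · exact List.pairwise_iff_getElem.mp hsort i j hi hj hlt
  have hbd1 : l.getD (m - 1) 0 ≤ m - 1 := by
    have hk := key 0 (by omega)
    have h2 := hmono (m - 1) m (by omega) (by omega) (by omega)
    rw [Nat.add_zero, Nat.sub_zero] at hk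
    omega
  have hlenh : (l.take m).length = m := by
    rw [List.length_take, hlen]; omega
  have hgdh : ∀ k, k < m → (l.take m).getD k 0 = l.getD k 0 := by
    intro k hk
    rw [List.getD_eq_getElem (l.take m) 0 (by omega : k < (l.take m).length)]
    rw [List.getD_eq_getElem l 0 (by omega : k < l.length)]
    exact List.getElem_take
  have hsorth : (l.take m).Pairwise (· ≤ ·) :=
    List.Pairwise.sublist (List.take_sublist m l) hsort
  have hmem_bd : ∀ x ∈ l.take m, x ≤ m - 1 := by
    intro x hx
    have h1 := sortedLeLast hsorth hx (by omega)
    have h2 : (l.take m).getD ((l.take m).length - 1) 0 = x →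
      True := fun _ => trivial
    have h3 : (l.take m).getD (m - 1) 0 = (l.take m)[(l.take m).length - 1]'(by omega) := by
      rw [List.getD_eq_getElem _ 0 (by omega)]
      simp only [hlenh]
    rw [← h3] at h1
    rw [hgdh (m - 1) (by omega)] at h1
    omega
  refine ⟨l.take m, ⟨hlenh, hsorth, ?_, ?_, hmem_bd⟩, ?_⟩
  · intro r hr1 hr2
    rw [List.take_take, show r ⊓ m = r from by omega]
    exact hstr r hr1 (by omega)
  · exact hstr m hm (by omega)
  · have hdrop : l.drop m = (l.take m).reverse.map (2 * m - 1 - ·) := by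
      apply List.ext_getElem
      · simp only [List.length_drop, List.length_map, List.length_reverse, hlen, hlenh]
        omega
      · intro j hj1 hj2
        have hjm : j < m := by
          simp only [List.length_drop, hlen] at hj1; omega
        have goal' : l.getD (m + j) 0 = 2 * m - 1 - (l.take m).getD (m - 1 - j) 0 := by
          have k1 := key j hjm
          have k2 := hgdh (m - 1 - j) (by omega)
          omega
        rw [List.getElem_drop, List.getElem_map, List.getElem_reverse]
        rw [← List.getD_eq_getElem l 0 (by omega : m + j < l.length), goal']
        congr 1
        rw [List.getD_eq_getElem _ 0 (by omega)]
        simp only [hlenh]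
    rw [← hdrop]
    exact List.take_append_drop m l

lemma target_eq_image (m : ℕ) (hm : 1 ≤ m) :
    {l : List ℕ | l.length = 2 * m ∧ IsStrongScoreSeq l ∧ IsSelfCompl l} =
      (fun h : List ℕ => h ++ (h.reverse.map (2 * m - 1 - ·))) '' SHalf m := by
  ext l
  constructor
  · intro hl
    obtain ⟨h, hh, he⟩ := target_subset m hm hl
    exact ⟨h, hh, he⟩
  · rintro ⟨h, hh, rfl⟩
    exact mem_target m hm hh

/-- `SSCS(2m) = ∑_{T=C(m,2)+1}^{m(m-1)} ∑_{E=⌈T/m⌉}^{m-1} G_m[T,E]` for `m ≥ 1`. -/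
theorem SSCS_even (m : ℕ) (hm : 1 ≤ m) :
    SSCS (2 * m) =
      ∑ T ∈ Finset.Icc (m.choose 2 + 1) (m * (m - 1)),
        ∑ E ∈ Finset.Icc ((T + m - 1) / m) (m - 1), G m T E := by
  classical
  have hinj : Set.InjOn (fun h : List ℕ => h ++ (h.reverse.map (2 * m - 1 - ·))) (SHalf m) := by
    intro a ha b hb hab
    simp only at hab
    have h1 : List.take m (a ++ a.reverse.map (2 * m - 1 - ·)) = a := by
      rw [← ha.1]; exact List.take_left
    have h2 : List.take m (b ++ b.reverse.map (2 * m - 1 - ·)) = b := by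
      rw [← hb.1]; exact List.take_left
    rw [← h1, ← h2, hab]
  have hL : SSCS (2 * m) = (SHalf m).ncard := by
    rw [SSCS, target_eq_image m hm, Set.ncard_image_of_injOn hinj]
  rw [hL, SHalf_eq_biUnion m hm]
  have hfinU : ∀ T ∈ Finset.Icc (m.choose 2 + 1) (m * (m - 1)),
      (⋃ E ∈ Finset.Icc ((T + m - 1) / m) (m - 1), SG m T E).Finite := by
    intro T _
    exact Set.Finite.biUnion (Finset.finite_toSet _) (fun E _ => SG_finite m T E)
  have hdisjU : ∀ T ∈ Finset.Icc (m.choose 2 + 1) (m * (m - 1)),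
      ∀ T' ∈ Finset.Icc (m.choose 2 + 1) (m * (m - 1)), T ≠ T' →
      Disjoint (⋃ E ∈ Finset.Icc ((T + m - 1) / m) (m - 1), SG m T E)
        (⋃ E ∈ Finset.Icc ((T' + m - 1) / m) (m - 1), SG m T' E) := by
    intro T _ T' _ hne
    rw [Set.disjoint_left]
    intro l hl hl'
    simp only [Set.mem_iUnion] at hl hl'
    obtain ⟨E, _, _, _, _, hs, _⟩ := hl
    obtain ⟨E', _, _, _, _, hs', _⟩ := hl'
    exact hne (hs ▸ hs')
  rw [ncardBiUnion _ _ hfinU hdisjU]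
  apply Finset.sum_congr rfl
  intro T _
  have hdisjS : ∀ E ∈ Finset.Icc ((T + m - 1) / m) (m - 1),
      ∀ E' ∈ Finset.Icc ((T + m - 1) / m) (m - 1), E ≠ E' →
      Disjoint (SG m T E) (SG m T E') := by
    intro E _ E' _ hne
    rw [Set.disjoint_left]
    intro l hl hl'
    obtain ⟨_, _, _, _, hg⟩ := hl
    obtain ⟨_, _, _, _, hg'⟩ := hl'
    rw [hg] at hg'
    exact hne (Option.some.inj hg')
  rw [ncardBiUnion _ _ (fun E _ => SG_finite m T E) hdisjS]
  rfl
end
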